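/- arXiv:2602.09922 — 11 statements merged into one kernel-verified Lean document; each statement's English description precedes it below -/
import Mathlib

section
/- Let I be a separable metrisable space, E a Hausdorff topological space, μ an inner regular Borel measure on I with full support (supp μ = I), and φ : I × I → ℝ continuous in the first variable with I_φ defined as the set of t such that every ball around t contains a point s with φ(s,t) > 0. Let X, X̃ : I × Ω → E be processes on a probability space such that X_t = X̃_t almost surely for μ-almost every t ∈ I. Suppose (i) all paths of X and X̃ are sequentially continuous with respect to φ (i.e., if t_n → t with φ(t_n, t) > 0 for all n, then X_{t_n}(ω) → X_t(ω)), and (ii) there is a countable set J_φ ⊆ I_φᶜ such that X_t = X̃_t a.s. for all t ∈ J_φ and the paths of X and X̃ are sequentially continuous at every point of I_φᶜ \ J_φ. Then X and X̃ are indistinguishable: there is a null set N such that X_t(ω) = X̃_t(ω) for all t ∈ I and ω ∉ N. -/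
open MeasureTheory Filter

/-- Two weakly modified processes with sequentially `φ`-continuous paths (plus the
countable exceptional-set condition on `I_φᶜ`) are indistinguishable, provided the
underlying measure on the separable metrisable index space is inner regular and has
full support. -/
theorem stmt3 {I : Type*} [MetricSpace I] [TopologicalSpace.SeparableSpace I]
    [MeasurableSpace I] [BorelSpace I]
    {E : Type*} [TopologicalSpace E] [T2Space E] [MeasurableSpace E] [BorelSpace E]
    {Ω : Type*} [MeasurableSpace Ω] (P : Measure Ω) [IsProbabilityMeasure P]
    (μ : Measure I) (hreg : μ.InnerRegular)
    (hsupp : ∀ U : Set I, IsOpen U → U.Nonempty → 0 < μ U)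
    (φ : I × I → ℝ) (hφ : ∀ t : I, Continuous fun s => φ (s, t))
    (X X' : I → Ω → E)
    (hXm : ∀ t, Measurable (X t)) (hX'm : ∀ t, Measurable (X' t))
    (hweak : ∀ᵐ t ∂μ, ∀ᵐ ω ∂P, X t ω = X' t ω)
    (Iphi : Set I)
    (hIphi : Iphi = {t : I | ∀ δ : ℝ, 0 < δ → ∃ s ∈ Metric.ball t δ, 0 < φ (s, t)})
    -- (i) all paths of `X` and `X'` are sequentially continuous with respect to `φ`
    (hseq : ∀ (ω : Ω) (t : I) (u : ℕ → I), Tendsto u atTop (nhds t) →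
      (∀ n, 0 < φ (u n, t)) →
      Tendsto (fun n => X (u n) ω) atTop (nhds (X t ω)) ∧
      Tendsto (fun n => X' (u n) ω) atTop (nhds (X' t ω)))
    -- (ii) countable set `J_φ ⊆ I_φᶜ` with a.s. equality on it and sequential
    -- continuity of the paths on `I_φᶜ \ J_φ`
    (Jphi : Set I) (hJsub : Jphi ⊆ Iphiᶜ) (hJc : Jphi.Countable)
    (hJeq : ∀ t ∈ Jphi, ∀ᵐ ω ∂P, X t ω = X' t ω)
    (hseq2 : ∀ (ω : Ω), ∀ t ∈ Iphiᶜ \ Jphi, ∀ u : ℕ → I, Tendsto u atTop (nhds t) →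
      Tendsto (fun n => X (u n) ω) atTop (nhds (X t ω)) ∧
      Tendsto (fun n => X' (u n) ω) atTop (nhds (X' t ω))) :
    ∃ N : Set Ω, P N = 0 ∧ ∀ ω ∉ N, ∀ t, X t ω = X' t ω := by
  haveI : SecondCountableTopology I := UniformSpace.secondCountable_of_separable I
  classical
  set A : Set I := {t | ∀ᵐ ω ∂P, X t ω = X' t ω} with hA
  have hAc : μ {t | t ∉ A} = 0 := by
    simpa [hA] using (ae_iff.mp hweak)
  -- every nonempty open set meets A
  have hAmeets : ∀ U : Set I, IsOpen U → U.Nonempty → (U ∩ A).Nonempty := by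
    intro U hU hUne
    by_contra h
    rw [Set.not_nonempty_iff_eq_empty] at h
    have hsub : U ⊆ {t | t ∉ A} := fun t ht =>
      fun htA => Set.eq_empty_iff_forall_notMem.mp h t ⟨ht, htA⟩
    have := measure_mono (μ := μ) hsub
    rw [hAc] at this
    exact absurd (le_antisymm this zero_le) (ne_of_gt (hsupp U hU hUne))
  -- countable dense subset of A
  obtain ⟨s, hsc, hsd⟩ := TopologicalSpace.exists_countable_dense (↥A)
  set D : Set I := Subtype.val '' s with hD
  have hDc : D.Countable := hsc.image _
  have hDA : D ⊆ A := by rintro x ⟨y, _, rfl⟩; exact y.2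
  have hDmeets : ∀ U : Set I, IsOpen U → (U ∩ A).Nonempty → (U ∩ D).Nonempty := by
    intro U hU ⟨a, haU, haA⟩
    have : ((Subtype.val ⁻¹' U : Set ↥A) ∩ s).Nonempty := by
      have hUo : IsOpen (Subtype.val ⁻¹' U : Set ↥A) := hU.preimage continuous_subtype_val
      exact hsd.inter_open_nonempty _ hUo ⟨⟨a, haA⟩, haU⟩
    obtain ⟨y, hyU, hys⟩ := this
    exact ⟨y.val, hyU, ⟨y, hys, rfl⟩⟩
  -- the null set
  set N : Set Ω := ⋃ d ∈ D ∪ Jphi, {ω | X d ω ≠ X' d ω} with hN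
  have hNnull : P N = 0 := by
    refine (measure_biUnion_null_iff (hDc.union hJc)).mpr ?_
    intro d hd
    rcases hd with hd | hd
    · exact ae_iff.mp (hDA hd)
    · exact ae_iff.mp (hJeq d hd)
  refine ⟨N, hNnull, ?_⟩
  intro ω hω t
  have hωeq : ∀ d ∈ D ∪ Jphi, X d ω = X' d ω := by
    intro d hd
    by_contra h
    exact hω (Set.mem_biUnion hd h)
  -- a helper: from a sequence in D converging with limits, conclude
  have key : ∀ u : ℕ → I, (∀ n, u n ∈ D) →
      Tendsto (fun n => X (u n) ω) atTop (nhds (X t ω)) →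
      Tendsto (fun n => X' (u n) ω) atTop (nhds (X' t ω)) →
      X t ω = X' t ω := by
    intro u hu h1 h2
    have : (fun n => X (u n) ω) = fun n => X' (u n) ω := by
      funext n; exact hωeq (u n) (Or.inl (hu n))
    rw [this] at h1
    exact tendsto_nhds_unique h1 h2
  have honediv : Tendsto (fun n : ℕ => (1 : ℝ) / (n + 1)) atTop (nhds 0) :=
    tendsto_one_div_add_atTop_nhds_zero_nat
  by_cases ht : t ∈ Iphi
  · -- t ∈ Iphi : find u n ∈ D with φ (u n, t) > 0 and dist (u n) t < 1/(n+1)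
    have hpick : ∀ n : ℕ, ∃ x, x ∈ D ∧ dist x t < 1 / (n + 1) ∧ 0 < φ (x, t) := by
      intro n
      have hpos : (0 : ℝ) < 1 / (n + 1) := by positivity
      set U : Set I := Metric.ball t (1 / (n + 1)) ∩ {x | 0 < φ (x, t)} with hU
      have hUo : IsOpen U :=
        Metric.isOpen_ball.inter (isOpen_lt continuous_const (hφ t))
      have hUne : U.Nonempty := by
        rw [hIphi] at ht
        obtain ⟨x, hx1, hx2⟩ := ht _ hpos
        exact ⟨x, hx1, hx2⟩
      obtain ⟨x, hxU, hxD⟩ := hDmeets U hUo (hAmeets U hUo hUne)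
      exact ⟨x, hxD, Metric.mem_ball.mp hxU.1, hxU.2⟩
    choose u huD hud huφ using hpick
    have hconv : Tendsto u atTop (nhds t) := by
      rw [Metric.tendsto_atTop]
      intro ε hε
      obtain ⟨n0, hn0⟩ := (Metric.tendsto_atTop.mp honediv ε hε) -- bounds |1/(n+1)-0|
      exact ⟨n0, fun n hn => lt_of_lt_of_le (hud n) (by
        have := hn0 n hn
        rw [Real.dist_eq, sub_zero] at this
        exact le_of_lt (lt_of_le_of_lt (le_abs_self _) this))⟩
    obtain ⟨h1, h2⟩ := hseq ω t u hconv huφ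
    exact key u huD h1 h2
  · by_cases htJ : t ∈ Jphi
    · exact hωeq t (Or.inr htJ)
    · -- t ∈ Iphiᶜ \ Jphi : pick u n ∈ D with dist < 1/(n+1)
      have hpick : ∀ n : ℕ, ∃ x, x ∈ D ∧ dist x t < 1 / (n + 1) := by
        intro n
        have hpos : (0 : ℝ) < 1 / (n + 1) := by positivity
        have hUo : IsOpen (Metric.ball t (1 / (n + 1))) := Metric.isOpen_ball
        have hUne : (Metric.ball t (1 / (n + 1))).Nonempty :=
          ⟨t, Metric.mem_ball_self hpos⟩
        obtain ⟨x, hxU, hxD⟩ := hDmeets _ hUo (hAmeets _ hUo hUne)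
        exact ⟨x, hxD, Metric.mem_ball.mp hxU⟩
      choose u huD hud using hpick
      have hconv : Tendsto u atTop (nhds t) := by
        rw [Metric.tendsto_atTop]
        intro ε hε
        obtain ⟨n0, hn0⟩ := (Metric.tendsto_atTop.mp honediv ε hε)
        exact ⟨n0, fun n hn => lt_of_lt_of_le (hud n) (by
          have := hn0 n hn
          rw [Real.dist_eq, sub_zero] at this
          exact le_of_lt (lt_of_le_of_lt (le_abs_self _) this))⟩
      obtain ⟨h1, h2⟩ := hseq2 ω t ⟨ht, htJ⟩ u hconv
      exact key u huD h1 h2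
end

section
/- Let E be a separable metrisable space with metric d, which is a star-convex subset of a real vector space with center x₀ ∈ E, such that d((1-λ)x₀ + λx, y) ≤ (1-λ)d(x₀,y) + λd(x,y) for all λ ∈ [0,1] and x,y ∈ E. Then there exists a sequence (φ_n) of Borel measurable maps φ_n : E → E, each taking finitely many values, such that d(φ_k(x), x₀) ≤ d(x, x₀), d(φ_{k+1}(x), x) ≤ d(φ_k(x), x), and φ_n(x) → x as n → ∞, for all k ∈ ℕ and x ∈ E. -/
open Set Filter

/-- Pointwise approximation of the identity on a separable star-convex metric set by
Borel measurable maps with finitely many values. -/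
theorem stmt4 {V : Type*} [AddCommGroup V] [Module ℝ V]
    (E : Set V) (x₀ : V) (hx₀ : x₀ ∈ E)
    (hstar : ∀ x ∈ E, ∀ l : ℝ, l ∈ Icc (0:ℝ) 1 → (1 - l) • x₀ + l • x ∈ E)
    (d : V → V → ℝ)
    (hd0 : ∀ x ∈ E, ∀ y ∈ E, (d x y = 0 ↔ x = y))
    (hdsymm : ∀ x ∈ E, ∀ y ∈ E, d x y = d y x)
    (hdtri : ∀ x ∈ E, ∀ y ∈ E, ∀ z ∈ E, d x z ≤ d x y + d y z)
    -- separability of `E` with respect to `d`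
    (hsep : ∃ D ⊆ E, D.Countable ∧ ∀ x ∈ E, ∀ ε : ℝ, 0 < ε → ∃ y ∈ D, d x y < ε)
    -- convexity condition on the metric
    (hconv : ∀ l ∈ Icc (0:ℝ) 1, ∀ x ∈ E, ∀ y ∈ E,
      d ((1 - l) • x₀ + l • x) y ≤ (1 - l) * d x₀ y + l * d x y) :
    ∃ φ : ℕ → V → V,
      (∀ n, Set.MapsTo (φ n) E E) ∧
      -- each `φ n` takes finitely many values on `E`
      (∀ n, ((φ n) '' E).Finite) ∧
      -- each `φ n` is Borel measurable for the `d`-metric topology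
      (∀ n, @Measurable V V
        (MeasurableSpace.generateFrom {B : Set V | ∃ x r, B = {y | d x y < r}})
        (MeasurableSpace.generateFrom {B : Set V | ∃ x r, B = {y | d x y < r}}) (φ n)) ∧
      (∀ k, ∀ x ∈ E, d (φ k x) x₀ ≤ d x x₀) ∧
      (∀ k, ∀ x ∈ E, d (φ (k + 1) x) x ≤ d (φ k x) x) ∧
      (∀ x ∈ E, Tendsto (fun n => d (φ n x) x) atTop (nhds 0)) := by
  classical
  open MeasureTheory in
  obtain ⟨D, hDE, hDc, hDd⟩ := hsep
  -- basic metric facts on E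
  have hdself : ∀ x ∈ E, d x x = 0 := fun x hx => (hd0 x hx x hx).mpr rfl
  have hnonneg : ∀ x ∈ E, ∀ y ∈ E, 0 ≤ d x y := by
    intro x hx y hy
    have h1 := hdtri x hx y hy x hx
    rw [hdself x hx, hdsymm y hy x hx] at h1
    linarith
  -- a dense sequence
  have hD'c : (insert x₀ D).Countable := hDc.insert x₀
  obtain ⟨u, hu⟩ := hD'c.exists_eq_range (insert_nonempty x₀ D)
  have huE : ∀ k, u k ∈ E := by
    intro k
    have : u k ∈ insert x₀ D := hu ▸ mem_range_self k
    rcases this with h | h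
    · exact h ▸ hx₀
    · exact hDE h
  have huD : ∀ y ∈ D, ∃ k, u k = y := by
    intro y hy
    have : y ∈ Set.range u := hu ▸ (mem_insert_of_mem _ hy)
    exact this.imp fun k hk => hk
  -- rational parameters in [0,1]
  set e : ℕ → ℚ := ⇑(Denumerable.eqv ℚ).symm with he
  set c : ℕ → ℝ := fun j => max 0 (min 1 ((e j : ℚ) : ℝ)) with hc
  have hc01 : ∀ j, c j ∈ Icc (0:ℝ) 1 := by
    intro j
    constructor
    · exact le_max_left _ _
    · simp [hc, max_le_iff, min_le_iff]
  have hcsurj : ∀ q : ℚ, (0:ℝ) ≤ (q:ℝ) → (q:ℝ) ≤ 1 → ∃ j, c j = (q:ℝ) := by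
    intro q h0 h1
    obtain ⟨j, hj⟩ := (Denumerable.eqv ℚ).symm.surjective q
    refine ⟨j, ?_⟩
    simp only [hc, he, hj]
    rw [min_eq_right h1, max_eq_right h0]
  -- the grid sequence
  set p : ℕ → ℕ × ℕ := ⇑(Denumerable.eqv (ℕ × ℕ)).symm with hp
  set w : ℕ → V := fun i => (1 - c (p i).2) • x₀ + c (p i).2 • u (p i).1 with hw
  have hwE : ∀ i, w i ∈ E := fun i => hstar _ (huE _) _ (hc01 _)
  have hwsurj : ∀ k j, ∃ i, w i = (1 - c j) • x₀ + c j • u k := by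
    intro k j
    obtain ⟨i, hi⟩ := (Denumerable.eqv (ℕ × ℕ)).symm.surjective (k, j)
    exact ⟨i, by simp [hw, hp, hi]⟩
  -- the approximating maps
  obtain ⟨φ, hφ0, hφs⟩ :
      ∃ φ : ℕ → V → V, (∀ x, φ 0 x = x₀) ∧
        (∀ n x, φ (n+1) x =
          if d x₀ (w n) ≤ d x₀ x ∧ d (w n) x < d (φ n x) x then w n else φ n x) :=
    ⟨fun n => Nat.rec (fun _ => x₀)
      (fun n φn x => if d x₀ (w n) ≤ d x₀ x ∧ d (w n) x < d (φn x) x then w n else φn x) n,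
      fun _ => rfl, fun _ _ => rfl⟩
  -- φ n x always lies in E (indeed in a finite set)
  have hφE : ∀ n x, φ n x ∈ E := by
    intro n
    induction n with
    | zero => intro x; rw [hφ0]; exact hx₀
    | succ n ih =>
      intro x
      rw [hφs]
      split
      · exact hwE n
      · exact ih x
  have hφrange : ∀ n x, φ n x ∈ insert x₀ (w '' (Iio n)) := by
    intro n
    induction n with
    | zero => intro x; rw [hφ0]; exact mem_insert _ _
    | succ n ih =>
      intro x
      rw [hφs]
      split
      · exact mem_insert_of_mem _ ⟨n, by simp, rfl⟩
      · rcases ih x with h | ⟨i, hi, hiw⟩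
        · exact h ▸ mem_insert _ _
        · exact mem_insert_of_mem _ ⟨i, lt_trans hi (Nat.lt_succ_self n), hiw⟩
  -- monotonicity of the distances
  have hmono : ∀ n x, d (φ (n+1) x) x ≤ d (φ n x) x := by
    intro n x
    rw [hφs]
    split
    · next h => exact le_of_lt h.2
    · exact le_refl _
  have hmono' : ∀ x, ∀ m n, m ≤ n → d (φ n x) x ≤ d (φ m x) x := by
    intro x
    have anti : Antitone (fun n => d (φ n x) x) := antitone_nat_of_succ_le (fun k => hmono k x)
    exact fun m n hmn => anti hmn
  -- bound on the distance to the center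
  have hx₀bound : ∀ n, ∀ x ∈ E, d (φ n x) x₀ ≤ d x x₀ := by
    intro n
    induction n with
    | zero =>
      intro x hx
      rw [hφ0, hdself x₀ hx₀]
      exact hnonneg x hx x₀ hx₀
    | succ n ih =>
      intro x hx
      rw [hφs]
      split
      · next h =>
        calc d (w n) x₀ = d x₀ (w n) := hdsymm _ (hwE n) _ hx₀
          _ ≤ d x₀ x := h.1
          _ = d x x₀ := hdsymm _ hx₀ _ hx
      · exact ih x hx
  -- key step lemma
  have hstep : ∀ i x, d x₀ (w i) ≤ d x₀ x → d (φ (i+1) x) x ≤ d (w i) x := by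
    intro i x h
    rw [hφs]
    by_cases h2 : d (w i) x < d (φ i x) x
    · rw [if_pos ⟨h, h2⟩]
    · rw [if_neg (fun hc => h2 hc.2)]
      exact not_lt.mp h2
  -- measurability
  set m : MeasurableSpace V :=
    MeasurableSpace.generateFrom {B : Set V | ∃ x r, B = {y | d x y < r}} with hm
  have hball : ∀ z r, MeasurableSet[m] {y | d z y < r} :=
    fun z r => MeasurableSpace.measurableSet_generateFrom ⟨z, r, rfl⟩
  have hlt : ∀ (f : V → V), (∀ q : ℝ, MeasurableSet[m] {x | d (f x) x < q}) →
      ∀ z : V, MeasurableSet[m] {x | d z x < d (f x) x} := by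
    intro f hf z
    have : {x | d z x < d (f x) x} = ⋃ q : ℚ, {x | d z x < q} ∩ {x | d (f x) x < q}ᶜ := by
      ext x
      simp only [mem_iUnion, mem_inter_iff, mem_setOf_eq, mem_compl_iff, not_lt]
      constructor
      · intro h
        obtain ⟨q, hq1, hq2⟩ := exists_rat_btwn h
        exact ⟨q, hq1, le_of_lt hq2⟩
      · rintro ⟨q, hq1, hq2⟩
        exact lt_of_lt_of_le hq1 hq2
    rw [this]
    exact MeasurableSet.iUnion fun q => (hball z q).inter (hf q).compl
  -- joint inductive measurability statement
  have hmeas : ∀ n, @Measurable V V m m (φ n) ∧ ∀ q : ℝ, MeasurableSet[m] {x | d (φ n x) x < q} := by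
    intro n
    induction n with
    | zero =>
      constructor
      · have : φ 0 = fun _ => x₀ := funext hφ0
        rw [this]; exact measurable_const
      · intro q
        have : {x | d (φ 0 x) x < q} = {x | d x₀ x < q} := by
          ext x; rw [mem_setOf_eq, mem_setOf_eq, hφ0]
        rw [this]; exact hball x₀ q
    | succ n ih =>
      have hS : MeasurableSet[m] {x | d x₀ (w n) ≤ d x₀ x ∧ d (w n) x < d (φ n x) x} := by
        have h1 : MeasurableSet[m] {x | d x₀ (w n) ≤ d x₀ x} := by
          have : {x | d x₀ (w n) ≤ d x₀ x} = {x | d x₀ x < d x₀ (w n)}ᶜ := by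
            ext x; simp [not_lt]
          rw [this]
          exact (hball x₀ _).compl
        have h2 : MeasurableSet[m] {x | d (w n) x < d (φ n x) x} := hlt (φ n) ih.2 (w n)
        exact h1.inter h2
      constructor
      · have : φ (n+1) = fun x =>
            if x ∈ {x | d x₀ (w n) ≤ d x₀ x ∧ d (w n) x < d (φ n x) x} then w n else φ n x := by
          funext x; rw [hφs]; rfl
        rw [this]
        exact Measurable.ite hS measurable_const ih.1
      · intro q
        have : {x | d (φ (n+1) x) x < q} =
            ({x | d x₀ (w n) ≤ d x₀ x ∧ d (w n) x < d (φ n x) x} ∩ {x | d (w n) x < q}) ∪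
            ({x | d x₀ (w n) ≤ d x₀ x ∧ d (w n) x < d (φ n x) x}ᶜ ∩ {x | d (φ n x) x < q}) := by
          ext x
          by_cases hx : d x₀ (w n) ≤ d x₀ x ∧ d (w n) x < d (φ n x) x
          · simp [hφs, if_pos hx, hx]
          · simp [hφs, if_neg hx, hx]
        rw [this]
        exact ((hS.inter (hball (w n) q)).union (hS.compl.inter (ih.2 q)))
  -- convergence
  have hkey : ∀ x ∈ E, ∀ ε : ℝ, 0 < ε → ∃ N, d (φ N x) x < ε := by
    intro x hx ε hε
    set r := d x₀ x with hr
    have hr0 : 0 ≤ r := hnonneg x₀ hx₀ x hx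
    rcases eq_or_lt_of_le hr0 with hr0' | hrpos
    · -- x = x₀
      refine ⟨0, ?_⟩
      rw [hφ0]
      have : d x₀ x = 0 := hr0'.symm
      rw [this]; exact hε
    · -- find a close point of the dense set
      have hε3 : 0 < ε / 3 := by linarith
      obtain ⟨y, hyD, hyd⟩ := hDd x hx (ε/3) hε3
      obtain ⟨k, hk⟩ := huD y hyD
      have hukE : u k ∈ E := huE k
      have hukx : d (u k) x < ε / 3 := by
        rw [hdsymm _ hukE _ hx, hk]; exact hyd
      set R := d x₀ (u k) with hR
      by_cases hRr : R ≤ r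
      · -- use q = 1
        obtain ⟨j, hj⟩ := hcsurj 1 (by norm_num) (by norm_num)
        obtain ⟨i, hi⟩ := hwsurj k j
        have hwi : w i = u k := by
          rw [hi, hj]; push_cast; rw [sub_self, zero_smul, one_smul, zero_add]
        refine ⟨i + 1, ?_⟩
        have h1 : d x₀ (w i) ≤ d x₀ x := by rw [hwi]; exact hRr
        calc d (φ (i+1) x) x ≤ d (w i) x := hstep i x h1
          _ = d (u k) x := by rw [hwi]
          _ < ε / 3 := hukx
          _ < ε := by linarith
      · push_neg at hRr
        have hRpos : 0 < R := lt_trans hrpos hRr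
        set lam := r / R with hlam
        have hlam0 : 0 < lam := div_pos hrpos hRpos
        have hlam1 : lam < 1 := (div_lt_one hRpos).mpr hRr
        set δ := (ε/3) / (1 + r) with hδ
        have hδ0 : 0 < δ := div_pos hε3 (by linarith)
        obtain ⟨q, hq1, hq2⟩ := exists_rat_btwn (show max 0 (lam - δ) < lam from
          max_lt hlam0 (by linarith))
        have hq0 : (0:ℝ) < q := lt_of_le_of_lt (le_max_left _ _) hq1
        have hqlam : (q:ℝ) < lam := hq2
        have hqδ : lam - δ < q := lt_of_le_of_lt (le_max_right _ _) hq1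
        have hq01 : (0:ℝ) ≤ (q:ℝ) := le_of_lt hq0
        have hq11 : (q:ℝ) ≤ 1 := le_of_lt (lt_trans hqlam hlam1)
        obtain ⟨j, hj⟩ := hcsurj q hq01 hq11
        obtain ⟨i, hi⟩ := hwsurj k j
        have hwi : w i = (1 - (q:ℝ)) • x₀ + (q:ℝ) • u k := by rw [hi, hj]
        have hqIcc : (q:ℝ) ∈ Icc (0:ℝ) 1 := ⟨hq01, hq11⟩
        -- the grid point is admissible
        have hadm : d x₀ (w i) ≤ d x₀ x := by
          have h1 : d (w i) x₀ ≤ (1 - (q:ℝ)) * d x₀ x₀ + (q:ℝ) * d (u k) x₀ := by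
            rw [hwi]; exact hconv _ hqIcc _ hukE _ hx₀
          rw [hdself x₀ hx₀, hdsymm _ hukE _ hx₀, ← hR] at h1
          have h2 : (q:ℝ) * R ≤ lam * R :=
            mul_le_mul_of_nonneg_right (le_of_lt hqlam) (le_of_lt hRpos)
          have h3 : lam * R = r := div_mul_cancel₀ r (ne_of_gt hRpos)
          rw [hdsymm _ hx₀ _ (hwE i)]
          calc d (w i) x₀ ≤ (1 - (q:ℝ)) * 0 + (q:ℝ) * R := h1
            _ = (q:ℝ) * R := by ring
            _ ≤ r := by rw [← h3] at *; exact h2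
        -- the grid point is close to x
        have hclose : d (w i) x < ε := by
          have h1 : d (w i) x ≤ (1 - (q:ℝ)) * d x₀ x + (q:ℝ) * d (u k) x := by
            rw [hwi]; exact hconv _ hqIcc _ hukE _ hx
          have h2 : (q:ℝ) * d (u k) x ≤ ε / 3 := by
            calc (q:ℝ) * d (u k) x ≤ 1 * d (u k) x :=
              mul_le_mul_of_nonneg_right hq11 (hnonneg _ hukE _ hx)
            _ = d (u k) x := one_mul _
            _ ≤ ε / 3 := le_of_lt hukx
          have hRrx : R - r < ε / 3 := by
            have := hdtri x₀ hx₀ x hx (u k) hukE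
            rw [← hR, ← hr, hdsymm _ hx _ hukE] at this
            linarith
          have hlamR : lam * R = r := div_mul_cancel₀ r (ne_of_gt hRpos)
          have h4 : (1 - lam) * r ≤ R - r := by
            nlinarith [sq_nonneg (1 - lam), hRpos, hlamR]
          have h5 : (lam - (q:ℝ)) * r ≤ δ * r :=
            mul_le_mul_of_nonneg_right (by linarith) hr0
          have h6 : δ * r ≤ ε / 3 := by
            rw [hδ]
            rw [div_mul_eq_mul_div, div_le_iff₀ (by linarith : (0:ℝ) < 1 + r)]
            calc ε / 3 * r ≤ ε / 3 * (1 + r) := by nlinarith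
              _ = ε / 3 * (1 + r) := rfl
          have h7 : (1 - (q:ℝ)) * r = (1 - lam) * r + (lam - (q:ℝ)) * r := by ring
          calc d (w i) x ≤ (1 - (q:ℝ)) * r + (q:ℝ) * d (u k) x := by rw [← hr] at h1; exact h1
            _ ≤ (1 - lam) * r + (lam - (q:ℝ)) * r + ε / 3 := by rw [← h7]; linarith
            _ ≤ (R - r) + ε/3 + ε/3 := by linarith
            _ < ε/3 + ε/3 + ε/3 := by linarith
            _ = ε := by ring
        exact ⟨i + 1, lt_of_le_of_lt (hstep i x hadm) hclose⟩
  -- assemble the result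
  refine ⟨φ, fun n x hx => hφE n x, ?_, ?_, hx₀bound, fun k x _ => hmono k x, ?_⟩
  · intro n
    apply Set.Finite.subset (Set.Finite.insert x₀ ((Set.finite_Iio n).image w))
    rintro _ ⟨x, _, rfl⟩
    exact hφrange n x
  · intro n
    exact (hmeas n).1
  · intro x hx
    rw [Metric.tendsto_atTop]
    intro ε hε
    obtain ⟨N, hN⟩ := hkey x hx ε hε
    refine ⟨N, fun n hn => ?_⟩
    rw [Real.dist_eq, sub_zero, abs_of_nonneg (hnonneg _ (hφE n x) _ hx)]
    exact lt_of_le_of_lt (hmono' x N n hn) hN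
end

section
/- Let E be a complete separable metric space with metric d, p ≥ 1, and μ = Σ_{i=1}^n αᵢ δ_{xᵢ} ∈ P_p(E) with pairwise distinct x₁,…,x_n ∈ E and α ∈ (0,1]^n, Σᵢ αᵢ = 1. Then for every ν ∈ P_p(E), W_p(μ, ν)^p equals the minimum over all (ν₁,…,ν_n) ∈ P_p(E)^n with Σᵢ αᵢ νᵢ = ν of Σ_{i=1}^n αᵢ ∫_E d(x, xᵢ)^p dνᵢ(x), and this minimum is attained. -/
open MeasureTheory ENNReal

/-- The `p`-th Wasserstein distance: the infimum over couplings of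
`(∫ d(x,y)^p dθ)^(1/p)`. -/
noncomputable def wassersteinP {E : Type*} [MetricSpace E] [MeasurableSpace E]
    (p : ℝ) (μ ν : Measure E) : ℝ≥0∞ :=
  (⨅ θ ∈ {θ : Measure (E × E) |
      IsProbabilityMeasure θ ∧ θ.map Prod.fst = μ ∧ θ.map Prod.snd = ν},
    ∫⁻ z, edist z.1 z.2 ^ p ∂θ) ^ (1 / p)

/-- Membership in the `p`-th Wasserstein space `P_p(E)`. -/
def memWassersteinSpace {E : Type*} [MetricSpace E] [MeasurableSpace E]
    (p : ℝ) (μ : Measure E) : Prop :=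
  IsProbabilityMeasure μ ∧ ∃ x₀ : E, ∫⁻ x, edist x x₀ ^ p ∂μ ≠ ∞

private lemma exists_ultrafilter_limit (𝒰 : Ultrafilter ℕ) (f : ℕ → ℝ≥0∞) :
    ∃ x : ℝ≥0∞, Filter.Tendsto f 𝒰 (nhds x) := by
  rcases isCompact_univ.ultrafilter_le_nhds (𝒰.map f) (by simp) with ⟨x, -, hx⟩
  exact ⟨x, hx⟩

private lemma add_rpow_le_two_rpow_mul (a b : ℝ≥0∞) {p : ℝ} (hp : 0 ≤ p) :
    (a + b) ^ p ≤ 2 ^ p * (a ^ p + b ^ p) := by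
  have h2 : a + b ≤ 2 * (a ⊔ b) := by
    rcases le_total a b with h | h
    · calc a + b ≤ b + b := by gcongr
        _ = 2 * b := (two_mul b).symm
        _ ≤ 2 * (a ⊔ b) := by gcongr; exact le_max_right _ _
    · calc a + b ≤ a + a := by gcongr
        _ = 2 * a := (two_mul a).symm
        _ ≤ 2 * (a ⊔ b) := by gcongr; exact le_max_left _ _
  calc (a + b) ^ p ≤ (2 * (a ⊔ b)) ^ p := ENNReal.rpow_le_rpow h2 hp
    _ = 2 ^ p * (a ⊔ b) ^ p := ENNReal.mul_rpow_of_nonneg _ _ hp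
    _ ≤ 2 ^ p * (a ^ p + b ^ p) := by
        gcongr
        rcases le_total a b with h | h
        · rw [sup_of_le_right h]; exact le_add_self
        · rw [sup_of_le_left h]; exact le_add_right le_rfl

private lemma moment_ne_top {E : Type*} [MetricSpace E] [MeasurableSpace E]
    [OpensMeasurableSpace E] {p : ℝ} (hp : 1 ≤ p) (ν : Measure E) [IsFiniteMeasure ν]
    {x₀ : E} (h : ∫⁻ z, edist z x₀ ^ p ∂ν ≠ ∞) (y : E) :
    ∫⁻ z, edist z y ^ p ∂ν ≠ ∞ := by
  have hp0 : (0:ℝ) ≤ p := by linarith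
  have hc : Measurable fun z : E => edist z x₀ ^ p :=
    (continuous_id.edist continuous_const).measurable.pow_const p
  have hb : ∀ z : E, edist z y ^ p ≤ 2 ^ p * (edist z x₀ ^ p + edist x₀ y ^ p) := fun z => by
    calc edist z y ^ p ≤ (edist z x₀ + edist x₀ y) ^ p :=
          ENNReal.rpow_le_rpow (edist_triangle _ _ _) hp0
      _ ≤ _ := add_rpow_le_two_rpow_mul _ _ hp0
  have hle : ∫⁻ z, edist z y ^ p ∂ν
      ≤ 2 ^ p * (∫⁻ z, edist z x₀ ^ p ∂ν + edist x₀ y ^ p * ν Set.univ) := by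
    calc ∫⁻ z, edist z y ^ p ∂ν
        ≤ ∫⁻ z, 2 ^ p * (edist z x₀ ^ p + edist x₀ y ^ p) ∂ν := lintegral_mono hb
      _ = 2 ^ p * (∫⁻ z, edist z x₀ ^ p ∂ν + edist x₀ y ^ p * ν Set.univ) := by
          rw [lintegral_const_mul (f := fun z => edist z x₀ ^ p + edist x₀ y ^ p) _ (hc.add measurable_const),
            lintegral_add_right _ measurable_const, lintegral_const]
  refine ne_top_of_le_ne_top ?_ hle
  have h1 : (2:ℝ≥0∞) ^ p ≠ ∞ := ENNReal.rpow_ne_top_of_nonneg hp0 (by norm_num)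
  have h2 : edist x₀ y ^ p ≠ ∞ := ENNReal.rpow_ne_top_of_nonneg hp0 (edist_ne_top _ _)
  exact ENNReal.mul_ne_top h1 (ENNReal.add_ne_top.mpr ⟨h,
    ENNReal.mul_ne_top h2 (measure_ne_top _ _)⟩)

private lemma exists_limit_measure {E : Type*} [MeasurableSpace E]
    (ν : Measure E) [IsFiniteMeasure ν] (𝒰 : Ultrafilter ℕ)
    (ρ : ℕ → Measure E) (hρ : ∀ k s, MeasurableSet s → ρ k s ≤ ν s) :
    ∃ Λ : Measure E, ∀ s, MeasurableSet s →
      Filter.Tendsto (fun k => ρ k s) 𝒰 (nhds (Λ s)) := by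
  choose L hL using exists_ultrafilter_limit 𝒰
  have hLconst : ∀ c : ℝ≥0∞, L (fun _ => c) = c := fun c =>
    tendsto_nhds_unique (hL _) tendsto_const_nhds
  have hLmono : ∀ f g : ℕ → ℝ≥0∞, (∀ k, f k ≤ g k) → L f ≤ L g := fun f g h =>
    le_of_tendsto_of_tendsto' (hL f) (hL g) h
  set m : (s : Set E) → MeasurableSet s → ℝ≥0∞ := fun s _ => L (fun k => ρ k s) with hm
  have m0 : m ∅ MeasurableSet.empty = 0 := by
    simp only [hm, measure_empty]; exact hLconst 0
  have mU : ∀ ⦃f : ℕ → Set E⦄ (h : ∀ i, MeasurableSet (f i)),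
      Pairwise (Function.onFun Disjoint f) →
      m (⋃ i, f i) (MeasurableSet.iUnion h) = ∑' i, m (f i) (h i) := by
    intro f hf hd
    have hfin : ∀ k N, ρ k (⋃ i ∈ Finset.range N, f i) = ∑ i ∈ Finset.range N, ρ k (f i) :=
      fun k N => measure_biUnion_finset (hd.set_pairwise _) (fun i _ => hf i)
    have hLsum : ∀ N, ∑ i ∈ Finset.range N, L (fun k => ρ k (f i))
        = L (fun k => ρ k (⋃ i ∈ Finset.range N, f i)) := by
      intro N
      refine tendsto_nhds_unique (tendsto_finset_sum _ fun i _ => hL _) ?_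
      have := hL (fun k => ρ k (⋃ i ∈ Finset.range N, f i))
      simpa only [hfin] using this
    apply le_antisymm
    · have htail : Filter.Tendsto (fun N => ∑' i, ν (f (i + N))) Filter.atTop (nhds 0) := by
        refine ENNReal.tendsto_sum_nat_add (fun i => ν (f i)) ?_
        refine ne_top_of_le_ne_top (measure_ne_top ν Set.univ) ?_
        rw [← measure_iUnion hd hf]
        exact measure_mono (Set.subset_univ _)
      have hbound : ∀ N, L (fun k => ρ k (⋃ i, f i))
          ≤ (∑' i, L (fun k => ρ k (f i))) + ∑' i, ν (f (i + N)) := by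
        intro N
        have hsplit : ∀ k, ρ k (⋃ i, f i)
            ≤ (∑ i ∈ Finset.range N, ρ k (f i)) + ∑' i, ν (f (i + N)) := by
          intro k
          have hcover : (⋃ i, f i) ⊆ (⋃ i ∈ Finset.range N, f i) ∪ ⋃ i, f (i + N) := by
            intro z hz
            rcases Set.mem_iUnion.mp hz with ⟨i, hi⟩
            rcases lt_or_ge i N with h | h
            · exact Or.inl (Set.mem_biUnion (Finset.mem_range.mpr h) hi)
            · exact Or.inr (Set.mem_iUnion.mpr ⟨i - N, by rwa [Nat.sub_add_cancel h]⟩)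
          calc ρ k (⋃ i, f i) ≤ ρ k ((⋃ i ∈ Finset.range N, f i) ∪ ⋃ i, f (i + N)) :=
                measure_mono hcover
            _ ≤ ρ k (⋃ i ∈ Finset.range N, f i) + ρ k (⋃ i, f (i + N)) := measure_union_le _ _
            _ ≤ (∑ i ∈ Finset.range N, ρ k (f i)) + ∑' i, ν (f (i + N)) := by
                rw [hfin k N]
                gcongr
                calc ρ k (⋃ i, f (i + N)) ≤ ν (⋃ i, f (i + N)) :=
                      hρ k _ (MeasurableSet.iUnion fun i => hf _)
                  _ ≤ ∑' i, ν (f (i + N)) := measure_iUnion_le _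
        calc L (fun k => ρ k (⋃ i, f i))
            ≤ L (fun _ => (∑ i ∈ Finset.range N, ρ _ (f i)) + ∑' i, ν (f (i + N))) := by
              exact hLmono _ _ hsplit
          _ = (∑ i ∈ Finset.range N, L (fun k => ρ k (f i))) + ∑' i, ν (f (i + N)) := by
              refine tendsto_nhds_unique (hL _) ?_
              exact Filter.Tendsto.add (tendsto_finset_sum _ fun i _ => hL _) tendsto_const_nhds
          _ ≤ (∑' i, L (fun k => ρ k (f i))) + ∑' i, ν (f (i + N)) := by
              gcongr
              exact ENNReal.sum_le_tsum _
      have hlim : Filter.Tendsto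
          (fun N => (∑' i, L (fun k => ρ k (f i))) + ∑' i, ν (f (i + N)))
          Filter.atTop (nhds ((∑' i, L (fun k => ρ k (f i))) + 0)) :=
        Filter.Tendsto.const_add _ htail
      simpa using ge_of_tendsto' hlim hbound
    · refine Summable.tsum_le_of_sum_le ENNReal.summable ?_
      intro s
      rcases s.exists_nat_subset_range with ⟨N, hN⟩
      calc ∑ i ∈ s, L (fun k => ρ k (f i))
          ≤ ∑ i ∈ Finset.range N, L (fun k => ρ k (f i)) :=
            Finset.sum_le_sum_of_subset hN
        _ = L (fun k => ρ k (⋃ i ∈ Finset.range N, f i)) := hLsum N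
        _ ≤ L (fun k => ρ k (⋃ i, f i)) := by
            refine hLmono _ _ fun k => measure_mono ?_
            exact Set.iUnion₂_subset fun i _ => Set.subset_iUnion f i
  refine ⟨Measure.ofMeasurable m m0 mU, fun s hs => ?_⟩
  rw [Measure.ofMeasurable_apply s hs]
  exact hL _

private lemma map_finset_sum' {A B : Type*} [MeasurableSpace A] [MeasurableSpace B]
    {ι : Type*} (s : Finset ι) (μ : ι → Measure A) {f : A → B} (hf : Measurable f) :
    (∑ i ∈ s, μ i).map f = ∑ i ∈ s, (μ i).map f := by
  ext t ht
  rw [Measure.map_apply hf ht, Measure.finset_sum_apply, Measure.finset_sum_apply]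
  exact Finset.sum_congr rfl fun i _ => (Measure.map_apply hf ht).symm

private lemma wp_le_cost {E : Type*} [MetricSpace E] [MeasurableSpace E]
    [BorelSpace E] [TopologicalSpace.SeparableSpace E] {p : ℝ} (hp : 1 ≤ p) {n : ℕ}
    (x : Fin n → E) (α : Fin n → ℝ)
    (hsum1 : ∑ i, ENNReal.ofReal (α i) = 1)
    (μ : Measure E) (hμ : μ = ∑ i, ENNReal.ofReal (α i) • Measure.dirac (x i))
    (ν : Measure E) (g' : Fin n → Measure E) (hg' : ∀ i, IsProbabilityMeasure (g' i))
    (hgν : ∑ i, ENNReal.ofReal (α i) • g' i = ν) :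
    wassersteinP p μ ν ^ p ≤ ∑ i, ENNReal.ofReal (α i) * ∫⁻ z, edist z (x i) ^ p ∂(g' i) := by
  haveI := UniformSpace.secondCountable_of_separable E
  have hp0 : p ≠ 0 := by positivity
  have hW : wassersteinP p μ ν ^ p = ⨅ θ ∈ {θ : Measure (E × E) |
      IsProbabilityMeasure θ ∧ θ.map Prod.fst = μ ∧ θ.map Prod.snd = ν},
      ∫⁻ z, edist z.1 z.2 ^ p ∂θ := by
    rw [wassersteinP, ← ENNReal.rpow_mul, one_div_mul_cancel hp0, ENNReal.rpow_one]
  set θ : Measure (E × E) := ∑ i, ENNReal.ofReal (α i) • ((g' i).map (Prod.mk (x i))) with hθ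
  have hmapuniv : ∀ i, ((g' i).map (Prod.mk (x i))) Set.univ = 1 := fun i => by
    rw [Measure.map_apply measurable_prodMk_left MeasurableSet.univ]
    simp [(hg' i).measure_univ]
  have hprob : IsProbabilityMeasure θ := by
    constructor
    rw [hθ, Measure.finset_sum_apply]
    simp only [Measure.smul_apply, smul_eq_mul, hmapuniv, mul_one]
    exact hsum1
  have hfst : θ.map Prod.fst = μ := by
    rw [hθ, map_finset_sum' _ _ measurable_fst, hμ]
    refine Finset.sum_congr rfl fun i _ => ?_
    rw [Measure.map_smul, Measure.map_map measurable_fst measurable_prodMk_left]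
    have : (Prod.fst ∘ Prod.mk (x i) : E → E) = fun _ => x i := rfl
    rw [this, Measure.map_const, (hg' i).measure_univ, one_smul]
  have hsnd : θ.map Prod.snd = ν := by
    rw [hθ, map_finset_sum' _ _ measurable_snd, ← hgν]
    refine Finset.sum_congr rfl fun i _ => ?_
    rw [Measure.map_smul, Measure.map_map measurable_snd measurable_prodMk_left]
    have : (Prod.snd ∘ Prod.mk (x i) : E → E) = id := rfl
    rw [this, Measure.map_id]
  have hF : Measurable fun z : E × E => edist z.1 z.2 ^ p :=
    (measurable_fst.edist measurable_snd).pow_const p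
  have hcost : ∫⁻ z, edist z.1 z.2 ^ p ∂θ
      = ∑ i, ENNReal.ofReal (α i) * ∫⁻ z, edist z (x i) ^ p ∂(g' i) := by
    rw [hθ, lintegral_finset_sum_measure]
    refine Finset.sum_congr rfl fun i _ => ?_
    rw [lintegral_smul_measure, lintegral_map hF measurable_prodMk_left]
    simp only [smul_eq_mul]
    congr 1
    refine lintegral_congr fun z => ?_
    rw [edist_comm]
  rw [hW, ← hcost]
  exact iInf₂_le θ ⟨hprob, hfst, hsnd⟩

/-- If `μ = Σᵢ αᵢ δ_{xᵢ}` with pairwise distinct atoms and positive weights summing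
to one, then for every `ν ∈ P_p(E)`, `W_p(μ,ν)^p` is the minimum, attained over all
decompositions `Σᵢ αᵢ νᵢ = ν` with `νᵢ ∈ P_p(E)`, of `Σᵢ αᵢ ∫ d(x, xᵢ)^p dνᵢ(x)`. -/
theorem stmt6 {E : Type*} [MetricSpace E] [CompleteSpace E]
    [TopologicalSpace.SeparableSpace E] [MeasurableSpace E] [BorelSpace E]
    (p : ℝ) (hp : 1 ≤ p) (n : ℕ) (hn : 0 < n)
    (x : Fin n → E) (hx : Function.Injective x)
    (α : Fin n → ℝ) (hα : ∀ i, α i ∈ Set.Ioc (0:ℝ) 1) (hsum : ∑ i, α i = 1)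
    (μ : Measure E) (hμ : μ = ∑ i, ENNReal.ofReal (α i) • Measure.dirac (x i))
    (hμp : memWassersteinSpace p μ)
    (ν : Measure E) (hν : memWassersteinSpace p ν) :
    ∃ g : Fin n → Measure E,
      (∀ i, memWassersteinSpace p (g i)) ∧
      ∑ i, ENNReal.ofReal (α i) • g i = ν ∧
      wassersteinP p μ ν ^ p
        = ∑ i, ENNReal.ofReal (α i) * ∫⁻ z, edist z (x i) ^ p ∂(g i) ∧
      ∀ g' : Fin n → Measure E, (∀ i, memWassersteinSpace p (g' i)) →
        ∑ i, ENNReal.ofReal (α i) • g' i = ν →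
        wassersteinP p μ ν ^ p
          ≤ ∑ i, ENNReal.ofReal (α i) * ∫⁻ z, edist z (x i) ^ p ∂(g' i) := by
  haveI := UniformSpace.secondCountable_of_separable E
  have hp0 : p ≠ 0 := by positivity
  haveI hνprob : IsProbabilityMeasure ν := hν.1
  have hαpos : ∀ i, 0 < α i := fun i => (hα i).1
  have hsum1 : ∑ i, ENNReal.ofReal (α i) = 1 := by
    rw [← ENNReal.ofReal_sum_of_nonneg (fun i _ => (hαpos i).le), hsum, ENNReal.ofReal_one]
  have hαne0 : ∀ i, ENNReal.ofReal (α i) ≠ 0 := fun i => by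
    simp [ENNReal.ofReal_eq_zero, not_le, hαpos i]
  have hαnetop : ∀ i, ENNReal.ofReal (α i) ≠ ∞ := fun i => ENNReal.ofReal_ne_top
  have hc : ∀ y : E, Measurable fun z : E => edist z y ^ p := fun y =>
    (continuous_id.edist continuous_const).measurable.pow_const p
  have hW : wassersteinP p μ ν ^ p = ⨅ θ ∈ {θ : Measure (E × E) |
      IsProbabilityMeasure θ ∧ θ.map Prod.fst = μ ∧ θ.map Prod.snd = ν},
      ∫⁻ z, edist z.1 z.2 ^ p ∂θ := by
    rw [wassersteinP, ← ENNReal.rpow_mul, one_div_mul_cancel hp0, ENNReal.rpow_one]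
  obtain ⟨x₀, hx₀⟩ := hν.2
  have hνmom : ∀ y : E, ∫⁻ z, edist z y ^ p ∂ν ≠ ∞ := moment_ne_top hp ν hx₀
  -- the infimum over decompositions
  set D : ℝ≥0∞ := ⨅ q : {g' : Fin n → Measure E //
      (∀ i, memWassersteinSpace p (g' i)) ∧ ∑ i, ENNReal.ofReal (α i) • g' i = ν},
      ∑ i, ENNReal.ofReal (α i) * ∫⁻ z, edist z (x i) ^ p ∂(q.1 i) with hD
  have hq0 : (∀ i, memWassersteinSpace p ((fun _ : Fin n => ν) i)) ∧
      ∑ i, ENNReal.ofReal (α i) • (fun _ : Fin n => ν) i = ν :=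
    ⟨fun _ => hν, by rw [← Finset.sum_smul, hsum1, one_smul]⟩
  have hDne : D ≠ ∞ := by
    have h1 : D ≤ ∑ i, ENNReal.ofReal (α i) * ∫⁻ z, edist z (x i) ^ p ∂ν := by
      rw [hD]
      exact iInf_le_of_le ⟨fun _ => ν, hq0⟩ le_rfl
    refine ne_top_of_le_ne_top ?_ h1
    exact (ENNReal.sum_lt_top.mpr fun i _ =>
      ENNReal.mul_lt_top (hαnetop i).lt_top (hνmom (x i)).lt_top).ne
  -- Claim B : D is below every coupling cost
  have hB : ∀ θ : Measure (E × E), IsProbabilityMeasure θ → θ.map Prod.fst = μ →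
      θ.map Prod.snd = ν → D ≤ ∫⁻ z, edist z.1 z.2 ^ p ∂θ := by
    intro θ hθprob hfst hsnd
    by_cases hI : ∫⁻ z, edist z.1 z.2 ^ p ∂θ = ∞
    · rw [hI]; exact le_top
    set S : Fin n → Set (E × E) := fun i => Prod.fst ⁻¹' {x i} with hS
    have hSm : ∀ i, MeasurableSet (S i) := fun i => measurable_fst (measurableSet_singleton _)
    have hSdisj : ∀ (B : Fin n → Set (E × E)), (∀ i, B i ⊆ S i) →
        Set.PairwiseDisjoint (↑(Finset.univ : Finset (Fin n))) B := by
      intro B hB' i _ j _ hij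
      refine Set.disjoint_left.mpr fun z h1 h2 => hij ?_
      have e1 : z.1 = x i := hB' i h1
      have e2 : z.1 = x j := hB' j h2
      exact hx (e1 ▸ e2)
    set ρ : Fin n → Measure E := fun i => (θ.restrict (S i)).map Prod.snd with hρdef
    have hρapp : ∀ i A, MeasurableSet A → ρ i A = θ (Prod.snd ⁻¹' A ∩ S i) := fun i A hA => by
      simp only [hρdef]
      rw [Measure.map_apply measurable_snd hA, Measure.restrict_apply (measurable_snd hA)]
    have hμsing : ∀ i, μ {x i} = ENNReal.ofReal (α i) := by
      intro i
      rw [hμ, Measure.finset_sum_apply]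
      rw [Finset.sum_eq_single i (fun j _ hji => ?_) (by simp)]
      · rw [Measure.smul_apply, Measure.dirac_apply' _ (measurableSet_singleton _)]
        simp
      · rw [Measure.smul_apply, Measure.dirac_apply' _ (measurableSet_singleton _)]
        have : x j ∉ ({x i} : Set E) := by
          simp only [Set.mem_singleton_iff]
          exact fun h => hji (hx h)
        simp [Set.indicator_of_notMem this]
    have hρuniv : ∀ i, ρ i Set.univ = ENNReal.ofReal (α i) := by
      intro i
      rw [hρapp i _ MeasurableSet.univ]
      simp only [Set.preimage_univ, Set.univ_inter]
      rw [hS, ← Measure.map_apply measurable_fst (measurableSet_singleton _), hfst, hμsing]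
    have hρsum : ∑ i, ρ i = ν := by
      ext A hA
      rw [Measure.finset_sum_apply]
      have h1 : ∑ i, ρ i A = θ (⋃ i ∈ Finset.univ, (Prod.snd ⁻¹' A ∩ S i)) := by
        rw [measure_biUnion_finset (hSdisj _ fun i => Set.inter_subset_right)
          (fun i _ => (measurable_snd hA).inter (hSm i))]
        exact Finset.sum_congr rfl fun i _ => hρapp i A hA
      have h2 : (⋃ i ∈ (Finset.univ : Finset (Fin n)), (Prod.snd ⁻¹' A ∩ S i))
          = Prod.snd ⁻¹' A ∩ ⋃ i, S i := by
        simp [Set.inter_iUnion]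
      have hcompl : θ ((⋃ i, S i)ᶜ) = 0 := by
        have hTm : MeasurableSet (⋃ i, ({x i} : Set E)) :=
          MeasurableSet.iUnion fun i => measurableSet_singleton _
        have hT : (⋃ i, S i) = Prod.fst ⁻¹' (⋃ i, {x i}) := by
          rw [hS, Set.preimage_iUnion]
        rw [hT, ← Set.preimage_compl,
          ← Measure.map_apply measurable_fst hTm.compl, hfst, hμ, Measure.finset_sum_apply]
        refine Finset.sum_eq_zero fun i _ => ?_
        rw [Measure.smul_apply, Measure.dirac_apply' _ hTm.compl]
        have : x i ∉ (⋃ i, ({x i} : Set E))ᶜ := by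
          simp only [Set.mem_compl_iff, not_not]
          exact Set.mem_iUnion.mpr ⟨i, rfl⟩
        simp [Set.indicator_of_notMem this]
      have h3 : θ (Prod.snd ⁻¹' A ∩ ⋃ i, S i) = θ (Prod.snd ⁻¹' A) := by
        refine le_antisymm (measure_mono Set.inter_subset_left) ?_
        have hdiff : θ (Prod.snd ⁻¹' A \ ⋃ i, S i) = 0 :=
          measure_mono_null (fun z hz => hz.2) hcompl
        rw [← measure_inter_add_diff (Prod.snd ⁻¹' A) (MeasurableSet.iUnion hSm), hdiff,
          add_zero]
      rw [h1, h2, h3, ← hsnd, Measure.map_apply measurable_snd hA]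
    have hcost_i : ∀ i, ∫⁻ z, edist z (x i) ^ p ∂(ρ i)
        = ∫⁻ z in S i, edist z.1 z.2 ^ p ∂θ := by
      intro i
      simp only [hρdef]
      rw [lintegral_map (hc (x i)) measurable_snd]
      refine setLIntegral_congr_fun (hSm i) (fun z hz => ?_)
      have hz1 : z.1 = x i := hz
      rw [← hz1, edist_comm]
    have hcost : ∑ i, ∫⁻ z, edist z (x i) ^ p ∂(ρ i) ≤ ∫⁻ z, edist z.1 z.2 ^ p ∂θ := by
      have hmeas_le : (∑ i, θ.restrict (S i)) ≤ θ := by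
        refine Measure.le_iff.mpr fun A hA => ?_
        rw [Measure.finset_sum_apply]
        simp only [Measure.restrict_apply hA]
        rw [← measure_biUnion_finset (hSdisj _ fun i => Set.inter_subset_right)
          (fun i _ => hA.inter (hSm i))]
        exact measure_mono (Set.iUnion₂_subset fun i _ => Set.inter_subset_left)
      calc ∑ i, ∫⁻ z, edist z (x i) ^ p ∂(ρ i)
          = ∫⁻ z, edist z.1 z.2 ^ p ∂(∑ i, θ.restrict (S i)) := by
            rw [lintegral_finset_sum_measure]
            exact Finset.sum_congr rfl fun i _ => hcost_i i
        _ ≤ _ := lintegral_mono' hmeas_le le_rfl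
    have hρcost_ne : ∀ i, ∫⁻ z, edist z (x i) ^ p ∂(ρ i) ≠ ∞ := fun i =>
      ne_top_of_le_ne_top hI
        ((Finset.single_le_sum (fun j _ => zero_le) (Finset.mem_univ i)).trans hcost)
    set gθ : Fin n → Measure E := fun i => (ENNReal.ofReal (α i))⁻¹ • ρ i with hgθ
    have hmemθ : ∀ i, memWassersteinSpace p (gθ i) := by
      intro i
      constructor
      · constructor
        simp only [hgθ, Measure.smul_apply, smul_eq_mul, hρuniv i]
        exact ENNReal.inv_mul_cancel (hαne0 i) (hαnetop i)
      · refine ⟨x i, ?_⟩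
        simp only [hgθ, lintegral_smul_measure, smul_eq_mul]
        exact ENNReal.mul_ne_top (ENNReal.inv_ne_top.mpr (hαne0 i)) (hρcost_ne i)
    have hsumθ : ∑ i, ENNReal.ofReal (α i) • gθ i = ν := by
      rw [← hρsum]
      refine Finset.sum_congr rfl fun i _ => ?_
      simp only [hgθ]
      rw [smul_smul, ENNReal.mul_inv_cancel (hαne0 i) (hαnetop i), one_smul]
    calc D ≤ ∑ i, ENNReal.ofReal (α i) * ∫⁻ z, edist z (x i) ^ p ∂(gθ i) := by
          rw [hD]
          exact iInf_le_of_le ⟨gθ, hmemθ, hsumθ⟩ le_rfl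
      _ = ∑ i, ∫⁻ z, edist z (x i) ^ p ∂(ρ i) := by
          refine Finset.sum_congr rfl fun i _ => ?_
          simp only [hgθ, lintegral_smul_measure, smul_eq_mul]
          rw [← mul_assoc, ENNReal.mul_inv_cancel (hαne0 i) (hαnetop i), one_mul]
      _ ≤ _ := hcost
  -- Claim C : construct a minimizing decomposition
  have hseq : ∀ k : ℕ, ∃ q : {g' : Fin n → Measure E //
      (∀ i, memWassersteinSpace p (g' i)) ∧ ∑ i, ENNReal.ofReal (α i) • g' i = ν},
      ∑ i, ENNReal.ofReal (α i) * ∫⁻ z, edist z (x i) ^ p ∂(q.1 i) < D + (k : ℝ≥0∞)⁻¹ := by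
    intro k
    have hlt : D < D + (k : ℝ≥0∞)⁻¹ :=
      ENNReal.lt_add_right hDne (ENNReal.inv_ne_zero.mpr (ENNReal.natCast_ne_top k))
    rw [hD] at hlt
    exact iInf_lt_iff.mp hlt
  choose q hq using hseq
  have hDle : ∀ k, D ≤ ∑ i, ENNReal.ofReal (α i) * ∫⁻ z, edist z (x i) ^ p ∂((q k).1 i) := by
    intro k
    rw [hD]
    exact iInf_le _ (q k)
  have hcost_tendsto : Filter.Tendsto
      (fun k => ∑ i, ENNReal.ofReal (α i) * ∫⁻ z, edist z (x i) ^ p ∂((q k).1 i))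
      Filter.atTop (nhds D) := by
    have h0 : Filter.Tendsto (fun k : ℕ => D + (k : ℝ≥0∞)⁻¹) Filter.atTop (nhds (D + 0)) :=
      Filter.Tendsto.const_add _ ENNReal.tendsto_inv_nat_nhds_zero
    rw [add_zero] at h0
    exact tendsto_of_tendsto_of_tendsto_of_le_of_le tendsto_const_nhds h0 hDle
      (fun k => (hq k).le)
  set 𝒰 : Ultrafilter ℕ := Ultrafilter.of Filter.atTop with h𝒰
  have h𝒰le : (𝒰 : Filter ℕ) ≤ Filter.atTop := Ultrafilter.of_le _
  set ρ : Fin n → ℕ → Measure E := fun i k => ENNReal.ofReal (α i) • (q k).1 i with hρdef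
  have hρle : ∀ i k s, MeasurableSet s → ρ i k s ≤ ν s := by
    intro i k s hs
    calc ρ i k s ≤ ∑ j, (ENNReal.ofReal (α j) • (q k).1 j) s :=
          Finset.single_le_sum (f := fun j => (ENNReal.ofReal (α j) • (q k).1 j) s)
            (fun j _ => zero_le) (Finset.mem_univ i)
      _ = ν s := by rw [← Measure.finset_sum_apply, (q k).2.2]
  choose Λ hΛt using fun i => exists_limit_measure ν 𝒰 (ρ i) (hρle i)
  choose tL htL using fun i =>
    exists_ultrafilter_limit 𝒰 (fun k => ∫⁻ z, edist z (x i) ^ p ∂(ρ i k))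
  have htLsum : ∑ i, tL i = D := by
    refine tendsto_nhds_unique (tendsto_finset_sum _ fun i _ => htL i) ?_
    have he : (fun k => ∑ i, ∫⁻ z, edist z (x i) ^ p ∂(ρ i k))
        = fun k => ∑ i, ENNReal.ofReal (α i) * ∫⁻ z, edist z (x i) ^ p ∂((q k).1 i) := by
      funext k
      exact Finset.sum_congr rfl fun i _ => by
        simp only [hρdef, lintegral_smul_measure, smul_eq_mul]
    rw [he]
    exact hcost_tendsto.mono_left h𝒰le
  have htLne : ∀ i, tL i ≠ ∞ := fun i =>
    ne_top_of_le_ne_top (htLsum ▸ hDne)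
      (Finset.single_le_sum (fun j _ => zero_le) (Finset.mem_univ i))
  have hΛcost : ∀ i, ∫⁻ z, edist z (x i) ^ p ∂(Λ i) ≤ tL i := by
    intro i
    rw [lintegral_eq_nnreal]
    refine iSup₂_le fun φ hφ => ?_
    have h1 : Filter.Tendsto (fun k => (φ.map ENNReal.ofNNReal).lintegral (ρ i k)) 𝒰
        (nhds ((φ.map ENNReal.ofNNReal).lintegral (Λ i))) := by
      simp only [SimpleFunc.map_lintegral]
      exact tendsto_finset_sum _ fun a _ =>
        ENNReal.Tendsto.const_mul (hΛt i _ (φ.measurableSet_fiber a)) (Or.inr ENNReal.coe_ne_top)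
    refine le_of_tendsto_of_tendsto' h1 (htL i) fun k => ?_
    rw [← SimpleFunc.lintegral_eq_lintegral]
    refine lintegral_mono fun z => ?_
    simpa [SimpleFunc.coe_map] using hφ z
  have hΛuniv : ∀ i, Λ i Set.univ = ENNReal.ofReal (α i) := by
    intro i
    refine tendsto_nhds_unique (hΛt i _ MeasurableSet.univ) ?_
    have he : (fun k => ρ i k Set.univ) = fun _ => ENNReal.ofReal (α i) := by
      funext k
      haveI : IsProbabilityMeasure ((q k).1 i) := ((q k).2.1 i).1
      simp [hρdef]
    rw [he]
    exact tendsto_const_nhds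
  have hΛsum : ∑ i, Λ i = ν := by
    ext A hA
    rw [Measure.finset_sum_apply]
    refine tendsto_nhds_unique (tendsto_finset_sum _ fun i _ => hΛt i A hA) ?_
    have he : (fun k => ∑ i, ρ i k A) = fun _ => ν A := by
      funext k
      rw [← Measure.finset_sum_apply, (q k).2.2]
    rw [he]
    exact tendsto_const_nhds
  set g : Fin n → Measure E := fun i => (ENNReal.ofReal (α i))⁻¹ • Λ i with hgdef
  have hgint : ∀ i, ∫⁻ z, edist z (x i) ^ p ∂(g i)
      = (ENNReal.ofReal (α i))⁻¹ * ∫⁻ z, edist z (x i) ^ p ∂(Λ i) := fun i => by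
    simp only [hgdef, lintegral_smul_measure, smul_eq_mul]
  have hgmem : ∀ i, memWassersteinSpace p (g i) := by
    intro i
    constructor
    · constructor
      simp only [hgdef, Measure.smul_apply, smul_eq_mul, hΛuniv i]
      exact ENNReal.inv_mul_cancel (hαne0 i) (hαnetop i)
    · refine ⟨x i, ?_⟩
      rw [hgint i]
      exact ENNReal.mul_ne_top (ENNReal.inv_ne_top.mpr (hαne0 i))
        (ne_top_of_le_ne_top (htLne i) (hΛcost i))
  have hgsum : ∑ i, ENNReal.ofReal (α i) • g i = ν := by
    rw [← hΛsum]
    refine Finset.sum_congr rfl fun i _ => ?_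
    simp only [hgdef]
    rw [smul_smul, ENNReal.mul_inv_cancel (hαne0 i) (hαnetop i), one_smul]
  have hgcost : ∑ i, ENNReal.ofReal (α i) * ∫⁻ z, edist z (x i) ^ p ∂(g i) ≤ D := by
    calc ∑ i, ENNReal.ofReal (α i) * ∫⁻ z, edist z (x i) ^ p ∂(g i)
        = ∑ i, ∫⁻ z, edist z (x i) ^ p ∂(Λ i) := by
          refine Finset.sum_congr rfl fun i _ => ?_
          rw [hgint i, ← mul_assoc, ENNReal.mul_inv_cancel (hαne0 i) (hαnetop i), one_mul]
      _ ≤ ∑ i, tL i := Finset.sum_le_sum fun i _ => hΛcost i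
      _ = D := htLsum
  refine ⟨g, hgmem, hgsum, ?_, fun g' hg'mem hg'sum =>
    wp_le_cost hp x α hsum1 μ hμ ν g' (fun i => (hg'mem i).1) hg'sum⟩
  refine le_antisymm
    (wp_le_cost hp x α hsum1 μ hμ ν g (fun i => (hgmem i).1) hgsum) ?_
  refine hgcost.trans ?_
  rw [hW]
  exact le_iInf₂ fun θ hθ => hB θ hθ.1 hθ.2.1 hθ.2.2
end

section
/- Let E be a complete separable metric space with metric d that is a star-convex subset of a vector space with center x₀ satisfying d((1-λ)x₀+λx, y) ≤ (1-λ)d(x₀,y)+λd(x,y) for all λ ∈ [0,1], x,y ∈ E. Let p ≥ 1 and (I, 𝓘) be a measurable space. Then for every jointly measurable process X : I × Ω → E on a probability space such that X_t is p-fold integrable for each t (i.e., E[d(X_t, x₀)^p] < ∞), the map t ↦ law(X_t) from I to the Wasserstein space P_p(E) is measurable with respect to 𝓘 and the Borel σ-field of the Wasserstein metric. -/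
open MeasureTheory ENNReal
open Filter Topology

namespace WassersteinAux

variable {S : Type*} [MetricSpace S] [SecondCountableTopology S] [MeasurableSpace S] [BorelSpace S]

/-- couplings -/
def Couplings (μ ν : Measure S) : Set (Measure (S × S)) :=
  {θ | IsProbabilityMeasure θ ∧ θ.map Prod.fst = μ ∧ θ.map Prod.snd = ν}

noncomputable def cost (p : ℝ) (θ : Measure (S × S)) : ℝ≥0∞ := ∫⁻ z, edist z.1 z.2 ^ p ∂θ

lemma wassersteinP_eq (p : ℝ) (μ ν : Measure S) :
    wassersteinP p μ ν = (⨅ θ ∈ Couplings μ ν, cost p θ) ^ (1/p) := rfl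

lemma wassersteinP_le_of_coupling {p : ℝ} (hp : 0 ≤ p) {μ ν : Measure S}
    {θ : Measure (S × S)} (hθ : θ ∈ Couplings μ ν) :
    wassersteinP p μ ν ≤ (cost p θ) ^ (1/p) := by
  rw [wassersteinP_eq]
  exact ENNReal.rpow_le_rpow (biInf_le _ hθ) (by positivity)

/-- measurability of the cost integrand -/
lemma measurable_integrand (p : ℝ) :
    Measurable fun z : S × S => edist z.1 z.2 ^ p :=
  (measurable_fst.edist measurable_snd).pow_const p

/-- pushforward coupling of two maps on the same space -/
lemma wassersteinP_map_map_le {p : ℝ} (hp : 1 ≤ p) {Ω : Type*} [MeasurableSpace Ω]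
    (P : Measure Ω) [IsProbabilityMeasure P] {f g : Ω → S}
    (hf : Measurable f) (hg : Measurable g) :
    wassersteinP p (P.map f) (P.map g) ≤ (∫⁻ ω, edist (f ω) (g ω) ^ p ∂P) ^ (1/p) := by
  have hfg : Measurable fun ω => (f ω, g ω) := hf.prodMk hg
  have hθ : (P.map fun ω => (f ω, g ω)) ∈ Couplings (P.map f) (P.map g) := by
    refine ⟨Measure.isProbabilityMeasure_map hfg.aemeasurable, ?_, ?_⟩
    · rw [Measure.map_map measurable_fst hfg]; rfl
    · rw [Measure.map_map measurable_snd hfg]; rfl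
  refine le_trans (wassersteinP_le_of_coupling (le_trans zero_le_one hp) hθ) ?_
  rw [cost, lintegral_map (measurable_integrand p) hfg]

/-- tendsto of rpow at zero -/
lemma rpow_tendsto_zero {p : ℝ} (hp : 0 < p) {ι : Type*} {l : Filter ι} {a : ι → ℝ≥0∞}
    (h : Tendsto a l (𝓝 0)) : Tendsto (fun i => a i ^ p) l (𝓝 0) := by
  rw [ENNReal.tendsto_nhds_zero] at h ⊢
  intro ε hε
  rcases eq_or_ne ε ⊤ with rfl | hεt
  · exact Eventually.of_forall fun _ => le_top
  have h1 : (0:ℝ≥0∞) < ε ^ (1/p) := ENNReal.rpow_pos hε hεt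
  filter_upwards [h _ h1] with i hi
  calc a i ^ p ≤ (ε ^ (1/p)) ^ p := ENNReal.rpow_le_rpow hi hp.le
    _ = ε := by rw [← ENNReal.rpow_mul, one_div, inv_mul_cancel₀ hp.ne', ENNReal.rpow_one]

/-- squeeze convergence in ℝ≥0∞ -/
lemma tendsto_of_approx {f : ℕ → ℝ≥0∞} {a : ℝ≥0∞} {ε : ℕ → ℝ≥0∞}
    (hε : Tendsto ε atTop (𝓝 0)) (h1 : ∀ n, a ≤ f n + ε n) (h2 : ∀ n, f n ≤ a + ε n) :
    Tendsto f atTop (𝓝 a) := by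
  rw [ENNReal.tendsto_nhds_zero] at hε
  refine tendsto_of_le_liminf_of_limsup_le ?_ ?_
  · refine ENNReal.le_of_forall_pos_le_add fun δ hδ _ => ?_
    have hδ' : (0:ℝ≥0∞) < δ := by exact_mod_cast hδ
    have h3 : (a - δ : ℝ≥0∞) ≤ liminf f atTop := by
      refine Filter.le_liminf_of_le (by isBoundedDefault) ?_
      filter_upwards [hε δ hδ'] with n hn
      exact tsub_le_iff_right.mpr (le_trans (h1 n) (add_le_add le_rfl hn))
    exact tsub_le_iff_right.mp h3
  · refine ENNReal.le_of_forall_pos_le_add fun δ hδ _ => ?_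
    have hδ' : (0:ℝ≥0∞) < δ := by exact_mod_cast hδ
    refine Filter.limsup_le_of_le (by isBoundedDefault) ?_
    filter_upwards [hε δ hδ'] with n hn
    exact le_trans (h2 n) (add_le_add le_rfl hn)


section Triangle

open ProbabilityTheory

lemma wassersteinP_triangle [CompleteSpace S] {p : ℝ} (hp : 1 ≤ p) (μ ν κ : Measure S) :
    wassersteinP p μ ν ≤ wassersteinP p μ κ + wassersteinP p κ ν := by
  have hp0 : (0:ℝ) < p := lt_of_lt_of_le one_pos hp
  have hip : (0:ℝ) < 1/p := by positivity
  -- key gluing step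
  have key : ∀ θ₁ ∈ Couplings μ κ, ∀ θ₂ ∈ Couplings κ ν,
      wassersteinP p μ ν ≤ cost p θ₁ ^ (1/p) + cost p θ₂ ^ (1/p) := by
    rintro θ₁ ⟨hθ₁p, hθ₁f, hθ₁s⟩ θ₂ ⟨hθ₂p, hθ₂f, hθ₂s⟩
    haveI := hθ₁p; haveI := hθ₂p
    haveI : Nonempty S := by
      by_contra h
      rw [not_nonempty_iff] at h
      have h0 : θ₁ Set.univ = 0 := by
        have : (Set.univ : Set (S × S)) = ∅ :=
          Set.univ_eq_empty_iff.mpr ⟨fun z => h.elim z.1⟩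
        rw [this, measure_empty]
      rw [measure_univ] at h0; exact one_ne_zero h0
    haveI : IsProbabilityMeasure κ := by
      rw [← hθ₁s]; exact Measure.isProbabilityMeasure_map measurable_snd.aemeasurable
    set κ' : Kernel S S := θ₂.condKernel with hκ'
    have hfst : θ₂.fst = κ := hθ₂f
    set K : Kernel (S × S) S := κ'.comap Prod.snd measurable_snd with hK
    haveI : IsMarkovKernel K := Kernel.IsMarkovKernel.comap _ measurable_snd
    set Θ : Measure ((S × S) × S) := θ₁ ⊗ₘ K with hΘ
    have hm1 : Measurable fun q : (S × S) × S => (q.1.1, q.2) :=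
      measurable_fst.fst.prodMk measurable_snd
    set θ : Measure (S × S) := Θ.map (fun q => (q.1.1, q.2)) with hθdef
    -- first marginal of Θ
    have hΘfst : Θ.map Prod.fst = θ₁ := Measure.fst_compProd θ₁ K
    -- disintegration of θ₂
    have hdis : κ ⊗ₘ κ' = θ₂ := by
      rw [hκ', ← hfst]; exact Measure.disintegrate _ _
    -- pair marginal of Θ
    have hm2 : Measurable fun q : (S × S) × S => (q.1.2, q.2) :=
      measurable_fst.snd.prodMk measurable_snd
    have hpair : Θ.map (fun q => (q.1.2, q.2)) = θ₂ := by
      rw [← hdis]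
      ext u hu
      rw [Measure.map_apply hm2 hu, hΘ,
        Measure.compProd_apply (hm2 hu), Measure.compProd_apply hu]
      have : ∀ a : S × S, K a (Prod.mk a ⁻¹' ((fun q : (S × S) × S => (q.1.2, q.2)) ⁻¹' u))
          = κ' a.2 (Prod.mk a.2 ⁻¹' u) := by
        intro a
        rw [hK, Kernel.comap_apply]
        congr 1
      simp_rw [this]
      rw [← hθ₁s, lintegral_map (Kernel.measurable_kernel_prodMk_left hu) measurable_snd]
    -- θ is a coupling of μ and ν
    have hθc : θ ∈ Couplings μ ν := by
      refine ⟨Measure.isProbabilityMeasure_map hm1.aemeasurable, ?_, ?_⟩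
      · rw [hθdef, Measure.map_map measurable_fst hm1]
        have : (Prod.fst ∘ fun q : (S × S) × S => (q.1.1, q.2)) =
            (Prod.fst ∘ Prod.fst) := rfl
        rw [this, ← Measure.map_map measurable_fst measurable_fst, hΘfst, hθ₁f]
      · rw [hθdef, Measure.map_map measurable_snd hm1]
        have : (Prod.snd ∘ fun q : (S × S) × S => (q.1.1, q.2)) =
            (Prod.snd ∘ fun q : (S × S) × S => (q.1.2, q.2)) := rfl
        rw [this, ← Measure.map_map measurable_snd hm2, hpair, hθ₂s]
    -- cost estimate
    have hcost : cost p θ ^ (1/p) ≤ cost p θ₁ ^ (1/p) + cost p θ₂ ^ (1/p) := by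
      have h1 : cost p θ = ∫⁻ q, edist q.1.1 q.2 ^ p ∂Θ := by
        rw [cost, hθdef, lintegral_map (measurable_integrand p) hm1]
      set f : (S × S) × S → ℝ≥0∞ := fun q => edist q.1.1 q.1.2 with hf
      set g : (S × S) × S → ℝ≥0∞ := fun q => edist q.1.2 q.2 with hg
      have h2 : cost p θ ≤ ∫⁻ q, (f q + g q) ^ p ∂Θ := by
        rw [h1]
        refine lintegral_mono fun q => ENNReal.rpow_le_rpow ?_ hp0.le
        exact edist_triangle _ _ _
      have hfm : Measurable f := measurable_fst.fst.edist measurable_fst.snd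
      have hgm : Measurable g := measurable_fst.snd.edist measurable_snd
      have h3 : (∫⁻ q, (f q + g q) ^ p ∂Θ) ^ (1/p)
          ≤ (∫⁻ q, f q ^ p ∂Θ) ^ (1/p) + (∫⁻ q, g q ^ p ∂Θ) ^ (1/p) :=
        ENNReal.lintegral_Lp_add_le hfm.aemeasurable hgm.aemeasurable hp
      have h4 : ∫⁻ q, f q ^ p ∂Θ = cost p θ₁ := by
        rw [cost, ← hΘfst, lintegral_map (measurable_integrand p) measurable_fst]
      have h5 : ∫⁻ q, g q ^ p ∂Θ = cost p θ₂ := by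
        rw [cost, ← hpair, lintegral_map (measurable_integrand p) hm2]
      calc cost p θ ^ (1/p) ≤ (∫⁻ q, (f q + g q) ^ p ∂Θ) ^ (1/p) :=
            ENNReal.rpow_le_rpow h2 hip.le
        _ ≤ _ := by rw [← h4, ← h5]; exact h3
    exact le_trans (wassersteinP_le_of_coupling hp0.le hθc) hcost
  -- now the ε-argument
  rcases eq_or_ne (wassersteinP p μ κ) ⊤ with h1 | h1
  · rw [h1]; simp
  rcases eq_or_ne (wassersteinP p κ ν) ⊤ with h2 | h2
  · rw [h2]; simp
  have extract : ∀ (a : Measure S) (b : Measure S) (δ : ℝ≥0∞), 0 < δ →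
      wassersteinP p a b ≠ ⊤ →
      ∃ θ ∈ Couplings a b, cost p θ ^ (1/p) ≤ wassersteinP p a b + δ := by
    intro a b δ hδ hne
    set m := ⨅ θ ∈ Couplings a b, cost p θ with hm
    have hWm : wassersteinP p a b = m ^ (1/p) := wassersteinP_eq p a b
    have hmlt : m < (wassersteinP p a b + δ) ^ p := by
      have h' : m ^ (1/p) < wassersteinP p a b + δ :=
        hWm ▸ (ENNReal.lt_add_right hne hδ.ne')
      have := ENNReal.rpow_lt_rpow h' hp0
      rwa [← ENNReal.rpow_mul, one_div, inv_mul_cancel₀ hp0.ne', ENNReal.rpow_one] at this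
    rw [hm, iInf_lt_iff] at hmlt
    obtain ⟨θ, hθlt⟩ := hmlt
    rw [iInf_lt_iff] at hθlt
    obtain ⟨hθmem, hθlt⟩ := hθlt
    refine ⟨θ, hθmem, ?_⟩
    calc cost p θ ^ (1/p) ≤ ((wassersteinP p a b + δ) ^ p) ^ (1/p) :=
          ENNReal.rpow_le_rpow hθlt.le hip.le
      _ = _ := by
          rw [← ENNReal.rpow_mul, mul_one_div_cancel hp0.ne', ENNReal.rpow_one]
  refine ENNReal.le_of_forall_pos_le_add fun ε hε _ => ?_
  have hε2 : (0:ℝ≥0∞) < ε / 2 := by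
    have : (0:ℝ≥0∞) < ε := by exact_mod_cast hε
    exact ENNReal.div_pos this.ne' (by norm_num)
  obtain ⟨θ₁, hθ₁, hc1⟩ := extract μ κ _ hε2 h1
  obtain ⟨θ₂, hθ₂, hc2⟩ := extract κ ν _ hε2 h2
  calc wassersteinP p μ ν ≤ cost p θ₁ ^ (1/p) + cost p θ₂ ^ (1/p) := key θ₁ hθ₁ θ₂ hθ₂
    _ ≤ (wassersteinP p μ κ + ε/2) + (wassersteinP p κ ν + ε/2) := add_le_add hc1 hc2
    _ = wassersteinP p μ κ + wassersteinP p κ ν + ε := by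
        rw [add_add_add_comm, ENNReal.add_halves]

end Triangle


section Discrete

open scoped Classical

/-- apply of a finite combination of diracs -/
lemma sum_dirac_apply (f : S → ℝ≥0∞) (A : Finset S) {s : Set S} (hs : MeasurableSet s) :
    (∑ v ∈ A, f v • Measure.dirac v) s = ∑ v ∈ A.filter (· ∈ s), f v := by
  rw [Measure.finset_sum_apply, Finset.sum_filter]
  refine Finset.sum_congr rfl fun v hv => ?_
  rw [Measure.smul_apply, Measure.dirac_apply' _ hs, smul_eq_mul]
  by_cases h : v ∈ s <;> simp [h]

lemma meas_eq_sum (μ : Measure S) (A : Finset S) (hA : μ (↑A)ᶜ = 0) :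
    μ = ∑ v ∈ A, μ {v} • Measure.dirac v := by
  classical
  ext s hs
  rw [sum_dirac_apply _ _ hs]
  have h1 : μ s = μ (s ∩ ↑A) := by
    have h2 := measure_inter_add_diff (μ := μ) s A.measurableSet
    have h3 : μ (s \ ↑A) = 0 := measure_mono_null (fun x hx => hx.2) hA
    rw [h3, add_zero] at h2
    exact h2.symm
  have h4 : (s ∩ ↑A) = ⋃ v ∈ A.filter (· ∈ s), ({v} : Set S) := by
    ext x
    simp only [Set.mem_inter_iff, Set.mem_iUnion, Finset.mem_filter, Set.mem_singleton_iff]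
    constructor
    · rintro ⟨hx1, hx2⟩; exact ⟨x, ⟨hx2, hx1⟩, rfl⟩
    · rintro ⟨v, ⟨hv1, hv2⟩, rfl⟩; exact ⟨hv2, hv1⟩
  have hdisj : (↑(A.filter (· ∈ s)) : Set S).PairwiseDisjoint fun x => ({x} : Set S) :=
    fun x _ y _ hxy => Set.disjoint_singleton.mpr hxy
  rw [h1, h4, measure_biUnion_finset hdisj (fun _ _ => measurableSet_singleton _)]

lemma sum_singleton_eq (μ : Measure S) [IsProbabilityMeasure μ] (A : Finset S)
    (hA : μ (↑A)ᶜ = 0) : ∑ v ∈ A, μ {v} = 1 := by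
  classical
  have h := meas_eq_sum μ A hA
  have h2 : (1:ℝ≥0∞) = (∑ v ∈ A, μ {v} • Measure.dirac v) Set.univ := by
    rw [← h, measure_univ]
  rw [sum_dirac_apply _ _ MeasurableSet.univ] at h2
  simp only [Set.mem_univ, Finset.filter_true] at h2
  exact h2.symm

/-- the transport bound between two finitely supported probability measures -/
lemma wassersteinP_discrete_le {p : ℝ} (hp : 1 ≤ p) (A : Finset S)
    (μ ν : Measure S) [hμp : IsProbabilityMeasure μ] [hνp : IsProbabilityMeasure ν]
    (hμ : μ (↑A)ᶜ = 0) (hν : ν (↑A)ᶜ = 0) :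
    wassersteinP p μ ν ≤
      ((A ×ˢ A).sup fun q => edist q.1 q.2) * (∑ v ∈ A, (μ {v} - ν {v})) ^ (1/p) := by
  classical
  have hp0 : (0:ℝ) < p := lt_of_lt_of_le one_pos hp
  have hip : (0:ℝ) < 1/p := by positivity
  set D : ℝ≥0∞ := (A ×ˢ A).sup fun q => edist q.1 q.2 with hD
  set Z : ℝ≥0∞ := ∑ v ∈ A, (μ {v} - ν {v}) with hZ
  -- sums of singleton masses are 1
  have hμ1 : ∑ v ∈ A, μ {v} = 1 := sum_singleton_eq μ A hμ
  have hν1 : ∑ v ∈ A, ν {v} = 1 := sum_singleton_eq ν A hν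
  have hfin : ∀ v, μ {v} ≠ ⊤ := fun v => (measure_lt_top μ _).ne
  have hfinν : ∀ v, ν {v} ≠ ⊤ := fun v => (measure_lt_top ν _).ne
  -- Z as 1 - sum of mins, and symmetric
  have hmin_le : ∀ v, min (μ {v}) (ν {v}) ≤ μ {v} := fun v => min_le_left _ _
  have hsub : ∀ v : S, μ {v} - ν {v} = μ {v} - min (μ {v}) (ν {v}) := by
    intro v
    rcases le_total (μ {v}) (ν {v}) with h | h
    · rw [min_eq_left h, tsub_self, tsub_eq_zero_of_le h]
    · rw [min_eq_right h]
  have hsubν : ∀ v : S, ν {v} - μ {v} = ν {v} - min (μ {v}) (ν {v}) := by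
    intro v
    rcases le_total (μ {v}) (ν {v}) with h | h
    · rw [min_eq_left h]
    · rw [min_eq_right h, tsub_self, tsub_eq_zero_of_le h]
  have hsum_tsub : ∀ (f g : S → ℝ≥0∞), (∀ v ∈ A, g v ≤ f v) → (∀ v, g v ≠ ⊤) →
      ∑ v ∈ A, (f v - g v) = ∑ v ∈ A, f v - ∑ v ∈ A, g v := by
    intro f g hle hfin'
    have h1 : ∑ v ∈ A, (f v - g v) + ∑ v ∈ A, g v = ∑ v ∈ A, f v := by
      rw [← Finset.sum_add_distrib]
      exact Finset.sum_congr rfl fun v hv => tsub_add_cancel_of_le (hle v hv)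
    exact ENNReal.eq_sub_of_add_eq (ENNReal.sum_ne_top.mpr fun v _ => hfin' v) h1
  have hZeq : Z = 1 - ∑ v ∈ A, min (μ {v}) (ν {v}) := by
    rw [hZ]
    calc ∑ v ∈ A, (μ {v} - ν {v}) = ∑ v ∈ A, (μ {v} - min (μ {v}) (ν {v})) :=
          Finset.sum_congr rfl fun v _ => hsub v
      _ = ∑ v ∈ A, μ {v} - ∑ v ∈ A, min (μ {v}) (ν {v}) := by
          refine hsum_tsub _ _ (fun v _ => min_le_left _ _) fun v => ?_
          exact (lt_of_le_of_lt (min_le_left _ _) (measure_lt_top μ _)).ne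
      _ = _ := by rw [hμ1]
  have hZν : ∑ v ∈ A, (ν {v} - μ {v}) = Z := by
    rw [hZeq]
    calc ∑ v ∈ A, (ν {v} - μ {v}) = ∑ v ∈ A, (ν {v} - min (μ {v}) (ν {v})) :=
          Finset.sum_congr rfl fun v _ => hsubν v
      _ = ∑ v ∈ A, ν {v} - ∑ v ∈ A, min (μ {v}) (ν {v}) := by
          refine hsum_tsub _ _ (fun v _ => min_le_right _ _) fun v => ?_
          exact (lt_of_le_of_lt (min_le_left _ _) (measure_lt_top μ _)).ne
      _ = _ := by rw [hν1]
  -- case Z = 0 : μ = ν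
  rcases eq_or_ne Z 0 with hZ0 | hZ0
  · have hμν : μ = ν := by
      have h1 : ∀ v ∈ A, μ {v} - ν {v} = 0 := by
        rw [hZ, Finset.sum_eq_zero_iff] at hZ0; exact hZ0
      have h2 : ∀ v ∈ A, ν {v} - μ {v} = 0 := by
        have := hZν.trans hZ0
        rw [Finset.sum_eq_zero_iff] at this; exact this
      have heq : ∀ v ∈ A, μ {v} = ν {v} := fun v hv =>
        le_antisymm (tsub_eq_zero_iff_le.mp (h1 v hv)) (tsub_eq_zero_iff_le.mp (h2 v hv))
      rw [meas_eq_sum μ A hμ, meas_eq_sum ν A hν]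
      exact Finset.sum_congr rfl fun v hv => by rw [heq v hv]
    have hdiag : Measurable fun x : S => (x, x) := measurable_id.prodMk measurable_id
    have hθc : (μ.map fun x => (x, x)) ∈ Couplings μ ν := by
      refine ⟨Measure.isProbabilityMeasure_map hdiag.aemeasurable, ?_, ?_⟩
      · rw [Measure.map_map measurable_fst hdiag]; exact Measure.map_id
      · rw [Measure.map_map measurable_snd hdiag, ← hμν]; exact Measure.map_id
    have hcost : cost p (μ.map fun x => (x, x)) = 0 := by
      rw [cost, lintegral_map (measurable_integrand p) hdiag]
      simp [edist_self, ENNReal.zero_rpow_of_pos hp0]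
    refine le_trans (wassersteinP_le_of_coupling hp0.le hθc) ?_
    rw [hcost, ENNReal.zero_rpow_of_pos hip, hZ0, ENNReal.zero_rpow_of_pos hip, mul_zero]
  -- case Z ≠ 0
  have hZ1 : Z ≤ 1 := by rw [hZeq]; exact tsub_le_self
  have hZtop : Z ≠ ⊤ := (lt_of_le_of_lt hZ1 one_lt_top).ne
  set η : Measure S := ∑ v ∈ A, (min (μ {v}) (ν {v})) • Measure.dirac v with hη
  set α : Measure S := ∑ v ∈ A, (μ {v} - ν {v}) • Measure.dirac v with hα
  set β : Measure S := ∑ v ∈ A, (ν {v} - μ {v}) • Measure.dirac v with hβ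
  have happly : ∀ (f : S → ℝ≥0∞), (∑ v ∈ A, f v • Measure.dirac v) Set.univ = ∑ v ∈ A, f v := by
    intro f
    rw [sum_dirac_apply _ _ MeasurableSet.univ]
    simp only [Set.mem_univ, Finset.filter_true]
  have hαuniv : α Set.univ = Z := by rw [hα, happly, hZ]
  have hβuniv : β Set.univ = Z := by rw [hβ, happly, hZν]
  have hcompl : ∀ f : S → ℝ≥0∞, (∑ v ∈ A, f v • Measure.dirac v) (↑A)ᶜ = 0 := by
    intro f
    rw [Measure.finset_sum_apply]
    refine Finset.sum_eq_zero fun v hv => ?_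
    rw [Measure.smul_apply, Measure.dirac_apply' _ A.measurableSet.compl, smul_eq_mul]
    simp [Set.indicator, hv]
  have hαcompl : α (↑A)ᶜ = 0 := by rw [hα]; exact hcompl _
  have hβcompl : β (↑A)ᶜ = 0 := by rw [hβ]; exact hcompl _
  haveI : IsFiniteMeasure α := ⟨by rw [hαuniv]; exact lt_of_le_of_lt hZ1 one_lt_top⟩
  haveI : IsFiniteMeasure β := ⟨by rw [hβuniv]; exact lt_of_le_of_lt hZ1 one_lt_top⟩
  have hdiag : Measurable fun x : S => (x, x) := measurable_id.prodMk measurable_id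
  set θ : Measure (S × S) := η.map (fun x => (x, x)) + Z⁻¹ • (α.prod β) with hθdef
  -- marginals
  have hηα : η + α = μ := by
    conv_rhs => rw [meas_eq_sum μ A hμ]
    rw [hη, hα, ← Finset.sum_add_distrib]
    refine Finset.sum_congr rfl fun v hv => ?_
    rw [← add_smul]
    congr 1
    rcases le_total (μ {v}) (ν {v}) with h | h
    · rw [min_eq_left h, tsub_eq_zero_of_le h, add_zero]
    · rw [min_eq_right h, add_comm, tsub_add_cancel_of_le h]
  have hηβ : η + β = ν := by
    conv_rhs => rw [meas_eq_sum ν A hν]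
    rw [hη, hβ, ← Finset.sum_add_distrib]
    refine Finset.sum_congr rfl fun v hv => ?_
    rw [← add_smul]
    congr 1
    rcases le_total (μ {v}) (ν {v}) with h | h
    · rw [min_eq_left h, add_comm, tsub_add_cancel_of_le h]
    · rw [min_eq_right h, tsub_eq_zero_of_le h, add_zero]
  have hmapdiag : ∀ g : (S × S) → S, Measurable g → (∀ x, g (x, x) = x) →
      (η.map fun x => (x, x)).map g = η := by
    intro g hg hgx
    rw [Measure.map_map hg hdiag]
    have : (g ∘ fun x : S => (x, x)) = id := funext fun x => hgx x
    rw [this, Measure.map_id]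
  have hfstprod : (α.prod β).map Prod.fst = Z • α := by
    ext s hs
    rw [Measure.map_apply measurable_fst hs]
    have : (Prod.fst ⁻¹' s : Set (S × S)) = s ×ˢ Set.univ := by
      ext z; simp [Set.mem_prod]
    rw [this, Measure.prod_prod, hβuniv, Measure.smul_apply, smul_eq_mul, mul_comm]
  have hsndprod : (α.prod β).map Prod.snd = Z • β := by
    ext s hs
    rw [Measure.map_apply measurable_snd hs]
    have : (Prod.snd ⁻¹' s : Set (S × S)) = Set.univ ×ˢ s := by
      ext z; simp [Set.mem_prod]
    rw [this, Measure.prod_prod, hαuniv, Measure.smul_apply, smul_eq_mul]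
  have hfstθ : θ.map Prod.fst = μ := by
    rw [hθdef, Measure.map_add _ _ measurable_fst, Measure.map_smul,
      hmapdiag Prod.fst measurable_fst (fun _ => rfl), hfstprod, smul_smul,
      ENNReal.inv_mul_cancel hZ0 hZtop, one_smul, hηα]
  have hsndθ : θ.map Prod.snd = ν := by
    rw [hθdef, Measure.map_add _ _ measurable_snd, Measure.map_smul,
      hmapdiag Prod.snd measurable_snd (fun _ => rfl), hsndprod, smul_smul,
      ENNReal.inv_mul_cancel hZ0 hZtop, one_smul, hηβ]
  have hθprob : IsProbabilityMeasure θ := by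
    constructor
    have h := congrArg (fun m : Measure S => m Set.univ) hfstθ
    rw [Measure.map_apply measurable_fst MeasurableSet.univ] at h
    simpa using h
  have hθc : θ ∈ Couplings μ ν := ⟨hθprob, hfstθ, hsndθ⟩
  -- cost bound
  have hDbound : ∀ᵐ z ∂(α.prod β), edist z.1 z.2 ^ p ≤ D ^ p := by
    have hnull : (α.prod β) ((↑A ×ˢ ↑A : Set (S × S))ᶜ) = 0 := by
      have hsub : ((↑A ×ˢ ↑A : Set (S × S))ᶜ) ⊆
          ((↑A)ᶜ ×ˢ (Set.univ : Set S)) ∪ ((Set.univ : Set S) ×ˢ (↑A)ᶜ) := by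
        intro z hz
        simp only [Set.mem_compl_iff, Set.mem_prod, not_and_or] at hz
        rcases hz with h | h
        · exact Or.inl ⟨h, Set.mem_univ _⟩
        · exact Or.inr ⟨Set.mem_univ _, h⟩
      refine le_antisymm (le_trans (measure_mono hsub) ?_) bot_le
      refine le_trans (measure_union_le _ _) ?_
      rw [Measure.prod_prod, Measure.prod_prod, hαcompl, hβcompl]
      simp
    refine measure_mono_null ?_ hnull
    intro z hz
    simp only [Set.mem_compl_iff, Set.mem_prod, Set.mem_setOf_eq] at hz ⊢
    intro hmem
    refine hz (ENNReal.rpow_le_rpow ?_ hp0.le)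
    exact Finset.le_sup (f := fun q : S × S => edist q.1 q.2)
      (Finset.mem_product.mpr ⟨Finset.mem_coe.mp hmem.1, Finset.mem_coe.mp hmem.2⟩)
  have hcost : cost p θ ≤ D ^ p * Z := by
    rw [cost, hθdef, lintegral_add_measure, lintegral_smul_measure,
      lintegral_map (measurable_integrand p) hdiag]
    have h1 : ∫⁻ x, edist x x ^ p ∂η = 0 := by
      simp [edist_self, ENNReal.zero_rpow_of_pos hp0]
    have h2 : ∫⁻ z, edist z.1 z.2 ^ p ∂(α.prod β) ≤ D ^ p * Z * Z := by
      calc ∫⁻ z, edist z.1 z.2 ^ p ∂(α.prod β) ≤ ∫⁻ _, D ^ p ∂(α.prod β) :=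
            lintegral_mono_ae hDbound
        _ = D ^ p * Z * Z := by
            rw [lintegral_const, ← Set.univ_prod_univ, Measure.prod_prod,
              hαuniv, hβuniv, mul_assoc]
    rw [h1, zero_add]
    calc Z⁻¹ * ∫⁻ z, edist z.1 z.2 ^ p ∂(α.prod β) ≤ Z⁻¹ * (D ^ p * Z * Z) := by
          exact mul_le_mul_right h2 _
      _ = (Z⁻¹ * Z) * (D ^ p * Z) := by ring
      _ = D ^ p * Z := by rw [ENNReal.inv_mul_cancel hZ0 hZtop, one_mul]
  refine le_trans (wassersteinP_le_of_coupling hp0.le hθc) ?_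
  calc cost p θ ^ (1/p) ≤ (D ^ p * Z) ^ (1/p) := ENNReal.rpow_le_rpow hcost hip.le
    _ = (D ^ p) ^ (1/p) * Z ^ (1/p) := ENNReal.mul_rpow_of_nonneg _ _ hip.le
    _ = D * Z ^ (1/p) := by
        rw [← ENNReal.rpow_mul, mul_one_div_cancel hp0.ne', ENNReal.rpow_one]


end Discrete


section Simple

open scoped Classical

lemma sum_dirac_single (f : S → ℝ≥0∞) (A : Finset S) {v : S} (hv : v ∈ A) :
    (∑ u ∈ A, f u • Measure.dirac u) {v} = f v := by
  rw [Measure.finset_sum_apply]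
  rw [Finset.sum_eq_single_of_mem v hv]
  · rw [Measure.smul_apply, Measure.dirac_apply' _ (measurableSet_singleton v), smul_eq_mul]
    simp
  · intro u hu huv
    rw [Measure.smul_apply, Measure.dirac_apply' _ (measurableSet_singleton v), smul_eq_mul]
    simp [Set.indicator, huv]

lemma sum_dirac_compl (f : S → ℝ≥0∞) (A : Finset S) :
    (∑ v ∈ A, f v • Measure.dirac v) (↑A)ᶜ = 0 := by
  rw [Measure.finset_sum_apply]
  refine Finset.sum_eq_zero fun v hv => ?_
  rw [Measure.smul_apply, Measure.dirac_apply' _ A.measurableSet.compl, smul_eq_mul]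
  simp [Set.indicator, hv]

/-- composing an arbitrary function with a countably-valued measurable map is measurable -/
lemma measurable_comp_countable {I γ : Type*} [MeasurableSpace I] {g : I → γ}
    {R : Set γ} (hR : R.Countable) (hg : ∀ t, g t ∈ R)
    (hfib : ∀ r ∈ R, MeasurableSet (g ⁻¹' {r})) (h : γ → ℝ≥0∞) :
    Measurable fun t => h (g t) := by
  intro s _
  have heq : (fun t => h (g t)) ⁻¹' s = ⋃ r ∈ {r | r ∈ R ∧ h r ∈ s}, g ⁻¹' {r} := by
    ext t
    simp only [Set.mem_preimage, Set.mem_iUnion, Set.mem_setOf_eq, Set.mem_singleton_iff]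
    constructor
    · intro ht; exact ⟨g t, ⟨hg t, ht⟩, rfl⟩
    · rintro ⟨r, ⟨_, hr⟩, hgt⟩; rw [hgt]; exact hr
  rw [heq]
  exact MeasurableSet.biUnion (hR.mono fun r hr => hr.1) fun r hr => hfib r hr.1

lemma measurable_wasserstein_simple [CompleteSpace S] {p : ℝ} (hp : 1 ≤ p)
    {I : Type*} [MeasurableSpace I] [Nonempty I] {Ω : Type*} [MeasurableSpace Ω]
    (P : Measure Ω) [IsProbabilityMeasure P]
    (G : SimpleFunc (I × Ω) S) (ρ : Measure S) :
    Measurable fun t => wassersteinP p ρ (P.map fun ω => G (t, ω)) := by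
  have hp0 : (0:ℝ) < p := lt_of_lt_of_le one_pos hp
  have hip : (0:ℝ) < 1/p := by positivity
  haveI : Nonempty Ω := by
    by_contra h
    rw [not_nonempty_iff] at h
    have h0 : P Set.univ = 0 := by
      have : (Set.univ : Set Ω) = ∅ := Set.univ_eq_empty_iff.mpr h
      rw [this, measure_empty]
    rw [measure_univ] at h0; exact one_ne_zero h0
  set A : Finset S := G.range with hA
  obtain ⟨v₀, hv₀⟩ : A.Nonempty :=
    ⟨G (Classical.arbitrary _), SimpleFunc.mem_range_self _ _⟩
  set m : ℕ := A.card with hm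
  set E : Finset S := A.erase v₀ with hE
  have hGm : ∀ t, Measurable fun ω => G (t, ω) :=
    fun t => G.measurable.comp measurable_prodMk_left
  set c : I → S → ℝ≥0∞ := fun t v => P {ω | G (t, ω) = v} with hc
  have hcmeas : ∀ v, Measurable fun t => c t v := by
    intro v
    have hs : MeasurableSet {q : I × Ω | G q = v} := G.measurable (measurableSet_singleton v)
    exact measurable_measure_prodMk_left (ν := P) hs
  have hcle : ∀ t v, c t v ≤ 1 := fun t v => prob_le_one
  have hcfin : ∀ t v, c t v ≠ ⊤ := fun t v => (lt_of_le_of_lt (hcle t v) one_lt_top).ne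
  set μt : I → Measure S := fun t => P.map fun ω => G (t, ω) with hμt
  haveI hμtp : ∀ t, IsProbabilityMeasure (μt t) :=
    fun t => Measure.isProbabilityMeasure_map (hGm t).aemeasurable
  have hμtsingle : ∀ t v, μt t {v} = c t v := fun t v => by
    rw [hμt, Measure.map_apply (hGm t) (measurableSet_singleton v)]; rfl
  have hμtcompl : ∀ t, μt t (↑A)ᶜ = 0 := by
    intro t
    rw [hμt, Measure.map_apply (hGm t) A.measurableSet.compl]
    have : ((fun ω => G (t, ω)) ⁻¹' (↑A)ᶜ) = ∅ := by
      ext ω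
      simp only [Set.mem_preimage, Set.mem_compl_iff, Set.mem_empty_iff_false, iff_false,
        not_not, Finset.mem_coe]
      exact SimpleFunc.mem_range_self _ _
    rw [this, measure_empty]
  have hsumc : ∀ t, ∑ v ∈ A, c t v = 1 := by
    intro t
    have := sum_singleton_eq (μt t) A (hμtcompl t)
    calc ∑ v ∈ A, c t v = ∑ v ∈ A, μt t {v} :=
          Finset.sum_congr rfl fun v _ => (hμtsingle t v).symm
      _ = 1 := this
  -- discretization of [0,1] ⊆ ℝ≥0∞
  set N : ℕ → ℝ := fun n => (n:ℝ) + 1 with hN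
  have hNpos : ∀ n, (0:ℝ) < N n := fun n => by positivity
  set q : ℕ → ℝ≥0∞ → ℝ≥0∞ :=
    fun n x => ENNReal.ofReal ((⌊x.toReal * N n⌋₊ : ℝ) / N n) with hq
  set e : ℕ → ℝ≥0∞ := fun n => ENNReal.ofReal (1 / N n) with he
  have hqle : ∀ n x, x ≠ ⊤ → q n x ≤ x := by
    intro n x hx
    rw [hq]
    have h1 : (⌊x.toReal * N n⌋₊ : ℝ) / N n ≤ x.toReal := by
      rw [div_le_iff₀ (hNpos n)]
      exact Nat.floor_le (by positivity)
    calc ENNReal.ofReal ((⌊x.toReal * N n⌋₊ : ℝ) / N n) ≤ ENNReal.ofReal x.toReal :=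
          ENNReal.ofReal_le_ofReal h1
      _ = x := ENNReal.ofReal_toReal hx
  have hqge : ∀ n x, x ≠ ⊤ → x ≤ q n x + e n := by
    intro n x hx
    have h1 : x.toReal ≤ (⌊x.toReal * N n⌋₊ : ℝ) / N n + 1 / N n := by
      rw [← add_div, le_div_iff₀ (hNpos n)]
      exact (Nat.lt_floor_add_one _).le
    calc x = ENNReal.ofReal x.toReal := (ENNReal.ofReal_toReal hx).symm
      _ ≤ ENNReal.ofReal ((⌊x.toReal * N n⌋₊ : ℝ) / N n + 1 / N n) :=
          ENNReal.ofReal_le_ofReal h1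
      _ ≤ q n x + e n := ENNReal.ofReal_add_le
  have hqmeas : ∀ n, Measurable (q n) := by
    intro n
    apply ENNReal.measurable_ofReal.comp
    apply Measurable.comp (f := fun x : ℝ≥0∞ => ⌊x.toReal * N n⌋₊)
      (g := fun k : ℕ => (k : ℝ) / N n)
    · exact measurable_from_nat
    · exact Nat.measurable_floor.comp (ENNReal.measurable_toReal.mul_const _)
  -- the approximating measures
  set ψ : ℕ → I → S → ℝ≥0∞ :=
    fun n t v => if v ∈ E then q n (c t v) else 0 with hψ
  set B : (S → ℝ≥0∞) → Measure S :=
    fun w => ∑ v ∈ A, (if v = v₀ then 1 - ∑ u ∈ E, w u else w v) • Measure.dirac v with hB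
  set σ : ℕ → I → Measure S := fun n t => B (ψ n t) with hσ
  have hψsum : ∀ n t, ∑ u ∈ E, ψ n t u = ∑ u ∈ E, q n (c t u) :=
    fun n t => Finset.sum_congr rfl fun u hu => if_pos hu
  set s' : ℕ → I → ℝ≥0∞ := fun n t => ∑ u ∈ E, q n (c t u) with hs'
  have hsle : ∀ n t, s' n t ≤ ∑ u ∈ E, c t u :=
    fun n t => Finset.sum_le_sum fun u _ => hqle n _ (hcfin t u)
  have hEsum : ∀ t, c t v₀ + ∑ u ∈ E, c t u = 1 := by
    intro t
    rw [hE, Finset.add_sum_erase _ _ hv₀]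
    exact hsumc t
  have hEle1 : ∀ t, ∑ u ∈ E, c t u ≤ 1 := by
    intro t
    calc ∑ u ∈ E, c t u ≤ c t v₀ + ∑ u ∈ E, c t u := le_add_self
      _ = 1 := hEsum t
  have hsle1 : ∀ n t, s' n t ≤ 1 := fun n t => le_trans (hsle n t) (hEle1 t)
  have hsfin : ∀ n t, s' n t ≠ ⊤ := fun n t => (lt_of_le_of_lt (hsle1 n t) one_lt_top).ne
  have hEfin : ∀ t, (∑ u ∈ E, c t u) ≠ ⊤ := fun t => (lt_of_le_of_lt (hEle1 t) one_lt_top).ne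
  have hcv₀ : ∀ t, c t v₀ = 1 - ∑ u ∈ E, c t u := by
    intro t
    exact ENNReal.eq_sub_of_add_eq (hEfin t) (hEsum t)
  -- coefficients of σ n t
  have hcoeff : ∀ n t v, v ∈ A →
      σ n t {v} = if v = v₀ then 1 - s' n t else q n (c t v) := by
    intro n t v hv
    rw [hσ, hB, sum_dirac_single _ _ hv, hψsum]
    by_cases h : v = v₀
    · simp [h, hs']
    · simp only [h, if_false]
      rw [hψ]
      simp only
      rw [if_pos (Finset.mem_erase.mpr ⟨h, hv⟩)]
  have hσcompl : ∀ n t, σ n t (↑A)ᶜ = 0 := fun n t => sum_dirac_compl _ _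
  haveI hσprob : ∀ n t, IsProbabilityMeasure (σ n t) := by
    intro n t
    constructor
    have happly : σ n t Set.univ = ∑ v ∈ A,
        (if v = v₀ then 1 - ∑ u ∈ E, ψ n t u else ψ n t v) := by
      rw [hσ, hB, sum_dirac_apply _ _ MeasurableSet.univ]
      simp only [Set.mem_univ, Finset.filter_true]
    rw [happly]
    rw [← Finset.add_sum_erase _ _ hv₀, ← hE]
    rw [if_pos rfl]
    have h2 : ∑ v ∈ E, (if v = v₀ then 1 - ∑ u ∈ E, ψ n t u else ψ n t v)
        = ∑ u ∈ E, ψ n t u := by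
      refine Finset.sum_congr rfl fun v hv => ?_
      rw [hE] at hv
      rw [if_neg (Finset.ne_of_mem_erase hv)]
    rw [h2, hψsum n t]
    show (1:ℝ≥0∞) - s' n t + s' n t = 1
    exact tsub_add_cancel_of_le (hsle1 n t)
  -- total variation bounds
  have hbound1 : ∀ n t, ∑ v ∈ A, (μt t {v} - σ n t {v}) ≤ m * e n := by
    intro n t
    rw [← Finset.add_sum_erase _ _ hv₀, ← hE]
    have h1 : μt t {v₀} - σ n t {v₀} = 0 := by
      rw [hμtsingle, hcoeff n t v₀ hv₀, if_pos rfl]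
      refine tsub_eq_zero_of_le ?_
      rw [hcv₀ t]
      exact tsub_le_tsub_left (hsle n t) 1
    rw [h1, zero_add]
    calc ∑ v ∈ E, (μt t {v} - σ n t {v}) ≤ ∑ v ∈ E, e n := by
          refine Finset.sum_le_sum fun v hv => ?_
          rw [hμtsingle, hcoeff n t v (Finset.mem_of_mem_erase (hE ▸ hv)),
            if_neg (Finset.ne_of_mem_erase (hE ▸ hv))]
          exact tsub_le_iff_left.mpr (hqge n _ (hcfin t v))
      _ = E.card • e n := by rw [Finset.sum_const]
      _ ≤ m * e n := by
          rw [nsmul_eq_mul]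
          refine mul_le_mul_left ?_ _
          exact_mod_cast Nat.cast_le.mpr (le_trans (Finset.card_erase_le) le_rfl)
  have hbound2 : ∀ n t, ∑ v ∈ A, (σ n t {v} - μt t {v}) ≤ m * e n := by
    intro n t
    rw [← Finset.add_sum_erase _ _ hv₀, ← hE]
    have h2 : ∑ v ∈ E, (σ n t {v} - μt t {v}) = 0 := by
      refine Finset.sum_eq_zero fun v hv => ?_
      rw [hμtsingle, hcoeff n t v (Finset.mem_of_mem_erase (hE ▸ hv)),
        if_neg (Finset.ne_of_mem_erase (hE ▸ hv))]
      exact tsub_eq_zero_of_le (hqle n _ (hcfin t v))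
    rw [h2, add_zero]
    have h3 : σ n t {v₀} - μt t {v₀} = (∑ u ∈ E, c t u) - s' n t := by
      rw [hμtsingle, hcoeff n t v₀ hv₀, if_pos rfl, hcv₀ t]
      have h4 : (1:ℝ≥0∞) - s' n t = ((∑ u ∈ E, c t u) - s' n t) + (1 - ∑ u ∈ E, c t u) := by
        have h5 : (((∑ u ∈ E, c t u) - s' n t) + (1 - ∑ u ∈ E, c t u)) + s' n t = 1 := by
          rw [add_comm, ← add_assoc, add_tsub_cancel_of_le (hsle n t),
            add_tsub_cancel_of_le (hEle1 t)]
        exact (ENNReal.eq_sub_of_add_eq (hsfin n t) h5).symm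
      rw [h4, ENNReal.add_sub_cancel_right]
      exact (lt_of_le_of_lt tsub_le_self one_lt_top).ne
    rw [h3]
    calc (∑ u ∈ E, c t u) - s' n t ≤ ∑ u ∈ E, (c t u - q n (c t u)) := by
          rw [tsub_le_iff_right, hs']
          rw [← Finset.sum_add_distrib]
          exact Finset.sum_le_sum fun u _ => le_tsub_add
      _ ≤ ∑ u ∈ E, e n :=
          Finset.sum_le_sum fun u _ => tsub_le_iff_left.mpr (hqge n _ (hcfin t u))
      _ = E.card • e n := by rw [Finset.sum_const]
      _ ≤ m * e n := by
          rw [nsmul_eq_mul]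
          exact mul_le_mul_left (by exact_mod_cast Nat.cast_le.mpr Finset.card_erase_le) _
  -- measurability of each approximation
  have hmeasn : ∀ n, Measurable fun t => wassersteinP p ρ (σ n t) := by
    intro n
    set Qn : Set ℝ≥0∞ := Set.range (fun k : ℕ => ENNReal.ofReal ((k:ℝ) / N n)) with hQn
    set R : Set (S → ℝ≥0∞) :=
      {w | (∀ v, v ∉ E → w v = 0) ∧ ∀ v ∈ E, w v ∈ Qn} with hR
    have hRcount : R.Countable := by
      set F' : (↥E → ℕ) → (S → ℝ≥0∞) := fun φ v =>
        if h : v ∈ E then ENNReal.ofReal ((φ ⟨v, h⟩ : ℝ) / N n) else 0 with hF'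
      have hsub : R ⊆ Set.range F' := by
        rintro w ⟨hw0, hwQ⟩
        refine ⟨fun u => Classical.choose (hwQ u u.2), ?_⟩
        funext v
        rw [hF']
        by_cases h : v ∈ E
        · simp only [h, dif_pos]
          exact Classical.choose_spec (hwQ v h)
        · simp only [h, dif_neg, not_false_iff]
          exact (hw0 v h).symm
      exact (Set.countable_range F').mono hsub
    have hψmem : ∀ t, ψ n t ∈ R := by
      intro t
      constructor
      · intro v hv
        rw [hψ]; simp only; rw [if_neg hv]
      · intro v hv
        rw [hψ]; simp only; rw [if_pos hv]
        exact ⟨⌊(c t v).toReal * N n⌋₊, rfl⟩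
    have hfib : ∀ w ∈ R, MeasurableSet ((ψ n ·) ⁻¹' {w}) := by
      intro w hw
      have heq : (ψ n ·) ⁻¹' {w} = ⋂ v ∈ E, {t | q n (c t v) = w v} := by
        ext t
        simp only [Set.mem_preimage, Set.mem_singleton_iff, Set.mem_iInter, Set.mem_setOf_eq]
        constructor
        · intro ht v hv
          rw [← congrFun ht v, hψ]; simp only; rw [if_pos hv]
        · intro ht
          funext v
          rw [hψ]; simp only
          by_cases h : v ∈ E
          · rw [if_pos h]; exact ht v h
          · rw [if_neg h]; exact (hw.1 v h).symm
      rw [heq]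
      refine MeasurableSet.biInter E.countable_toSet fun v _ => ?_
      exact ((hqmeas n).comp (hcmeas v)) (measurableSet_singleton _)
    exact measurable_comp_countable hRcount hψmem hfib fun w => wassersteinP p ρ (B w)
  -- convergence
  set D : ℝ≥0∞ := (A ×ˢ A).sup fun z => edist z.1 z.2 with hD
  have hDfin : D ≠ ⊤ := by
    rw [hD]
    refine (Finset.sup_lt_iff (by simp)).mpr (fun z _ => edist_lt_top _ _) |>.ne
  set ε : ℕ → ℝ≥0∞ := fun n => D * ((m:ℝ≥0∞) * e n) ^ (1/p) with hε
  have hεtend : Tendsto ε atTop (𝓝 0) := by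
    have h1 : Tendsto e atTop (𝓝 0) := by
      rw [he]
      have := tendsto_one_div_add_atTop_nhds_zero_nat (𝕜 := ℝ)
      have h2 := ENNReal.tendsto_ofReal this
      simpa using h2
    have h2 : Tendsto (fun n => (m:ℝ≥0∞) * e n) atTop (𝓝 0) := by
      have := ENNReal.Tendsto.const_mul h1 (Or.inr (by simp : (m:ℝ≥0∞) ≠ ⊤))
      simpa using this
    have h3 := rpow_tendsto_zero hip h2
    have h4 := ENNReal.Tendsto.const_mul h3 (Or.inr hDfin)
    rw [hε]
    simpa only [mul_zero] using h4
  refine measurable_of_tendsto_metrizable hmeasn ?_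
  rw [tendsto_pi_nhds]
  intro t
  refine tendsto_of_approx hεtend (fun n => ?_) (fun n => ?_)
  · calc wassersteinP p ρ (μt t)
        ≤ wassersteinP p ρ (σ n t) + wassersteinP p (σ n t) (μt t) :=
          wassersteinP_triangle hp ρ (μt t) (σ n t)
      _ ≤ wassersteinP p ρ (σ n t) + ε n := by
          refine add_le_add le_rfl ?_
          refine le_trans (wassersteinP_discrete_le hp A (σ n t) (μt t)
            (hσcompl n t) (hμtcompl t)) ?_
          rw [hε]
          exact mul_le_mul' le_rfl (ENNReal.rpow_le_rpow (hbound2 n t) hip.le)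
  · calc wassersteinP p ρ (σ n t)
        ≤ wassersteinP p ρ (μt t) + wassersteinP p (μt t) (σ n t) :=
          wassersteinP_triangle hp ρ (σ n t) (μt t)
      _ ≤ wassersteinP p ρ (μt t) + ε n := by
          refine add_le_add le_rfl ?_
          refine le_trans (wassersteinP_discrete_le hp A (μt t) (σ n t)
            (hμtcompl t) (hσcompl n t)) ?_
          rw [hε]
          exact mul_le_mul' le_rfl (ENNReal.rpow_le_rpow (hbound1 n t) hip.le)

end Simple


section Main

lemma measurable_wassersteinP_law [CompleteSpace S] {p : ℝ} (hp : 1 ≤ p)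
    {I : Type*} [MeasurableSpace I] {Ω : Type*} [MeasurableSpace Ω]
    (P : Measure Ω) [IsProbabilityMeasure P] (X : I → Ω → S)
    (hX : Measurable (Function.uncurry X)) (x₀' : S)
    (hint : ∀ t, ∫⁻ ω, edist (X t ω) x₀' ^ p ∂P ≠ ∞) (ρ : Measure S) :
    Measurable fun t => wassersteinP p ρ (Measure.map (X t) P) := by
  have hp0 : (0:ℝ) < p := lt_of_lt_of_le one_pos hp
  have hip : (0:ℝ) < 1/p := by positivity
  rcases isEmpty_or_nonempty I with hI | hI
  · exact Subsingleton.measurable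
  set F : ℕ → SimpleFunc (I × Ω) S :=
    fun n => SimpleFunc.approxOn (Function.uncurry X) hX Set.univ x₀' (Set.mem_univ _) n with hF
  have hmeasn : ∀ n, Measurable fun t => wassersteinP p ρ (P.map fun ω => F n (t, ω)) :=
    fun n => measurable_wasserstein_simple hp P (F n) ρ
  refine measurable_of_tendsto_metrizable hmeasn ?_
  rw [tendsto_pi_nhds]
  intro t
  have hXt : Measurable (X t) := hX.comp measurable_prodMk_left
  have hFnt : ∀ n, Measurable fun ω => F n (t, ω) :=
    fun n => (F n).measurable.comp measurable_prodMk_left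
  set ε : ℕ → ℝ≥0∞ := fun n => (∫⁻ ω, edist (F n (t, ω)) (X t ω) ^ p ∂P) ^ (1/p) with hεd
  have hbound_int : ∫⁻ ω, edist x₀' (X t ω) ^ p ∂P ≠ ∞ := by
    have : (fun ω => edist x₀' (X t ω) ^ p) = fun ω => edist (X t ω) x₀' ^ p := by
      funext ω; rw [edist_comm]
    rw [this]; exact hint t
  have hεt : Tendsto ε atTop (𝓝 0) := by
    have h0 : Tendsto (fun n => ∫⁻ ω, edist (F n (t, ω)) (X t ω) ^ p ∂P) atTop
        (𝓝 (∫⁻ _, 0 ∂P)) := by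
      refine tendsto_lintegral_of_dominated_convergence (fun ω => edist x₀' (X t ω) ^ p)
        (fun n => ((hFnt n).edist hXt).pow_const p) (fun n => ?_) hbound_int ?_
      · refine Eventually.of_forall fun ω => ?_
        exact ENNReal.rpow_le_rpow
          (SimpleFunc.edist_approxOn_le hX (Set.mem_univ x₀') (t, ω) n) hp0.le
      · refine Eventually.of_forall fun ω => ?_
        have h1 : Tendsto (fun n => F n (t, ω)) atTop (𝓝 (X t ω)) := by
          have := SimpleFunc.tendsto_approxOn hX (Set.mem_univ x₀')
            (x := (t, ω)) (by rw [closure_univ]; exact Set.mem_univ _)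
          exact this
        have h2 : Tendsto (fun n => edist (F n (t, ω)) (X t ω)) atTop (𝓝 0) := by
          have := h1.edist (tendsto_const_nhds (x := X t ω))
          simpa [edist_self] using this
        exact rpow_tendsto_zero hp0 h2
    rw [lintegral_zero] at h0
    exact rpow_tendsto_zero hip h0
  have hmapXt : Measure.map (X t) P = P.map (X t) := rfl
  refine tendsto_of_approx hεt (fun n => ?_) (fun n => ?_)
  · calc wassersteinP p ρ (Measure.map (X t) P)
        ≤ wassersteinP p ρ (P.map fun ω => F n (t, ω))
          + wassersteinP p (P.map fun ω => F n (t, ω)) (Measure.map (X t) P) :=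
          wassersteinP_triangle hp ρ _ _
      _ ≤ wassersteinP p ρ (P.map fun ω => F n (t, ω)) + ε n := by
          refine add_le_add le_rfl ?_
          exact wassersteinP_map_map_le hp P (hFnt n) hXt
  · calc wassersteinP p ρ (P.map fun ω => F n (t, ω))
        ≤ wassersteinP p ρ (Measure.map (X t) P)
          + wassersteinP p (Measure.map (X t) P) (P.map fun ω => F n (t, ω)) :=
          wassersteinP_triangle hp ρ _ _
      _ ≤ wassersteinP p ρ (Measure.map (X t) P) + ε n := by
          refine add_le_add le_rfl ?_
          refine le_trans (wassersteinP_map_map_le hp P hXt (hFnt n)) ?_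
          rw [hεd]
          refine le_of_eq ?_
          congr 1
          exact lintegral_congr fun ω => by rw [edist_comm]

end Main

end WassersteinAux






/-- Borel measurability in the `p`-th Wasserstein space of the law map of a jointly
measurable `p`-fold integrable process with values in a complete separable star-convex
metric set whose metric satisfies the convexity condition. -/
theorem stmt8 {V : Type*} [AddCommGroup V] [Module ℝ V]
    (S : Set V) (x₀ : V) (hx₀ : x₀ ∈ S)
    (hstar : ∀ x ∈ S, ∀ l : ℝ, l ∈ Set.Icc (0:ℝ) 1 → (1 - l) • x₀ + l • x ∈ S)
    [MetricSpace S] [CompleteSpace S] [TopologicalSpace.SeparableSpace S]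
    [MeasurableSpace S] [BorelSpace S]
    (hconv : ∀ (l : ℝ) (hl : l ∈ Set.Icc (0:ℝ) 1) (x y : S),
      dist (⟨(1 - l) • x₀ + l • (x : V), hstar x x.2 l hl⟩ : S) y
        ≤ (1 - l) * dist (⟨x₀, hx₀⟩ : S) y + l * dist x y)
    (p : ℝ) (hp : 1 ≤ p)
    {I : Type*} [MeasurableSpace I]
    {Ω : Type*} [MeasurableSpace Ω] (P : Measure Ω) [IsProbabilityMeasure P]
    (X : I → Ω → S)
    (hX : Measurable (Function.uncurry X))
    (hint : ∀ t, ∫⁻ ω, edist (X t ω) (⟨x₀, hx₀⟩ : S) ^ p ∂P ≠ ∞) :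
    @Measurable I (Measure S) _
      (MeasurableSpace.generateFrom
        {B : Set (Measure S) | ∃ ρ r, B = {σ | wassersteinP p ρ σ < r}})
      (fun t => Measure.map (X t) P) := by
  haveI : SecondCountableTopology S := UniformSpace.secondCountable_of_separable S
  refine measurable_generateFrom ?_
  rintro B ⟨ρ, r, rfl⟩
  exact WassersteinAux.measurable_wassersteinP_law hp P X hX ⟨x₀, hx₀⟩ hint ρ measurableSet_Iio
end

section
/- Let I be a nondegenerate interval in ℝ, μ a σ-finite Borel measure on I, and k a nonnegative measurable kernel on {(t,s) ∈ I×I | s ≤ t} with values in [0,∞]. Define the iterated kernels R_{k,μ,1} := k and R_{k,μ,n+1}(t,s) := ∫_{[s,t]} k(t, s̃) R_{k,μ,n}(s̃, s) μ(ds̃). Suppose c₀ := sup_{t∈I} ∫_{[0,t]∩I} k(t,s)^p μ(ds) < ∞ and ε₀ := lim_{δ↓0} sup_{r,t∈I, r≤t≤r+δ} ∫_{[r,t]} k(t,s)^p μ(ds) < ∞ for some p > 0. Then for every ε > ε₀ there exists δ > 0 such that for all m, n ∈ ℕ: sup_{r,t∈I, r≤t≤r+mδ} ∫_{[r,t]}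 R_{k^p,μ,n}(t,s) μ(ds) ≤ (n c_ε)^{m-1} ε^n, where c_ε := max{1, c₀/ε}. -/
open MeasureTheory ENNReal Set

/-- The iterated kernels of a nonnegative kernel `k` relative to a measure `μ`:
`R_{k,μ,1} = k` and `R_{k,μ,n+1}(t,s) = ∫_{[s,t]} k(t,u) R_{k,μ,n}(u,s) μ(du)`
(the value at `n = 0` is junk). -/
noncomputable def iterK (μ : Measure ℝ) (k : ℝ → ℝ → ℝ≥0∞) : ℕ → ℝ → ℝ → ℝ≥0∞
  | 0 => fun _ _ => 0
  | 1 => k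
  | (n + 2) => fun t s => ∫⁻ u in Icc s t, k t u * iterK μ k (n + 1) u s ∂μ

lemma measurable_iterK (μ : Measure ℝ) [SigmaFinite μ] (K : ℝ → ℝ → ℝ≥0∞)
    (hK : Measurable fun q : ℝ × ℝ => K q.1 q.2) :
    ∀ n, Measurable fun q : ℝ × ℝ => iterK μ K n q.1 q.2
  | 0 => measurable_const
  | 1 => hK
  | (n + 2) => by
    have ih := measurable_iterK μ K hK (n + 1)
    have heq : (fun q : ℝ × ℝ => iterK μ K (n+2) q.1 q.2)
        = fun q : ℝ × ℝ => ∫⁻ u, (Icc q.2 q.1).indicator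
            (fun u => K q.1 u * iterK μ K (n+1) u q.2) u ∂μ := by
      funext q
      show (∫⁻ u in Icc q.2 q.1, K q.1 u * iterK μ K (n+1) u q.2 ∂μ) = _
      rw [← lintegral_indicator measurableSet_Icc]
    rw [heq]
    apply Measurable.lintegral_prod_right'
      (f := fun p : (ℝ × ℝ) × ℝ => (Icc p.1.2 p.1.1).indicator
        (fun u => K p.1.1 u * iterK μ K (n+1) u p.1.2) p.2)
    have hset : MeasurableSet {p : (ℝ × ℝ) × ℝ | p.1.2 ≤ p.2 ∧ p.2 ≤ p.1.1} :=
      (measurableSet_le (measurable_fst.snd) measurable_snd).inter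
        (measurableSet_le measurable_snd (measurable_fst.fst))
    have : (fun p : (ℝ × ℝ) × ℝ => (Icc p.1.2 p.1.1).indicator
        (fun u => K p.1.1 u * iterK μ K (n+1) u p.1.2) p.2)
        = fun p : (ℝ × ℝ) × ℝ => if p.1.2 ≤ p.2 ∧ p.2 ≤ p.1.1 then
            K p.1.1 p.2 * iterK μ K (n+1) p.2 p.1.2 else 0 := by
      funext p
      simp [Set.indicator_apply, Set.mem_Icc]
    rw [this]
    exact Measurable.ite hset
      ((hK.comp ((measurable_fst.fst).prodMk measurable_snd)).mul
        (ih.comp (measurable_snd.prodMk (measurable_fst.snd))))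
      measurable_const

lemma swapAux (μ : Measure ℝ) [SigmaFinite μ] (K g : ℝ → ℝ → ℝ≥0∞)
    (hK : Measurable fun q : ℝ × ℝ => K q.1 q.2)
    (hg : Measurable fun q : ℝ × ℝ => g q.1 q.2) (r t : ℝ) :
    ∫⁻ s in Icc r t, ∫⁻ u in Icc s t, K t u * g u s ∂μ ∂μ
      = ∫⁻ u in Icc r t, K t u * ∫⁻ s in Icc r u, g u s ∂μ ∂μ := by
  set F : ℝ × ℝ → ℝ≥0∞ := fun p =>
    if r ≤ p.1 ∧ p.1 ≤ p.2 ∧ p.2 ≤ t then K t p.2 * g p.2 p.1 else 0 with hFdef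
  have hFm : Measurable F := by
    apply Measurable.ite
    · exact (measurableSet_le measurable_const measurable_fst).inter
        ((measurableSet_le measurable_fst measurable_snd).inter
          (measurableSet_le measurable_snd measurable_const))
    · exact (hK.comp (measurable_const.prodMk measurable_snd)).mul
        (hg.comp (measurable_snd.prodMk measurable_fst))
    · exact measurable_const
  have hL : (∫⁻ s in Icc r t, ∫⁻ u in Icc s t, K t u * g u s ∂μ ∂μ)
      = ∫⁻ s, ∫⁻ u, F (s, u) ∂μ ∂μ := by
    rw [← lintegral_indicator measurableSet_Icc]
    congr 1
    funext s
    by_cases hs : s ∈ Icc r t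
    · rw [indicator_of_mem hs, ← lintegral_indicator measurableSet_Icc]
      congr 1
      funext u
      by_cases hu : u ∈ Icc s t
      · rw [indicator_of_mem hu, hFdef]
        simp only
        rw [if_pos ⟨hs.1, hu.1, hu.2⟩]
      · rw [indicator_of_notMem hu, hFdef]
        simp only
        rw [if_neg (fun h => hu ⟨h.2.1, h.2.2⟩)]
    · rw [indicator_of_notMem hs]
      have : ∀ u, F (s, u) = 0 := by
        intro u
        rw [hFdef]
        simp only
        rw [if_neg (fun h => hs ⟨h.1, h.2.1.trans h.2.2⟩)]
      simp [this]
  have hR : (∫⁻ u in Icc r t, K t u * ∫⁻ s in Icc r u, g u s ∂μ ∂μ)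
      = ∫⁻ u, ∫⁻ s, F (s, u) ∂μ ∂μ := by
    rw [← lintegral_indicator measurableSet_Icc]
    congr 1
    funext u
    by_cases hu : u ∈ Icc r t
    · have hgu : Measurable (g u) := by
        have h1 : g u = fun s => (fun q : ℝ × ℝ => g q.1 q.2) (u, s) := rfl
        rw [h1]; exact hg.comp (measurable_const.prodMk measurable_id)
      rw [indicator_of_mem hu, ← lintegral_indicator measurableSet_Icc,
        ← lintegral_const_mul (K t u) (hgu.indicator measurableSet_Icc)]
      congr 1
      funext s
      by_cases hs : s ∈ Icc r u
      · rw [indicator_of_mem hs, hFdef]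
        simp only
        rw [if_pos ⟨hs.1, hs.2, hu.2⟩]
      · rw [indicator_of_notMem hs, hFdef]
        simp only
        rw [if_neg (fun h => hs ⟨h.1, h.2.1⟩), mul_zero]
    · rw [indicator_of_notMem hu]
      have : ∀ s, F (s, u) = 0 := by
        intro s
        rw [hFdef]
        simp only
        rw [if_neg (fun h => hu ⟨h.1.trans h.2.1, h.2.2⟩)]
      simp [this]
  rw [hL, hR]
  exact lintegral_lintegral_swap (hFm.aemeasurable)

/-- First type of integral estimate for the iterated kernels of `k^p`. -/
theorem stmt9 (I : Set ℝ) (hI : I.OrdConnected) (hne : ∃ a ∈ I, ∃ b ∈ I, a < b)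
    (μ : Measure ℝ) [SigmaFinite μ]
    (k : ℝ → ℝ → ℝ≥0∞) (hk : Measurable fun q : ℝ × ℝ => k q.1 q.2)
    (p : ℝ) (hp : 0 < p)
    (c₀ : ℝ≥0∞)
    (hc₀ : c₀ = ⨆ t ∈ I, ∫⁻ s in {s | s ∈ I ∧ s ≤ t}, k t s ^ p ∂μ)
    (hc₀fin : c₀ ≠ ∞)
    (ε₀ : ℝ≥0∞)
    (hε₀ : ε₀ = ⨅ δ ∈ Ioi (0:ℝ), ⨆ r ∈ I, ⨆ t ∈ I, ⨆ _ : r ≤ t ∧ t ≤ r + δ,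
        ∫⁻ s in Icc r t, k t s ^ p ∂μ)
    (hε₀fin : ε₀ ≠ ∞)
    (ε : ℝ≥0∞) (hε : ε₀ < ε) :
    ∃ δ : ℝ, 0 < δ ∧ ∀ m n : ℕ, 1 ≤ m → 1 ≤ n →
      (⨆ r ∈ I, ⨆ t ∈ I, ⨆ _ : r ≤ t ∧ t ≤ r + (m : ℝ) * δ,
        ∫⁻ s in Icc r t, iterK μ (fun t' s' => k t' s' ^ p) n t s ∂μ)
      ≤ ((n : ℝ≥0∞) * max 1 (c₀ / ε)) ^ (m - 1) * ε ^ n := by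
  set K : ℝ → ℝ → ℝ≥0∞ := fun t' s' => k t' s' ^ p with hKdef
  have hKm : Measurable fun q : ℝ × ℝ => K q.1 q.2 := hk.pow_const p
  set c : ℝ≥0∞ := max 1 (c₀ / ε) with hcdef
  have hc1 : (1 : ℝ≥0∞) ≤ c := le_max_left _ _
  have hεne : ε ≠ 0 := (lt_of_le_of_lt (zero_le : 0 ≤ ε₀) hε).ne'
  have hc₀c : c₀ ≤ c * ε := by
    rcases eq_or_ne ε ∞ with h | h
    · rw [h, ENNReal.mul_top (by intro h0; rw [h0] at hc1; simp at hc1)]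
      exact le_top
    · calc c₀ = c₀ / ε * ε := (ENNReal.div_mul_cancel hεne h).symm
        _ ≤ c * ε := mul_le_mul_left (le_max_right _ _) ε
  -- choose δ
  obtain ⟨δ, hδpos, hSδ⟩ : ∃ δ : ℝ, 0 < δ ∧
      (⨆ r ∈ I, ⨆ t ∈ I, ⨆ _ : r ≤ t ∧ t ≤ r + δ, ∫⁻ s in Icc r t, K t s ∂μ) < ε := by
    by_contra h
    push_neg at h
    have : ε ≤ ε₀ := by
      rw [hε₀]
      exact le_iInf₂ fun δ' hδ' => h δ' hδ'
    exact absurd hε (not_lt.mpr this)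
  have hSbound : ∀ a ∈ I, ∀ b ∈ I, a ≤ b → b ≤ a + δ →
      ∫⁻ s in Icc a b, K b s ∂μ ≤ ε := by
    intro a ha b hb h1 h2
    refine le_trans ?_ hSδ.le
    exact le_iSup₂_of_le a ha (le_iSup₂_of_le b hb (le_iSup_of_le ⟨h1, h2⟩ le_rfl))
  have hc₀bound : ∀ t ∈ I, ∀ A : Set ℝ, A ⊆ {s | s ∈ I ∧ s ≤ t} →
      ∫⁻ s in A, K t s ∂μ ≤ c₀ := by
    intro t ht A hA
    refine le_trans (lintegral_mono_set hA) ?_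
    rw [hc₀]
    exact le_iSup₂_of_le t ht le_rfl
  refine ⟨δ, hδpos, ?_⟩
  have key : ∀ n, 1 ≤ n → ∀ m : ℕ, 1 ≤ m → ∀ r ∈ I, ∀ t ∈ I, r ≤ t → t ≤ r + (m : ℝ) * δ →
      ∫⁻ s in Icc r t, iterK μ K n t s ∂μ ≤ ((n : ℝ≥0∞) * c) ^ (m - 1) * ε ^ n := by
    intro n hn
    induction n, hn using Nat.le_induction with
    | base =>
      intro m hm r hr t ht hrt htm
      have h1 : iterK μ K 1 = K := rfl
      rw [h1]
      rcases Nat.lt_or_ge m 2 with h2 | h2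
      · have hm1 : m = 1 := by omega
        subst hm1
        have : ∫⁻ s in Icc r t, K t s ∂μ ≤ ε :=
          hSbound r hr t ht hrt (by push_cast at htm; linarith)
        simpa using this
      · calc ∫⁻ s in Icc r t, K t s ∂μ ≤ c₀ :=
              hc₀bound t ht (Icc r t) (fun s hs => ⟨hI.out hr ht hs, hs.2⟩)
          _ ≤ c * ε := hc₀c
          _ ≤ ((((1:ℕ)) : ℝ≥0∞) * c) ^ (m - 1) * ε ^ 1 := by
              rw [Nat.cast_one, one_mul, pow_one]
              exact mul_le_mul_left (le_self_pow₀ hc1 (by omega)) ε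
    | succ n hn ih =>
      intro m hm r hr t ht hrt htm
      obtain ⟨j, rfl⟩ : ∃ j, n = j + 1 := ⟨n - 1, by omega⟩
      have hrec : ∫⁻ s in Icc r t, iterK μ K (j + 1 + 1) t s ∂μ
          = ∫⁻ u in Icc r t, K t u * ∫⁻ s in Icc r u, iterK μ K (j + 1) u s ∂μ ∂μ := by
        have h0 : ∀ s, iterK μ K (j + 1 + 1) t s
            = ∫⁻ u in Icc s t, K t u * iterK μ K (j + 1) u s ∂μ := fun s => rfl
        simp_rw [h0]
        exact swapAux μ K (iterK μ K (j + 1)) hKm (measurable_iterK μ K hKm (j + 1)) r t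
      rw [hrec]
      have hKtm : Measurable (K t) := by
        have h1 : K t = fun s => (fun q : ℝ × ℝ => K q.1 q.2) (t, s) := rfl
        rw [h1]; exact hKm.comp (measurable_const.prodMk measurable_id)
      set N : ℝ≥0∞ := ((j : ℝ≥0∞) + 1) with hNdef
      have hNcast : ((j + 1 : ℕ) : ℝ≥0∞) = N := by push_cast; rfl
      rcases Nat.lt_or_ge m 2 with h2 | h2
      · -- m = 1
        have hm1 : m = 1 := by omega
        subst hm1
        push_cast at htm
        have step1 : ∫⁻ u in Icc r t, K t u * ∫⁻ s in Icc r u, iterK μ K (j + 1) u s ∂μ ∂μ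
            ≤ ∫⁻ u in Icc r t, K t u * ε ^ (j + 1) ∂μ := by
          refine setLIntegral_mono (hKtm.mul measurable_const) ?_
          intro u hu
          refine mul_le_mul_right ?_ _
          have := ih 1 le_rfl r hr u (hI.out hr ht hu) hu.1
            (by push_cast; linarith [hu.2])
          simpa [hNcast] using this
        refine le_trans step1 ?_
        rw [lintegral_mul_const _ hKtm]
        calc (∫⁻ u in Icc r t, K t u ∂μ) * ε ^ (j + 1)
            ≤ ε * ε ^ (j + 1) :=
              mul_le_mul_left (hSbound r hr t ht hrt (by linarith)) _
          _ = ((((j:ℕ) + 1 + 1 : ℕ) : ℝ≥0∞) * c) ^ (1 - 1) * ε ^ (j + 1 + 1) := by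
              have h4 : (1:ℕ) - 1 = 0 := rfl
              rw [h4, pow_zero, one_mul]
              ring
      · -- 2 ≤ m
        obtain ⟨m', rfl⟩ : ∃ m', m = m' + 2 := ⟨m - 2, by omega⟩
        push_cast at htm
        set q' : ℝ := min t (r + ((m' : ℝ) + 1) * δ) with hq'def
        have hmδ : (0:ℝ) ≤ ((m' : ℝ) + 1) * δ := by positivity
        have hrq' : r ≤ q' := le_min hrt (by linarith)
        have hq't : q' ≤ t := min_le_left _ _
        have hq'I : q' ∈ I := hI.out hr ht ⟨hrq', hq't⟩
        have htq'δ : t ≤ q' + δ := by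
          have h3 : q' + δ = min (t + δ) (r + ((m' : ℝ) + 1) * δ + δ) :=
            (min_add_add_right _ _ _).symm
          rw [h3]
          exact le_min (by linarith) (by linarith)
        have hsplit : Icc r t = Icc r q' ∪ Ioc q' t := (Icc_union_Ioc_eq_Icc hrq' hq't).symm
        have hdisj : Disjoint (Icc r q') (Ioc q' t) := by
          apply Set.disjoint_left.mpr
          rintro x ⟨_, hx1⟩ ⟨hx2, _⟩
          linarith
        rw [hsplit, lintegral_union measurableSet_Ioc hdisj]
        have hpiece1 : ∫⁻ u in Icc r q', K t u * ∫⁻ s in Icc r u, iterK μ K (j + 1) u s ∂μ ∂μ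
            ≤ c₀ * ((N * c) ^ m' * ε ^ (j + 1)) := by
          have step1 : ∫⁻ u in Icc r q', K t u * ∫⁻ s in Icc r u, iterK μ K (j + 1) u s ∂μ ∂μ
              ≤ ∫⁻ u in Icc r q', K t u * ((N * c) ^ m' * ε ^ (j + 1)) ∂μ := by
            refine setLIntegral_mono (hKtm.mul measurable_const) ?_
            intro u hu
            refine mul_le_mul_right ?_ _
            have huI : u ∈ I := hI.out hr hq'I hu
            have huδ : u ≤ r + ((m' + 1 : ℕ) : ℝ) * δ := by
              push_cast
              calc u ≤ q' := hu.2
                _ ≤ r + ((m' : ℝ) + 1) * δ := min_le_right _ _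
            have := ih (m' + 1) (by omega) r hr u huI hu.1 huδ
            simpa [hNcast] using this
          refine le_trans step1 ?_
          rw [lintegral_mul_const _ hKtm]
          refine mul_le_mul_left ?_ _
          refine hc₀bound t ht (Icc r q') ?_
          intro s hs
          exact ⟨hI.out hr hq'I hs, hs.2.trans hq't⟩
        have hpiece2 : ∫⁻ u in Ioc q' t, K t u * ∫⁻ s in Icc r u, iterK μ K (j + 1) u s ∂μ ∂μ
            ≤ ε * ((N * c) ^ (m' + 1) * ε ^ (j + 1)) := by
          have step1 : ∫⁻ u in Ioc q' t, K t u * ∫⁻ s in Icc r u, iterK μ K (j + 1) u s ∂μ ∂μ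
              ≤ ∫⁻ u in Ioc q' t, K t u * ((N * c) ^ (m' + 1) * ε ^ (j + 1)) ∂μ := by
            refine setLIntegral_mono (hKtm.mul measurable_const) ?_
            intro u hu
            refine mul_le_mul_right ?_ _
            have huI : u ∈ I := hI.out hq'I ht ⟨hu.1.le, hu.2⟩
            have huδ : u ≤ r + ((m' + 2 : ℕ) : ℝ) * δ := by
              push_cast
              linarith [hu.2]
            have := ih (m' + 2) (by omega) r hr u huI (hrq'.trans hu.1.le) huδ
            have hexp : m' + 2 - 1 = m' + 1 := by omega
            rw [hexp] at this
            simpa [hNcast] using this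
          refine le_trans step1 ?_
          rw [lintegral_mul_const _ hKtm]
          refine mul_le_mul_left ?_ _
          refine le_trans (lintegral_mono_set Ioc_subset_Icc_self) ?_
          exact hSbound q' hq'I t ht hq't htq'δ
        refine le_trans (add_le_add hpiece1 hpiece2) ?_
        calc c₀ * ((N * c) ^ m' * ε ^ (j + 1)) + ε * ((N * c) ^ (m' + 1) * ε ^ (j + 1))
            ≤ c * ε * ((N * c) ^ m' * ε ^ (j + 1)) + ε * ((N * c) ^ (m' + 1) * ε ^ (j + 1)) :=
              add_le_add_left (mul_le_mul_left hc₀c _) _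
          _ = (N * c) ^ m' * ((N + 1) * c) * ε ^ (j + 2) := by ring
          _ ≤ ((N + 1) * c) ^ m' * ((N + 1) * c) * ε ^ (j + 2) := by
              refine mul_le_mul_left (mul_le_mul_left ?_ _) _
              exact pow_le_pow_left₀ zero_le (mul_le_mul_left (by exact le_self_add) c) m'
          _ = ((N + 1) * c) ^ (m' + 1) * ε ^ (j + 2) := by rw [← pow_succ]
          _ = ((((j + 1 + 1 : ℕ)) : ℝ≥0∞) * c) ^ (m' + 2 - 1) * ε ^ (j + 1 + 1) := by
              have h4 : ((j + 1 + 1 : ℕ) : ℝ≥0∞) = N + 1 := by rw [hNdef]; push_cast; ring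
              have h5 : m' + 2 - 1 = m' + 1 := rfl
              rw [h4, h5]
      -- end succ
  intro m n hm hn
  refine iSup_le fun r => iSup_le fun hr => iSup_le fun t => iSup_le fun ht =>
    iSup_le fun hcond => ?_
  exact key n hn m hm r hr t ht hcond.1 hcond.2
end

section
/- Let I be a nondegenerate interval in ℝ, μ a σ-finite Borel measure on I, and k a nonnegative kernel on I. Suppose c₀ := sup_{s∈I} ∫_{{t∈I | t≥s}} k(t,s)^p μ(dt) < ∞ and ε₀ := lim_{δ↓0} sup_{r,t∈I, r≤t≤r+δ} ∫_{[r,t]} k(s,r)^p μ(ds) < ∞ for some p > 0. Then for every ε > ε₀ there is δ > 0 such that for all m, n ∈ ℕ: sup_{r,t∈I, r≤t≤r+mδ} ∫_{[r,t]} R_{k^p,μ,n}(s,r) μ(ds) ≤ (n c_ε)^{m-1} ε^n, with c_ε := max{1, c₀/ε}. -/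
open MeasureTheory ENNReal Set

lemma iterK_measurable (μ : Measure ℝ) [SigmaFinite μ] {K : ℝ → ℝ → ℝ≥0∞}
    (hK : Measurable fun q : ℝ × ℝ => K q.1 q.2) :
    ∀ n, Measurable fun q : ℝ × ℝ => iterK μ K n q.1 q.2
  | 0 => measurable_const
  | 1 => hK
  | (j + 2) => by
    have IH := iterK_measurable μ hK (j + 1)
    show Measurable fun q : ℝ × ℝ =>
      ∫⁻ u in Icc q.2 q.1, K q.1 u * iterK μ K (j + 1) u q.2 ∂μ
    have h1 : ∀ q : ℝ × ℝ, ∫⁻ u in Icc q.2 q.1, K q.1 u * iterK μ K (j + 1) u q.2 ∂μ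
        = ∫⁻ u, {x : (ℝ × ℝ) × ℝ | x.1.2 ≤ x.2 ∧ x.2 ≤ x.1.1}.indicator
            (fun x => K x.1.1 x.2 * iterK μ K (j + 1) x.2 x.1.2) (q, u) ∂μ := by
      intro q
      rw [← lintegral_indicator measurableSet_Icc]
      refine lintegral_congr fun u => ?_
      by_cases h : u ∈ Icc q.2 q.1
      · rw [Set.indicator_of_mem h, Set.indicator_of_mem (by exact h)]
      · rw [Set.indicator_of_notMem h, Set.indicator_of_notMem (by exact h)]
    simp_rw [h1]
    apply Measurable.lintegral_prod_right'
    apply Measurable.indicator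
    · exact (hK.comp ((measurable_fst.fst).prodMk measurable_snd)).mul
        (IH.comp (measurable_snd.prodMk measurable_fst.snd))
    · exact measurableSet_le (measurable_fst.snd) measurable_snd |>.inter
        (measurableSet_le measurable_snd measurable_fst.fst)

lemma iterK_step (μ : Measure ℝ) [SigmaFinite μ] {K : ℝ → ℝ → ℝ≥0∞}
    (hK : Measurable fun q : ℝ × ℝ => K q.1 q.2) (j : ℕ) (r t : ℝ) :
    ∫⁻ s in Icc r t, iterK μ K (j + 2) s r ∂μ
      = ∫⁻ u in Icc r t, iterK μ K (j + 1) u r * ∫⁻ s in Icc u t, K s u ∂μ ∂μ := by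
  classical
  set n := j + 1 with hn
  set F : ℝ → ℝ → ℝ≥0∞ := fun s u =>
    if r ≤ u ∧ u ≤ s ∧ s ≤ t then K s u * iterK μ K n u r else 0 with hF
  have hRmeas := iterK_measurable μ hK n
  have hFmeas : Measurable (Function.uncurry F) := by
    apply Measurable.ite
    · exact ((measurableSet_le measurable_const measurable_snd).inter
        ((measurableSet_le measurable_snd measurable_fst).inter
          (measurableSet_le measurable_fst measurable_const)))
    · exact (hK.comp (measurable_fst.prodMk measurable_snd)).mul
        (hRmeas.comp (measurable_snd.prodMk measurable_const))
    · exact measurable_const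
  have claim1 : ∀ s, (Icc r t).indicator
      (fun s => ∫⁻ u in Icc r s, K s u * iterK μ K n u r ∂μ) s = ∫⁻ u, F s u ∂μ := by
    intro s
    by_cases hs : s ∈ Icc r t
    · rw [Set.indicator_of_mem hs, ← lintegral_indicator measurableSet_Icc]
      refine lintegral_congr fun u => ?_
      by_cases hu : u ∈ Icc r s
      · rw [Set.indicator_of_mem hu]
        exact (if_pos ⟨hu.1, hu.2, hs.2⟩).symm
      · rw [Set.indicator_of_notMem hu]
        exact (if_neg (fun h => hu ⟨h.1, h.2.1⟩)).symm
    · rw [Set.indicator_of_notMem hs]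
      have : ∀ u, F s u = 0 := fun u => if_neg (fun h => hs ⟨le_trans h.1 h.2.1, h.2.2⟩)
      simp [this]
  have claim2 : ∀ u, ∫⁻ s, F s u ∂μ = (Icc r t).indicator
      (fun u => iterK μ K n u r * ∫⁻ s in Icc u t, K s u ∂μ) u := by
    intro u
    have hKu : Measurable fun s : ℝ => K s u :=
      hK.comp (measurable_id.prodMk measurable_const)
    by_cases hu : u ∈ Icc r t
    · rw [Set.indicator_of_mem hu]
      calc ∫⁻ s, F s u ∂μ
          = ∫⁻ s, (Icc u t).indicator (fun s => K s u * iterK μ K n u r) s ∂μ := by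
            refine lintegral_congr fun s => ?_
            by_cases hs : s ∈ Icc u t
            · rw [Set.indicator_of_mem hs]
              exact if_pos ⟨hu.1, hs.1, hs.2⟩
            · rw [Set.indicator_of_notMem hs]
              exact if_neg (fun h => hs ⟨h.2.1, h.2.2⟩)
        _ = ∫⁻ s in Icc u t, K s u * iterK μ K n u r ∂μ :=
            lintegral_indicator measurableSet_Icc _
        _ = (∫⁻ s in Icc u t, K s u ∂μ) * iterK μ K n u r :=
            lintegral_mul_const _ hKu
        _ = iterK μ K n u r * ∫⁻ s in Icc u t, K s u ∂μ := mul_comm _ _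
    · rw [Set.indicator_of_notMem hu]
      have : ∀ s, F s u = 0 := fun s => if_neg (fun h => hu ⟨h.1, le_trans h.2.1 h.2.2⟩)
      simp [this]
  calc ∫⁻ s in Icc r t, iterK μ K (j + 2) s r ∂μ
      = ∫⁻ s in Icc r t, ∫⁻ u in Icc r s, K s u * iterK μ K n u r ∂μ ∂μ := rfl
    _ = ∫⁻ s, (Icc r t).indicator
          (fun s => ∫⁻ u in Icc r s, K s u * iterK μ K n u r ∂μ) s ∂μ :=
        (lintegral_indicator measurableSet_Icc _).symm
    _ = ∫⁻ s, ∫⁻ u, F s u ∂μ ∂μ := lintegral_congr claim1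
    _ = ∫⁻ u, ∫⁻ s, F s u ∂μ ∂μ := lintegral_lintegral_swap hFmeas.aemeasurable
    _ = ∫⁻ u, (Icc r t).indicator
          (fun u => iterK μ K n u r * ∫⁻ s in Icc u t, K s u ∂μ) u ∂μ := lintegral_congr claim2
    _ = ∫⁻ u in Icc r t, iterK μ K n u r * ∫⁻ s in Icc u t, K s u ∂μ ∂μ :=
        lintegral_indicator measurableSet_Icc _

/-- Second type of integral estimate for the iterated kernels of `k^p`,
integrating in the first variable. -/
theorem stmt11 (I : Set ℝ) (hI : I.OrdConnected) (hne : ∃ a ∈ I, ∃ b ∈ I, a < b)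
    (μ : Measure ℝ) [SigmaFinite μ]
    (k : ℝ → ℝ → ℝ≥0∞) (hk : Measurable fun q : ℝ × ℝ => k q.1 q.2)
    (p : ℝ) (hp : 0 < p)
    (c₀ : ℝ≥0∞)
    (hc₀ : c₀ = ⨆ s ∈ I, ∫⁻ t in {t | t ∈ I ∧ s ≤ t}, k t s ^ p ∂μ)
    (hc₀fin : c₀ ≠ ∞)
    (ε₀ : ℝ≥0∞)
    (hε₀ : ε₀ = ⨅ δ ∈ Ioi (0:ℝ), ⨆ r ∈ I, ⨆ t ∈ I, ⨆ _ : r ≤ t ∧ t ≤ r + δ,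
        ∫⁻ s in Icc r t, k s r ^ p ∂μ)
    (hε₀fin : ε₀ ≠ ∞)
    (ε : ℝ≥0∞) (hε : ε₀ < ε) :
    ∃ δ : ℝ, 0 < δ ∧ ∀ m n : ℕ, 1 ≤ m → 1 ≤ n →
      (⨆ r ∈ I, ⨆ t ∈ I, ⨆ _ : r ≤ t ∧ t ≤ r + (m : ℝ) * δ,
        ∫⁻ s in Icc r t, iterK μ (fun t' s' => k t' s' ^ p) n s r ∂μ)
      ≤ ((n : ℝ≥0∞) * max 1 (c₀ / ε)) ^ (m - 1) * ε ^ n := by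
  classical
  set Kp : ℝ → ℝ → ℝ≥0∞ := fun t' s' => k t' s' ^ p with hKp_def
  have hKpm : Measurable fun q : ℝ × ℝ => Kp q.1 q.2 := hk.pow_const p
  have hRsec : ∀ (n : ℕ) (r : ℝ), Measurable fun u => iterK μ Kp n u r := fun n r =>
    (iterK_measurable μ hKpm n).comp (measurable_id.prodMk measurable_const)
  by_cases hεtop : ε = ⊤
  · refine ⟨1, one_pos, fun m n hm hn => ?_⟩
    have hne'' : ((n : ℝ≥0∞)) ^ (m - 1) ≠ 0 :=
      pow_ne_zero _ (Nat.cast_ne_zero.mpr (show n ≠ 0 by omega))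
    have hne' : ((n : ℝ≥0∞) * 1) ^ (m - 1) ≠ 0 := by rw [mul_one]; exact hne''
    rw [hεtop, ENNReal.div_top, max_eq_left zero_le_one,
      ENNReal.top_pow (by omega : n ≠ 0), ENNReal.mul_top hne']
    exact le_top
  have hε0 : ε ≠ 0 := (lt_of_le_of_lt zero_le hε).ne'
  set c : ℝ≥0∞ := max 1 (c₀ / ε) with hc_def
  have hc1 : (1 : ℝ≥0∞) ≤ c := le_max_left _ _
  have hcε : c₀ ≤ c * ε := by
    calc c₀ = c₀ / ε * ε := (ENNReal.div_mul_cancel hε0 hεtop).symm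
      _ ≤ c * ε := mul_le_mul_left (le_max_right _ _) _
  -- choose δ
  rw [hε₀] at hε
  simp only [iInf_lt_iff] at hε
  obtain ⟨δ, hδpos, hSδ⟩ := hε
  rw [mem_Ioi] at hδpos
  refine ⟨δ, hδpos, ?_⟩
  have hwin : ∀ r ∈ I, ∀ w ∈ I, r ≤ w → w ≤ r + δ →
      ∫⁻ s in Icc r w, Kp s r ∂μ ≤ ε := by
    intro r hr w hw h1 h2
    refine le_trans ?_ hSδ.le
    exact le_iSup_of_le r (le_iSup_of_le hr (le_iSup_of_le w (le_iSup_of_le hw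
      (le_iSup_of_le ⟨h1, h2⟩ le_rfl))))
  have hglob : ∀ u ∈ I, ∫⁻ s in {s | s ∈ I ∧ u ≤ s}, Kp s u ∂μ ≤ c₀ := by
    intro u hu
    rw [hc₀]
    exact le_iSup_of_le u (le_iSup_of_le hu le_rfl)
  -- m = 1 estimate
  have A : ∀ n, 1 ≤ n → ∀ r, r ∈ I → ∀ w, w ∈ I → r ≤ w → w ≤ r + δ →
      ∫⁻ s in Icc r w, iterK μ Kp n s r ∂μ ≤ ε ^ n := by
    intro n hn
    induction n, hn using Nat.le_induction with
    | base =>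
      intro r hr w hw h1 h2
      rw [pow_one]
      exact hwin r hr w hw h1 h2
    | succ n hn IH =>
      intro r hr w hw h1 h2
      obtain ⟨j, rfl⟩ : ∃ j, n = j + 1 := ⟨n - 1, by omega⟩
      rw [iterK_step μ hKpm j r w]
      calc ∫⁻ u in Icc r w, iterK μ Kp (j+1) u r * ∫⁻ s in Icc u w, Kp s u ∂μ ∂μ
          ≤ ∫⁻ u in Icc r w, iterK μ Kp (j+1) u r * ε ∂μ := by
            refine setLIntegral_mono ((hRsec (j+1) r).mul_const ε) fun u hu => ?_
            refine mul_le_mul_right ?_ _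
            exact hwin u (hI.out hr hw ⟨hu.1, hu.2⟩) w hw hu.2 (by linarith [hu.1])
        _ = (∫⁻ u in Icc r w, iterK μ Kp (j+1) u r ∂μ) * ε :=
            lintegral_mul_const _ (hRsec (j+1) r)
        _ ≤ ε ^ (j+1) * ε := mul_le_mul_left (IH r hr w hw h1 h2) _
        _ = ε ^ (j+1+1) := (pow_succ _ _).symm
  -- main estimate
  have B : ∀ n, 1 ≤ n → ∀ m : ℕ, 1 ≤ m → ∀ r, r ∈ I → ∀ w, w ∈ I → r ≤ w →
      w ≤ r + (m : ℝ) * δ →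
      ∫⁻ s in Icc r w, iterK μ Kp n s r ∂μ ≤ ((n : ℝ≥0∞) * c) ^ (m - 1) * ε ^ n := by
    intro n hn
    induction n, hn using Nat.le_induction with
    | base =>
      intro m hm r hr w hw h1 h2
      obtain ⟨m', rfl⟩ : ∃ m', m = m' + 1 := ⟨m - 1, by omega⟩
      match m' with
      | 0 =>
        simpa using A 1 le_rfl r hr w hw h1 (by push_cast at h2; linarith)
      | (m'' + 1) =>
        have : (m'' + 1 + 1 - 1 : ℕ) = m'' + 1 := rfl
        rw [this]
        calc ∫⁻ s in Icc r w, iterK μ Kp 1 s r ∂μ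
            ≤ ∫⁻ s in {s | s ∈ I ∧ r ≤ s}, Kp s r ∂μ :=
              lintegral_mono_set fun s hs => ⟨hI.out hr hw ⟨hs.1, hs.2⟩, hs.1⟩
          _ ≤ c₀ := hglob r hr
          _ ≤ c * ε := hcε
          _ ≤ ((1 : ℝ≥0∞) * c) ^ (m'' + 1) * ε ^ 1 := by
              rw [one_mul, pow_one]
              exact mul_le_mul_left (le_self_pow₀ hc1 (by omega)) _
          _ = ((↑(1:ℕ) : ℝ≥0∞) * c) ^ (m'' + 1) * ε ^ 1 := by norm_num
    | succ n hn IH =>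
      intro m hm r hr w hw h1 h2
      obtain ⟨m', rfl⟩ : ∃ m', m = m' + 1 := ⟨m - 1, by omega⟩
      match m' with
      | 0 =>
        calc ∫⁻ s in Icc r w, iterK μ Kp (n+1) s r ∂μ
            ≤ ε ^ (n+1) := A (n+1) (by omega) r hr w hw h1 (by push_cast at h2; linarith)
          _ = ((n+1 : ℕ) * c) ^ (0+1-1) * ε ^ (n+1) := by simp
      | (m'' + 1) =>
        -- m = m'' + 2
        obtain ⟨j, rfl⟩ : ∃ j, n = j + 1 := ⟨n - 1, by omega⟩
        set N : ℝ≥0∞ := ((j + 1 : ℕ) : ℝ≥0∞) with hN_def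
        set w' : ℝ := w - δ with hw'_def
        have hw'w : w' ≤ w := by rw [hw'_def]; linarith
        have hpt : ∀ u ∈ Icc r w, (∫⁻ s in Icc u w, Kp s u ∂μ)
            ≤ ε + (Icc r w').indicator (fun _ => c₀) u := by
          intro u hu
          have huI : u ∈ I := hI.out hr hw hu
          set v : ℝ := min w (u + δ) with hv_def
          have huv : u ≤ v := le_min hu.2 (by linarith)
          have hvI : v ∈ I := hI.out huI hw ⟨huv, min_le_left _ _⟩
          have hsub : Icc u w ⊆ Icc u v ∪ Ioc v w := by
            intro s hs
            rcases le_or_gt s v with h | h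
            · exact Or.inl ⟨hs.1, h⟩
            · exact Or.inr ⟨h, hs.2⟩
          calc ∫⁻ s in Icc u w, Kp s u ∂μ
              ≤ ∫⁻ s in Icc u v ∪ Ioc v w, Kp s u ∂μ := lintegral_mono_set hsub
            _ ≤ (∫⁻ s in Icc u v, Kp s u ∂μ) + ∫⁻ s in Ioc v w, Kp s u ∂μ :=
                lintegral_union_le _ _ _
            _ ≤ ε + (Icc r w').indicator (fun _ => c₀) u := by
                refine add_le_add (hwin u huI v hvI huv (min_le_right _ _)) ?_
                by_cases hcase : w ≤ u + δ
                · have hv : v = w := min_eq_left hcase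
                  rw [hv]
                  simp
                · push_neg at hcase
                  have humem : u ∈ Icc r w' := ⟨hu.1, by rw [hw'_def]; linarith⟩
                  rw [Set.indicator_of_mem humem]
                  refine le_trans (lintegral_mono_set fun s hs => ?_) (hglob u huI)
                  have hus : u ≤ s := le_trans huv hs.1.le
                  exact ⟨hI.out huI hw ⟨hus, hs.2⟩, hus⟩
        rw [iterK_step μ hKpm j r w]
        have hmeas1 : Measurable fun u => iterK μ Kp (j+1) u r * ε :=
          (hRsec (j+1) r).mul_const ε
        have hmeas2 : Measurable fun u =>
            (Icc r w').indicator (fun u => iterK μ Kp (j+1) u r * c₀) u :=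
          ((hRsec (j+1) r).mul_const c₀).indicator measurableSet_Icc
        have key1 : ∫⁻ u in Icc r w, iterK μ Kp (j+1) u r * ∫⁻ s in Icc u w, Kp s u ∂μ ∂μ
            ≤ ∫⁻ u in Icc r w, (iterK μ Kp (j+1) u r * ε
              + (Icc r w').indicator (fun u => iterK μ Kp (j+1) u r * c₀) u) ∂μ := by
          refine setLIntegral_mono (hmeas1.add hmeas2) fun u hu => ?_
          calc iterK μ Kp (j+1) u r * ∫⁻ s in Icc u w, Kp s u ∂μ
              ≤ iterK μ Kp (j+1) u r * (ε + (Icc r w').indicator (fun _ => c₀) u) :=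
                mul_le_mul_right (hpt u hu) _
            _ = iterK μ Kp (j+1) u r * ε
                + (Icc r w').indicator (fun u => iterK μ Kp (j+1) u r * c₀) u := by
                by_cases h : u ∈ Icc r w' <;>
                  simp [mul_add, Set.indicator_of_mem, Set.indicator_of_notMem, h]
        have key2 : ∫⁻ u in Icc r w,
            (Icc r w').indicator (fun u => iterK μ Kp (j+1) u r * c₀) u ∂μ
            = (∫⁻ u in Icc r w', iterK μ Kp (j+1) u r ∂μ) * c₀ := by
          rw [lintegral_indicator measurableSet_Icc, Measure.restrict_restrict measurableSet_Icc,
            inter_eq_left.mpr (Icc_subset_Icc_right hw'w),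
            lintegral_mul_const _ (hRsec (j+1) r)]
        have hIH1 : ∫⁻ u in Icc r w, iterK μ Kp (j+1) u r ∂μ ≤ (N * c) ^ (m'' + 1) * ε ^ (j+1) := by
          have h := IH (m'' + 2) (by omega) r hr w hw h1 h2
          simpa using h
        have hIH2 : ∫⁻ u in Icc r w', iterK μ Kp (j+1) u r ∂μ ≤ (N * c) ^ m'' * ε ^ (j+1) := by
          by_cases hr' : r ≤ w'
          · have hw'I : w' ∈ I := hI.out hr hw ⟨hr', hw'w⟩
            have hbound : w' ≤ r + ((m'' + 1 : ℕ) : ℝ) * δ := by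
              rw [hw'_def]; push_cast at h2 ⊢; linarith
            have h := IH (m'' + 1) (by omega) r hr w' hw'I hr' hbound
            simpa using h
          · rw [Icc_eq_empty hr']
            simp
        calc ∫⁻ u in Icc r w, iterK μ Kp (j+1) u r * ∫⁻ s in Icc u w, Kp s u ∂μ ∂μ
            ≤ ∫⁻ u in Icc r w, (iterK μ Kp (j+1) u r * ε
              + (Icc r w').indicator (fun u => iterK μ Kp (j+1) u r * c₀) u) ∂μ := key1
          _ = (∫⁻ u in Icc r w, iterK μ Kp (j+1) u r * ε ∂μ)
              + ∫⁻ u in Icc r w,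
                (Icc r w').indicator (fun u => iterK μ Kp (j+1) u r * c₀) u ∂μ :=
              lintegral_add_left hmeas1 _
          _ = (∫⁻ u in Icc r w, iterK μ Kp (j+1) u r ∂μ) * ε
              + (∫⁻ u in Icc r w', iterK μ Kp (j+1) u r ∂μ) * c₀ := by
              rw [lintegral_mul_const _ (hRsec (j+1) r), key2]
          _ ≤ ((N * c) ^ (m'' + 1) * ε ^ (j+1)) * ε + ((N * c) ^ m'' * ε ^ (j+1)) * (c * ε) := by
              gcongr
          _ = ((N * c) ^ m'' * ((N + 1) * c)) * ε ^ (j+1+1) := by ring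
          _ ≤ (((N + 1) * c) ^ m'' * ((N + 1) * c)) * ε ^ (j+1+1) := by
              gcongr
              · exact self_le_add_right N 1
          _ = ((N + 1) * c) ^ (m'' + 1) * ε ^ (j+1+1) := by ring
          _ = (((j+1+1 : ℕ) : ℝ≥0∞) * c) ^ (m'' + 1 + 1 - 1) * ε ^ (j+1+1) := by
              rw [hN_def]; push_cast; ring_nf
  intro m n hm hn
  exact iSup_le fun r => iSup_le fun hr => iSup_le fun w => iSup_le fun hw =>
    iSup_le fun hcond => B n hn m hm r hr w hw hcond.1 hcond.2
end

section
/- The iterated kernels satisfy the semigroup-type identity: for all m, n ∈ ℕ and s, t ∈ I with s ≤ t, R_{k,μ,m+n}(t,s) = ∫_{[s,t]} R_{k,μ,m}(t, s̃) R_{k,μ,n}(s̃, s) μ(ds̃). -/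
open MeasureTheory ENNReal Set

lemma iterK_meas (μ : Measure ℝ) [SigmaFinite μ] (k : ℝ → ℝ → ℝ≥0∞)
    (hk : Measurable fun q : ℝ × ℝ => k q.1 q.2) :
    ∀ n, Measurable fun q : ℝ × ℝ => iterK μ k n q.1 q.2 := by
  intro n
  induction n using Nat.strong_induction_on with
  | _ n ih =>
    match n with
    | 0 => simp [iterK]
    | 1 => exact hk
    | (n + 2) =>
      have h1 := ih (n + 1) (by omega)
      have he : (fun q : ℝ × ℝ => iterK μ k (n + 2) q.1 q.2)
          = fun q : ℝ × ℝ => ∫⁻ u, (Icc q.2 q.1).indicator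
              (fun u => k q.1 u * iterK μ k (n + 1) u q.2) u ∂μ := by
        funext q
        rw [lintegral_indicator measurableSet_Icc]
        rfl
      rw [he]
      apply Measurable.lintegral_prod_right'
        (f := fun p : (ℝ × ℝ) × ℝ => (Icc p.1.2 p.1.1).indicator
          (fun u => k p.1.1 u * iterK μ k (n + 1) u p.1.2) p.2)
      have hset : MeasurableSet {p : (ℝ × ℝ) × ℝ | p.2 ∈ Icc p.1.2 p.1.1} := by
        simp only [mem_Icc, setOf_and]
        exact (measurableSet_le measurable_fst.snd measurable_snd).inter
          (measurableSet_le measurable_snd measurable_fst.fst)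
      have he2 : (fun p : (ℝ × ℝ) × ℝ => (Icc p.1.2 p.1.1).indicator
          (fun u => k p.1.1 u * iterK μ k (n + 1) u p.1.2) p.2)
          = fun p => if p.2 ∈ Icc p.1.2 p.1.1
              then k p.1.1 p.2 * iterK μ k (n + 1) p.2 p.1.2 else 0 := by
        funext p; rw [Set.indicator_apply]
      rw [he2]
      apply Measurable.ite hset
      · exact (hk.comp ((measurable_fst.comp measurable_fst).prodMk measurable_snd)).mul
          (h1.comp (measurable_snd.prodMk (measurable_snd.comp measurable_fst)))
      · exact measurable_const

lemma swap_tri (μ : Measure ℝ) [SigmaFinite μ] (f : ℝ → ℝ → ℝ≥0∞)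
    (hf : Measurable fun q : ℝ × ℝ => f q.1 q.2) (s t : ℝ) :
    ∫⁻ u in Icc s t, ∫⁻ v in Icc s u, f u v ∂μ ∂μ
      = ∫⁻ v in Icc s t, ∫⁻ u in Icc v t, f u v ∂μ ∂μ := by
  set g : ℝ → ℝ → ℝ≥0∞ := fun u v => if s ≤ v ∧ v ≤ u ∧ u ≤ t then f u v else 0 with hg
  have hgm : Measurable fun q : ℝ × ℝ => g q.1 q.2 := by
    have hset : MeasurableSet {q : ℝ × ℝ | s ≤ q.2 ∧ q.2 ≤ q.1 ∧ q.1 ≤ t} := by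
      simp only [setOf_and]
      exact (measurableSet_le measurable_const measurable_snd).inter
        ((measurableSet_le measurable_snd measurable_fst).inter
          (measurableSet_le measurable_fst measurable_const))
    exact Measurable.ite hset hf measurable_const
  have hL : ∫⁻ u in Icc s t, ∫⁻ v in Icc s u, f u v ∂μ ∂μ
      = ∫⁻ u, ∫⁻ v, g u v ∂μ ∂μ := by
    rw [← lintegral_indicator measurableSet_Icc]
    congr 1; funext u
    by_cases hu : u ∈ Icc s t
    · rw [indicator_of_mem hu, ← lintegral_indicator measurableSet_Icc]
      congr 1; funext v
      by_cases hv : v ∈ Icc s u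
      · rw [indicator_of_mem hv, hg]
        exact (if_pos ⟨hv.1, hv.2, hu.2⟩).symm
      · rw [indicator_of_notMem hv, hg]
        exact (if_neg (by rintro ⟨h1, h2, h3⟩; exact hv ⟨h1, h2⟩)).symm
    · rw [indicator_of_notMem hu]
      symm
      have hz : ∀ v, g u v = 0 := by
        intro v; rw [hg]
        exact if_neg (by rintro ⟨h1, h2, h3⟩; exact hu ⟨le_trans h1 h2, h3⟩)
      simp [hz]
  have hR : ∫⁻ v in Icc s t, ∫⁻ u in Icc v t, f u v ∂μ ∂μ
      = ∫⁻ v, ∫⁻ u, g u v ∂μ ∂μ := by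
    rw [← lintegral_indicator measurableSet_Icc]
    congr 1; funext v
    by_cases hv : v ∈ Icc s t
    · rw [indicator_of_mem hv, ← lintegral_indicator measurableSet_Icc]
      congr 1; funext u
      by_cases hu : u ∈ Icc v t
      · rw [indicator_of_mem hu, hg]
        exact (if_pos ⟨hv.1, hu.1, hu.2⟩).symm
      · rw [indicator_of_notMem hu, hg]
        exact (if_neg (by rintro ⟨h1, h2, h3⟩; exact hu ⟨h2, h3⟩)).symm
    · rw [indicator_of_notMem hv]
      symm
      have hz : ∀ u, g u v = 0 := by
        intro u; rw [hg]
        exact if_neg (by rintro ⟨h1, h2, h3⟩; exact hv ⟨h1, le_trans h2 h3⟩)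
      simp [hz]
  rw [hL, hR]
  exact lintegral_lintegral_swap hgm.aemeasurable

lemma iterK_semigroup (μ : Measure ℝ) [SigmaFinite μ]
    (k : ℝ → ℝ → ℝ≥0∞) (hk : Measurable fun q : ℝ × ℝ => k q.1 q.2)
    (m n : ℕ) (hm : 1 ≤ m) (hn : 1 ≤ n) :
    ∀ s t : ℝ,
    iterK μ k (m + n) t s = ∫⁻ u in Icc s t, iterK μ k m t u * iterK μ k n u s ∂μ := by
  obtain ⟨n', rfl⟩ : ∃ n', n = n' + 1 := ⟨n - 1, by omega⟩
  obtain ⟨m', rfl⟩ : ∃ m', m = m' + 1 := ⟨m - 1, by omega⟩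
  clear hm hn
  induction m' with
  | zero =>
    intro s t
    rw [show 0 + 1 + (n' + 1) = n' + 2 by omega]
    rfl
  | succ m' ih =>
    intro s t
    have key : iterK μ k (m' + 1 + 1 + (n' + 1)) t s
        = ∫⁻ u in Icc s t, k t u * iterK μ k (m' + 1 + (n' + 1)) u s ∂μ := by
      rw [show m' + 1 + 1 + (n' + 1) = (m' + n' + 1) + 2 by omega,
        show m' + 1 + (n' + 1) = (m' + n' + 1) + 1 by omega]
      rfl
    rw [key]
    have step2 : ∫⁻ u in Icc s t, k t u * iterK μ k (m' + 1 + (n' + 1)) u s ∂μ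
        = ∫⁻ u in Icc s t, ∫⁻ v in Icc s u,
            k t u * iterK μ k (m' + 1) u v * iterK μ k (n' + 1) v s ∂μ ∂μ := by
      apply setLIntegral_congr_fun measurableSet_Icc
      intro u hu; beta_reduce
      have hmeas : Measurable fun v : ℝ =>
          iterK μ k (m' + 1) u v * iterK μ k (n' + 1) v s := by
        exact ((iterK_meas μ k hk (m' + 1)).comp
            (measurable_const.prodMk measurable_id)).mul
          ((iterK_meas μ k hk (n' + 1)).comp (measurable_id.prodMk measurable_const))
      rw [ih s u, ← lintegral_const_mul _ hmeas]
      congr 1; funext v; ring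
    rw [step2]
    have hfm : Measurable fun q : ℝ × ℝ =>
        k t q.1 * iterK μ k (m' + 1) q.1 q.2 * iterK μ k (n' + 1) q.2 s := by
      exact ((hk.comp (measurable_const.prodMk measurable_fst)).mul
          (iterK_meas μ k hk (m' + 1))).mul
        ((iterK_meas μ k hk (n' + 1)).comp (measurable_snd.prodMk measurable_const))
    rw [swap_tri μ _ hfm s t]
    apply setLIntegral_congr_fun measurableSet_Icc
    intro v hv; beta_reduce
    have hmu : Measurable fun u : ℝ => k t u * iterK μ k (m' + 1) u v := by
      exact (hk.comp (measurable_const.prodMk measurable_id)).mul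
        ((iterK_meas μ k hk (m' + 1)).comp (measurable_id.prodMk measurable_const))
    have hdef : iterK μ k (m' + 1 + 1) t v
        = ∫⁻ u in Icc v t, k t u * iterK μ k (m' + 1) u v ∂μ := rfl
    rw [hdef, ← lintegral_mul_const _ hmu]

/-- Semigroup-type identity of the iterated kernels:
`R_{k,μ,m+n}(t,s) = ∫_{[s,t]} R_{k,μ,m}(t,u) R_{k,μ,n}(u,s) μ(du)`. -/
theorem stmt12 (I : Set ℝ) (hI : I.OrdConnected) (hne : ∃ a ∈ I, ∃ b ∈ I, a < b)
    (μ : Measure ℝ) [SigmaFinite μ]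
    (k : ℝ → ℝ → ℝ≥0∞) (hk : Measurable fun q : ℝ × ℝ => k q.1 q.2)
    (m n : ℕ) (hm : 1 ≤ m) (hn : 1 ≤ n)
    (s t : ℝ) (hs : s ∈ I) (ht : t ∈ I) (hst : s ≤ t) :
    iterK μ k (m + n) t s = ∫⁻ u in Icc s t, iterK μ k m t u * iterK μ k n u s ∂μ := by
  exact iterK_semigroup μ k hk m n hm hn s t
end

section
/- Let S be a nonempty set, F : ℓ₊ → ℝ₊ increasing, subadditive, vanishing only at 0, (d_i) a sequence of pseudometrics on S, and d(x,y) := F((d_i(x,y))_i). Assume (a) F(Σ_{i=1}^j v_i e_i) → 0 as v → 0 in ℝ₊^j for each j, and (b) sup_{x,y∈S} F(Σ_{i=j}^∞ d_i(x,y) e_i) → 0 as j → ∞. Then a sequence (x_n) in S converges with respect to d to a point x if and only if d_i(x_n, x) → 0 for every i ∈ ℕ; and (x_n) is Cauchy with respect to d if and only if it is Cauchy with respect to d_i for every i ∈ ℕ. -/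
open Filter

lemma stmt14_tendsto_zero_iff (f : ℕ → NNReal) :
    Tendsto f atTop (nhds 0) ↔ ∀ ε : NNReal, 0 < ε → ∃ N, ∀ n ≥ N, f n < ε := by
  rw [NNReal.nhds_zero_basis.tendsto_right_iff]
  simp [Filter.eventually_atTop]

/-- Under the conditions (a) and (b) on the functional `F`, convergence (to a given
point) and Cauchyness with respect to the functional metric `d = F ∘ d₀` are
equivalent to the corresponding properties with respect to every `dᵢ`. -/
theorem stmt14 {S : Type*} [Nonempty S]
    (F : (ℕ → NNReal) → NNReal)
    (hmono : ∀ a b : ℕ → NNReal, (∀ i, a i ≤ b i) → F a ≤ F b)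
    (hsubadd : ∀ a b : ℕ → NNReal, F (a + b) ≤ F a + F b)
    (hzero : ∀ a : ℕ → NNReal, F a = 0 ↔ a = 0)
    (dI : ℕ → S → S → NNReal)
    (hrefl : ∀ i x, dI i x x = 0)
    (hsymm : ∀ i x y, dI i x y = dI i y x)
    (htri : ∀ i x y z, dI i x z ≤ dI i x y + dI i y z)
    (d : S → S → NNReal) (hd : ∀ x y, d x y = F fun i => dI i x y)
    -- (a) `F(Σ_{i<j} vᵢ eᵢ) → 0` as `v → 0`, for each `j`
    (ha : ∀ j : ℕ, ∀ ε : NNReal, 0 < ε → ∃ δ : NNReal, 0 < δ ∧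
      ∀ v : ℕ → NNReal, (∀ i, v i ≤ δ) → F (fun i => if i < j then v i else 0) < ε)
    -- (b) `sup_{x,y} F(Σ_{i≥j} dᵢ(x,y) eᵢ) → 0` as `j → ∞`
    (hb : ∀ ε : NNReal, 0 < ε → ∃ j₀ : ℕ, ∀ j ≥ j₀, ∀ x y : S,
      F (fun i => if j ≤ i then dI i x y else 0) < ε) :
    -- convergence to a point `x` w.r.t. `d` iff convergence w.r.t. every `dᵢ`
    (∀ (u : ℕ → S) (x : S),
      Tendsto (fun n => d (u n) x) atTop (nhds 0) ↔
        ∀ i, Tendsto (fun n => dI i (u n) x) atTop (nhds 0)) ∧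
    -- Cauchy w.r.t. `d` iff Cauchy w.r.t. every `dᵢ`
    (∀ u : ℕ → S,
      (∀ ε : NNReal, 0 < ε → ∃ N : ℕ, ∀ m ≥ N, ∀ n ≥ N, d (u m) (u n) < ε) ↔
        ∀ i, ∀ ε : NNReal, 0 < ε → ∃ N : ℕ, ∀ m ≥ N, ∀ n ≥ N, dI i (u m) (u n) < ε) := by

  have key1 : ∀ (i : ℕ) (ε : NNReal), 0 < ε → ∃ δ : NNReal, 0 < δ ∧
      ∀ x y : S, d x y < δ → dI i x y < ε := by
    intro i ε hε
    refine ⟨F (fun j => if j = i then ε else 0), ?_, ?_⟩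
    · rw [pos_iff_ne_zero]
      intro h
      rw [hzero] at h
      have := congrFun h i
      simp at this
      exact hε.ne' this
    · intro x y hlt
      by_contra hge
      push_neg at hge
      have hle : F (fun j => if j = i then ε else 0) ≤ d x y := by
        rw [hd]
        apply hmono
        intro j
        rcases eq_or_ne j i with rfl | h
        · simpa using hge
        · simp [h]
      exact absurd hlt (not_lt.2 hle)
  have key2 : ∀ ε : NNReal, 0 < ε → ∃ j₀ : ℕ, ∃ δ : NNReal, 0 < δ ∧
      ∀ x y : S, (∀ i < j₀, dI i x y ≤ δ) → d x y < ε := by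
    intro ε hε
    have hε2 : 0 < ε / 2 := by positivity
    obtain ⟨j₀, hj₀⟩ := hb (ε / 2) hε2
    obtain ⟨δ, hδ, hδ'⟩ := ha j₀ (ε / 2) hε2
    refine ⟨j₀, δ, hδ, ?_⟩
    intro x y hxy
    have hsplit : (fun i => dI i x y) =
        (fun i => if i < j₀ then dI i x y else 0) +
          (fun i => if j₀ ≤ i then dI i x y else 0) := by
      funext i
      by_cases h : i < j₀
      · simp [h, not_le.mpr h]
      · simp [h, not_lt.mp h]
    have hhead : F (fun i => if i < j₀ then dI i x y else 0) < ε / 2 := by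
      have hv : ∀ i, (if i < j₀ then dI i x y else 0) ≤ δ := by
        intro i
        by_cases h : i < j₀
        · simpa [h] using hxy i h
        · simp [h]
      have := hδ' (fun i => if i < j₀ then dI i x y else 0) hv
      have heq : (fun i => if i < j₀ then (if i < j₀ then dI i x y else 0) else 0) =
          fun i => if i < j₀ then dI i x y else 0 := by
        funext i; by_cases h : i < j₀ <;> simp [h]
      rwa [heq] at this
    calc d x y = F (fun i => dI i x y) := hd x y
      _ ≤ F (fun i => if i < j₀ then dI i x y else 0) +
            F (fun i => if j₀ ≤ i then dI i x y else 0) := by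
          rw [hsplit]; exact hsubadd _ _
      _ < ε / 2 + ε / 2 := add_lt_add hhead (hj₀ j₀ le_rfl x y)
      _ = ε := by rw [← two_mul]; exact mul_div_cancel₀ ε two_ne_zero
  constructor
  · intro u x
    constructor
    · intro h i
      rw [stmt14_tendsto_zero_iff] at h ⊢
      intro ε hε
      obtain ⟨δ, hδ, hδ'⟩ := key1 i ε hε
      obtain ⟨N, hN⟩ := h δ hδ
      exact ⟨N, fun n hn => hδ' _ _ (hN n hn)⟩
    · intro h
      rw [stmt14_tendsto_zero_iff]
      intro ε hε
      obtain ⟨j₀, δ, hδ, hδ'⟩ := key2 ε hε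
      choose N hN using fun i => (stmt14_tendsto_zero_iff _).1 (h i) δ hδ
      refine ⟨(Finset.range j₀).sup N, fun n hn => hδ' _ _ fun i hi => ?_⟩
      exact (hN i n (le_trans (Finset.le_sup (Finset.mem_range.2 hi)) hn)).le
  · intro u
    constructor
    · intro h i ε hε
      obtain ⟨δ, hδ, hδ'⟩ := key1 i ε hε
      obtain ⟨N, hN⟩ := h δ hδ
      exact ⟨N, fun m hm n hn => hδ' _ _ (hN m hm n hn)⟩
    · intro h ε hε
      obtain ⟨j₀, δ, hδ, hδ'⟩ := key2 ε hε
      choose N hN using fun i => h i δ hδ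
      refine ⟨(Finset.range j₀).sup N, fun m hm n hn => hδ' _ _ fun i hi => ?_⟩
      have hle := Finset.le_sup (f := N) (Finset.mem_range.2 hi)
      exact (hN i m (le_trans hle hm) n (le_trans hle hn)).le
end

section
/- Let F : ℓ₊ → ℝ₊ be given by F(a) = Σ_{n=1}^∞ f_n(a_n), where each f_n : ℝ₊ → ℝ₊ is increasing, subadditive, continuous at 0, and vanishes only at 0, and suppose f_n ≤ b_n for all n for some summable sequence (b_n) of nonnegative reals. Then F is well-defined (the series converges for all a ∈ ℓ₊), increasing, subadditive, vanishes only at the zero sequence, and satisfies lim_{v→0} F(Σ_{i=1}^j v_i e_i) = 0 for every j and lim_{j→∞} sup_{a∈ℓ₊} F(Σ_{i=j}^∞ a_i e_i) = 0. -/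
open Filter
set_option maxHeartbeats 1000000

lemma aux_delta (g : NNReal → NNReal) (hc : ContinuousAt g 0)
    (hg0 : g 0 = 0) (ε : NNReal) (hε : 0 < ε) :
    ∃ δ : NNReal, 0 < δ ∧ ∀ x ≤ δ, g x < ε := by
  have h : Filter.Tendsto g (nhds 0) (nhds 0) := by
    simpa [ContinuousAt, hg0] using hc
  have hev : ∀ᶠ x in nhds (0 : NNReal), g x < ε :=
    h (Iio_mem_nhds (by simpa [hg0] using hε))
  rw [NNReal.nhds_zero_basis.eventually_iff] at hev
  obtain ⟨δ, hδ, hδ'⟩ := hev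
  refine ⟨δ / 2, by positivity, fun x hx => ?_⟩
  exact hδ' (lt_of_le_of_lt hx (NNReal.half_lt_self hδ.ne'))


/-- If `F(a) = Σ_n f_n(a_n)` with each `f_n : ℝ₊ → ℝ₊` increasing, subadditive,
continuous at `0`, vanishing only at `0`, and dominated by a summable sequence
`(b_n)`, then `F` is well defined, increasing, subadditive, vanishes only at the
zero sequence, and satisfies the two limit conditions of the functional metric
construction. -/
theorem stmt15 (f : ℕ → NNReal → NNReal)
    (hmono : ∀ n, Monotone (f n))
    (hsubadd : ∀ n x y, f n (x + y) ≤ f n x + f n y)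
    (hcont : ∀ n, ContinuousAt (f n) 0)
    (hzero : ∀ n x, f n x = 0 ↔ x = 0)
    (b : ℕ → NNReal) (hb : ∀ n x, f n x ≤ b n) (hbsum : Summable b)
    (F : (ℕ → NNReal) → NNReal) (hF : ∀ a : ℕ → NNReal, F a = ∑' n, f n (a n)) :
    -- well-definedness: the series converges for every `a ∈ ℓ₊`
    (∀ a : ℕ → NNReal, Summable fun n => f n (a n)) ∧
    -- `F` is increasing
    (∀ a c : ℕ → NNReal, (∀ i, a i ≤ c i) → F a ≤ F c) ∧
    -- `F` is subadditive
    (∀ a c : ℕ → NNReal, F (a + c) ≤ F a + F c) ∧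
    -- `F` vanishes only at the zero sequence
    (∀ a : ℕ → NNReal, F a = 0 ↔ a = 0) ∧
    -- `lim_{v → 0} F(Σ_{i<j} vᵢ eᵢ) = 0` for every `j`
    (∀ j : ℕ, ∀ ε : NNReal, 0 < ε → ∃ δ : NNReal, 0 < δ ∧
      ∀ v : ℕ → NNReal, (∀ i, v i ≤ δ) → F (fun i => if i < j then v i else 0) < ε) ∧
    -- `lim_{j → ∞} sup_{a ∈ ℓ₊} F(Σ_{i≥j} aᵢ eᵢ) = 0`
    (∀ ε : NNReal, 0 < ε → ∃ j₀ : ℕ, ∀ j ≥ j₀, ∀ a : ℕ → NNReal,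
      F (fun i => if j ≤ i then a i else 0) < ε) := by
  have hf0 : ∀ n, f n 0 = 0 := fun n => (hzero n 0).mpr rfl
  have hs : ∀ a : ℕ → NNReal, Summable fun n => f n (a n) := fun a =>
    NNReal.summable_of_le (fun n => hb n (a n)) hbsum
  refine ⟨hs, ?_, ?_, ?_, ?_, ?_⟩
  · intro a c h
    rw [hF, hF]
    exact Summable.tsum_le_tsum (fun n => hmono n (h n)) (hs a) (hs c)
  · intro a c
    rw [hF, hF, hF]
    calc ∑' n, f n (a n + c n) ≤ ∑' n, (f n (a n) + f n (c n)) :=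
          Summable.tsum_le_tsum (fun n => hsubadd n (a n) (c n)) (hs _) ((hs a).add (hs c))
      _ = (∑' n, f n (a n)) + ∑' n, f n (c n) := Summable.tsum_add (hs a) (hs c)
  · intro a
    rw [hF]
    constructor
    · intro h
      funext n
      have := ((Summable.tsum_eq_zero_iff (hs a)).mp h) n
      exact (hzero n (a n)).mp this
    · intro h
      subst h
      simp [hf0]
  · intro j ε hε
    -- choose δ n for each n < j
    have hchoice : ∀ n, ∃ δ : NNReal, 0 < δ ∧ ∀ x ≤ δ, f n x < ε / (j + 1) := by
      intro n
      exact aux_delta (f n) (hcont n) (hf0 n) _ (by positivity)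
    choose δ hδpos hδ using hchoice
    rcases Nat.eq_zero_or_pos j with hj | hj
    · refine ⟨1, one_pos, fun v hv => ?_⟩
      subst hj
      rw [hF]
      simpa [hf0] using hε
    · set D := (Finset.range j).inf' (by simpa using hj.ne') δ with hD
      refine ⟨D, ?_, fun v hv => ?_⟩
      · rw [hD, Finset.lt_inf'_iff]
        exact fun i _ => hδpos i
      · rw [hF]
        have heq : (∑' n, f n (if n < j then v n else 0)) =
            ∑ n ∈ Finset.range j, f n (if n < j then v n else 0) := by
          apply tsum_eq_sum
          intro n hn
          simp only [Finset.mem_range, not_lt] at hn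
          rw [if_neg (by omega), hf0]
        rw [heq]
        have hlt : ∀ n ∈ Finset.range j, f n (if n < j then v n else 0) < ε / (j + 1) := by
          intro n hn
          simp only [Finset.mem_range] at hn
          rw [if_pos hn]
          refine hδ n _ (le_trans (hv n) ?_)
          exact Finset.inf'_le _ (Finset.mem_range.mpr hn)
        calc ∑ n ∈ Finset.range j, f n (if n < j then v n else 0)
            < ∑ _n ∈ Finset.range j, ε / (j + 1) :=
              Finset.sum_lt_sum_of_nonempty (by simpa using hj.ne') hlt
          _ = j * (ε / (j + 1)) := by rw [Finset.sum_const, Finset.card_range, nsmul_eq_mul]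
          _ ≤ ε := by
              rw [mul_div_assoc']
              exact NNReal.div_le_of_le_mul (by rw [mul_comm]; gcongr; exact le_self_add)
  · intro ε hε
    have hreal : Summable fun n => (b n : ℝ) := NNReal.summable_coe.mpr hbsum
    have htail : Tendsto (fun i => ∑' k, ((b (k + i) : ℝ))) atTop (nhds 0) :=
      tendsto_sum_nat_add (fun n => (b n : ℝ))
    have hev : ∀ᶠ i in atTop, ∑' k, ((b (k + i) : ℝ)) < ε :=
      htail.eventually_lt_const (by exact_mod_cast hε)
    obtain ⟨j₀, hj₀⟩ := eventually_atTop.mp hev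
    refine ⟨j₀, fun j hj a => ?_⟩
    rw [hF]
    have hsumite : Summable (fun n => if j ≤ n then b n else 0 : ℕ → NNReal) :=
      NNReal.summable_of_le (fun n => by split <;> simp) hbsum
    have h1 : (∑' n, f n (if j ≤ n then a n else 0)) ≤ ∑' n, (if j ≤ n then b n else 0) := by
      refine Summable.tsum_le_tsum (fun n => ?_) (hs _) hsumite
      split
      · exact hb _ _
      · simp [hf0]
    have hsumiteR : Summable (fun n => ((if j ≤ n then b n else 0 : NNReal) : ℝ)) :=
      NNReal.summable_coe.mpr hsumite
    have h2 : (∑' n, ((if j ≤ n then b n else 0 : NNReal) : ℝ)) = ∑' k, (b (k + j) : ℝ) := by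
      rw [← Summable.sum_add_tsum_nat_add (f := fun n => ((if j ≤ n then b n else 0 : NNReal) : ℝ)) j
        hsumiteR]
      have hz : ∀ i ∈ Finset.range j, ((if j ≤ i then b i else 0 : NNReal) : ℝ) = 0 := by
        intro i hi
        rw [if_neg (by simp at hi; omega), NNReal.coe_zero]
      rw [Finset.sum_eq_zero hz, zero_add]
      exact tsum_congr fun k => by rw [if_pos (Nat.le_add_left j k)]
    rw [← NNReal.coe_lt_coe]
    calc ((∑' n, f n (if j ≤ n then a n else 0) : NNReal) : ℝ)
        ≤ ∑' n, ((if j ≤ n then b n else 0 : NNReal) : ℝ) := by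
          rw [← NNReal.coe_tsum]; exact NNReal.coe_le_coe.mpr h1
      _ = ∑' k, (b (k + j) : ℝ) := h2
      _ < ε := hj₀ j hj
end

section
/- Let E be a normed real vector space with E ≠ {0}, q ∈ (1,2], and suppose there exist a norm ‖·‖ equivalent to the given norm and a constant ĉ ≥ 2 such that ‖x+y‖^q + ‖x−y‖^q ≤ 2‖x‖^q + ĉ‖y‖^q for all x, y ∈ E. Then the modulus of smoothness ρ(t) := sup{ (‖x+ty‖ + ‖x−ty‖)/2 − 1 : ‖x‖ = ‖y‖ = 1 } satisfies ρ(t) ≤ (ĉ/2) t^q for all t ≥ 0. -/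
/-- If a norm `N` equivalent to the norm of a nontrivial normed space satisfies the
`q`-smoothness inequality `N(x+y)^q + N(x−y)^q ≤ 2 N(x)^q + ĉ N(y)^q` for some
`ĉ ≥ 2` and `q ∈ (1,2]`, then its modulus of smoothness satisfies
`ρ(t) ≤ (ĉ/2) t^q` for all `t ≥ 0` (stated pointwise over unit vectors). -/
theorem stmt16 {E : Type*} [NormedAddCommGroup E] [NormedSpace ℝ E] [Nontrivial E]
    (q : ℝ) (hq1 : 1 < q) (hq2 : q ≤ 2)
    (N : E → ℝ) (c' : ℝ) (hc' : 2 ≤ c')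
    (hN0 : ∀ x : E, N x = 0 ↔ x = 0)
    (hNsmul : ∀ (a : ℝ) (x : E), N (a • x) = |a| * N x)
    (hNadd : ∀ x y : E, N (x + y) ≤ N x + N y)
    -- `N` is equivalent to the underlying norm
    (hequiv : ∃ c C : ℝ, 0 < c ∧ 0 < C ∧ ∀ x : E, c * ‖x‖ ≤ N x ∧ N x ≤ C * ‖x‖)
    -- the `q`-smoothness inequality
    (hsmooth : ∀ x y : E, N (x + y) ^ q + N (x - y) ^ q ≤ 2 * N x ^ q + c' * N y ^ q)
    (t : ℝ) (ht : 0 ≤ t) (x y : E) (hx : N x = 1) (hy : N y = 1) :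
    (N (x + t • y) + N (x - t • y)) / 2 - 1 ≤ (c' / 2) * t ^ q := by
  obtain ⟨c, C, hc, hC, hcC⟩ := hequiv
  have hNnn : ∀ z : E, 0 ≤ N z := fun z =>
    le_trans (by positivity) (hcC z).1
  set a := N (x + t • y) with ha
  set b := N (x - t • y) with hb
  have hqa : 0 ≤ a := hNnn _
  have hqb : 0 ≤ b := hNnn _
  -- key inequality
  have key : a ^ q + b ^ q ≤ 2 + c' * t ^ q := by
    have := hsmooth x (t • y)
    rw [hNsmul t y, hy, abs_of_nonneg ht, mul_one, hx] at this
    simpa [Real.one_rpow] using this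
  -- power mean inequality via convexity of rpow
  have hconv : ConvexOn ℝ (Set.Ici (0:ℝ)) fun z : ℝ => z ^ q :=
    convexOn_rpow (le_of_lt hq1)
  have hmean : ((a + b) / 2) ^ q ≤ (a ^ q + b ^ q) / 2 := by
    have := hconv.2 (Set.mem_Ici.2 hqa) (Set.mem_Ici.2 hqb)
      (by norm_num : (0:ℝ) ≤ 1/2) (by norm_num : (0:ℝ) ≤ 1/2) (by norm_num)
    simp only [smul_eq_mul] at this
    calc ((a + b) / 2) ^ q = (1/2 * a + 1/2 * b) ^ q := by ring_nf
      _ ≤ 1/2 * a ^ q + 1/2 * b ^ q := this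
      _ = (a ^ q + b ^ q) / 2 := by ring
  set m := (a + b) / 2 with hm
  have hmnn : 0 ≤ m := by positivity
  have hs : 0 ≤ (c'/2) * t ^ q := by
    have : (0:ℝ) ≤ t ^ q := Real.rpow_nonneg ht q
    nlinarith
  rcases le_or_gt m 1 with hm1 | hm1
  · linarith
  · have h1 : m ≤ m ^ q := by
      calc m = m ^ (1:ℝ) := (Real.rpow_one m).symm
        _ ≤ m ^ q := Real.rpow_le_rpow_of_exponent_le (le_of_lt hm1) (le_of_lt hq1)
    have h2 : m ^ q ≤ 1 + (c'/2) * t ^ q := by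
      calc m ^ q ≤ (a ^ q + b ^ q) / 2 := hmean
        _ ≤ (2 + c' * t ^ q) / 2 := by linarith
        _ = 1 + (c'/2) * t ^ q := by ring
    linarith
end

section
/- Let I be an interval in ℝ₊ with 0 ∈ I, q ≥ 1, and f : I → [0,∞] measurable. Define the convolution kernel k(t,s) := f(t−s) for s < t in I. Then: if f is locally q-fold integrable (∫₀^T f(u)^q du < ∞ for all T ∈ I), then for every T ∈ I, lim_{δ↓0} sup_{r,t∈[0,T], r≤t≤r+δ} ∫_r^t k(t,s)^q ds = 0 and sup_{t∈[0,T]} ∫₀^t k(t,s)^q ds < ∞; conversely, if ∫₀^T f(u)^q du = ∞ for some T ∈ I, then ess sup_{t∈[0,T]} ∫₀^t k(t,s)^q ds = ∞. -/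
open MeasureTheory ENNReal Set Filter Topology

open Filter Topology in
lemma keyA (f : ℝ → ℝ≥0∞) (q r t : ℝ) :
    (∫⁻ s in Icc r t, f (t - s) ^ q) = ∫⁻ u in Icc 0 (t - r), f u ^ q := by
  have hemb : MeasurableEmbedding (fun s : ℝ => t - s) :=
    (MeasurableEquiv.subLeft t).measurableEmbedding
  have hmp : MeasurePreserving (fun s : ℝ => t - s) volume volume :=
    Measure.measurePreserving_sub_left volume t
  have hpre : (fun s : ℝ => t - s) ⁻¹' Icc 0 (t - r) = Icc r t := by
    ext s
    simp [sub_nonneg, _root_.sub_le_sub_iff_left, and_comm]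
  rw [← hpre]
  exact hmp.setLIntegral_comp_preimage_emb hemb (fun u => f u ^ q) _


/-- Convolution kernels: if `f` is locally `q`-fold integrable then the kernel
`k(t,s) = f(t-s)` satisfies the small-window vanishing condition and the uniform
boundedness condition on every `[0,T]`; conversely, if `∫₀^T f(u)^q du = ∞` then
the essential supremum of `t ↦ ∫₀^t k(t,s)^q ds` over `[0,T]` is infinite. -/
theorem stmt18 (I : Set ℝ) (hI : I.OrdConnected) (hI0 : (0:ℝ) ∈ I)
    (hIpos : I ⊆ Ici (0:ℝ))
    (q : ℝ) (hq : 1 ≤ q) (f : ℝ → ℝ≥0∞) (hf : Measurable f) :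
    ((∀ T ∈ I, (∫⁻ u in Icc (0:ℝ) T, f u ^ q) ≠ ∞) →
      ∀ T ∈ I,
        (⨅ δ ∈ Ioi (0:ℝ), ⨆ r ∈ Icc (0:ℝ) T, ⨆ t ∈ Icc (0:ℝ) T,
          ⨆ _ : r ≤ t ∧ t ≤ r + δ, ∫⁻ s in Icc r t, f (t - s) ^ q) = 0 ∧
        (⨆ t ∈ Icc (0:ℝ) T, ∫⁻ s in Icc (0:ℝ) t, f (t - s) ^ q) ≠ ∞) ∧
    (∀ T ∈ I, (∫⁻ u in Icc (0:ℝ) T, f u ^ q) = ∞ →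
      essSup (fun t => ∫⁻ s in Icc (0:ℝ) t, f (t - s) ^ q)
        (volume.restrict (Icc (0:ℝ) T)) = ∞) := by
  have hfq : Measurable fun u => f u ^ q := hf.pow_const q
  set ν : Measure ℝ := volume.withDensity (fun u => f u ^ q) with hν
  have hνapp : ∀ A : Set ℝ, MeasurableSet A → ν A = ∫⁻ u in A, f u ^ q :=
    fun A hA => withDensity_apply _ hA
  have hνac : ν ≪ volume := withDensity_absolutelyContinuous _ _
  constructor
  · intro hloc T hT
    have hT0 : (0:ℝ) ≤ T := hIpos hT
    have hfin : (∫⁻ u in Icc (0:ℝ) T, f u ^ q) ≠ ∞ := hloc T hT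
    constructor
    · -- vanishing window condition
      refine le_antisymm ?_ zero_le
      set s : ℕ → Set ℝ := fun n => Icc 0 (1/(n+1 : ℝ)) ∩ Icc 0 T with hs
      have hmeas : ∀ n, MeasurableSet (s n) :=
        fun n => measurableSet_Icc.inter measurableSet_Icc
      have hanti : Antitone s := by
        intro m n hmn
        refine inter_subset_inter_left _ (Icc_subset_Icc le_rfl ?_)
        apply one_div_le_one_div_of_le
        · positivity
        · have : (m:ℝ) ≤ n := Nat.cast_le.2 hmn
          linarith
      have hfin' : ν (s 0) ≠ ∞ := by
        rw [hνapp _ (hmeas 0)]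
        exact ne_top_of_le_ne_top hfin (lintegral_mono_set inter_subset_right)
      have hinter : (⋂ n, s n) ⊆ {0} := by
        intro x hx
        simp only [mem_iInter, hs, mem_inter_iff, mem_Icc] at hx
        have hx0 : 0 ≤ x := (hx 0).1.1
        have hxle : x ≤ 0 := by
          by_contra h
          push_neg at h
          obtain ⟨n, hn⟩ := exists_nat_one_div_lt h
          exact absurd ((hx n).1.2) (not_le.2 hn)
        simp [le_antisymm hxle hx0]
      have hzero : ν (⋂ n, s n) = 0 :=
        le_antisymm ((measure_mono hinter).trans
          (le_of_eq (hνac (measure_singleton 0)))) zero_le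
      have htend : Tendsto (fun n => ν (s n)) atTop (𝓝 0) := by
        have h := tendsto_measure_iInter_atTop (μ := ν)
          (fun n => (hmeas n).nullMeasurableSet) hanti ⟨0, hfin'⟩
        rw [hzero] at h
        exact h
      refine le_of_tendsto_of_tendsto' tendsto_const_nhds htend fun n => ?_
      have h1n : (0:ℝ) < 1/(n+1:ℝ) := by positivity
      refine le_trans (iInf₂_le (1/(n+1:ℝ)) h1n) ?_
      refine iSup₂_le fun r hr => iSup₂_le fun t ht => iSup_le fun hcond => ?_
      rw [keyA]
      have hsub : Icc (0:ℝ) (t - r) ⊆ s n := by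
        refine subset_inter (Icc_subset_Icc le_rfl ?_) (Icc_subset_Icc le_rfl ?_)
        · linarith [hcond.2]
        · linarith [ht.2, hr.1]
      calc (∫⁻ u in Icc (0:ℝ) (t - r), f u ^ q) = ν (Icc 0 (t - r)) :=
            (hνapp _ measurableSet_Icc).symm
        _ ≤ ν (s n) := measure_mono hsub
    · -- boundedness
      refine ne_top_of_le_ne_top hfin (iSup₂_le fun t ht => ?_)
      rw [keyA]
      simp only [sub_zero]
      exact lintegral_mono_set (Icc_subset_Icc le_rfl ht.2)
  · -- converse
    intro T hT hinf
    have hT0 : (0:ℝ) ≤ T := hIpos hT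
    have hTpos : (0:ℝ) < T := by
      rcases hT0.lt_or_eq with h | h
      · exact h
      · rw [← h, Icc_self, setLIntegral_measure_zero _ _ (measure_singleton 0)] at hinf
        exact absurd hinf (by simp)
    set g : ℝ → ℝ≥0∞ := fun t => ∫⁻ s in Icc (0:ℝ) t, f (t - s) ^ q with hg
    set μT : Measure ℝ := volume.restrict (Icc (0:ℝ) T) with hμT
    set L : ℝ≥0∞ := essSup g μT with hL
    -- the increasing truncations
    set c : ℕ → ℝ := fun n => T - T/(n+1 : ℝ) with hc
    have hc0 : ∀ n, 0 ≤ c n := by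
      intro n
      have h1 : T/(n+1:ℝ) ≤ T := by
        rw [div_le_iff₀ (by positivity)]
        nlinarith [Nat.cast_nonneg (α := ℝ) n]
      simpa [hc] using h1
    have hcT : ∀ n, c n < T := by
      intro n
      have : (0:ℝ) < T/(n+1:ℝ) := by positivity
      simp only [hc]; linarith
    have hmono : Monotone c := by
      intro m n hmn
      have hmn' : (m:ℝ) ≤ n := Nat.cast_le.2 hmn
      have : T/(n+1:ℝ) ≤ T/(m+1:ℝ) := by
        apply div_le_div_of_nonneg_left hT0 (by positivity) (by linarith)
      simp only [hc]; linarith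
    -- each truncation bounds L from below
    have hkey : ∀ n, ν (Icc 0 (c n)) ≤ L := by
      intro n
      set A : Set ℝ := Icc (c n) T ∩ {t | g t ≤ L} with hA
      have hApos : μT A ≠ 0 := by
        have h1 : μT (Icc (c n) T) ≤ μT A + μT {t | ¬ g t ≤ L} := by
          refine le_trans (measure_mono ?_) (measure_union_le _ _)
          intro x hx
          by_cases h : g x ≤ L
          · exact Or.inl ⟨hx, h⟩
          · exact Or.inr h
        have h2 : μT {t | ¬ g t ≤ L} = 0 := ae_le_essSup g
        have h3 : μT (Icc (c n) T) = volume (Icc (c n) T) := by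
          rw [hμT, Measure.restrict_apply measurableSet_Icc,
            inter_eq_self_of_subset_left (Icc_subset_Icc (hc0 n) le_rfl)]
        have h4 : (0:ℝ≥0∞) < μT (Icc (c n) T) := by
          rw [h3, Real.volume_Icc]
          exact ENNReal.ofReal_pos.2 (by linarith [hcT n])
        intro h0
        rw [h0, zero_add] at h1
        rw [h2] at h1
        exact absurd (le_antisymm h1 zero_le ▸ h4) (by simp [le_antisymm h1 zero_le])
      obtain ⟨t, htA, htL⟩ := nonempty_of_measure_ne_zero hApos
      have hct : c n ≤ t := htA.1
      have hgt : ν (Icc 0 (c n)) ≤ g t := by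
        have : g t = ν (Icc 0 t) := by
          rw [hg]
          simp only [keyA, sub_zero]
          exact (hνapp _ measurableSet_Icc).symm
        rw [this]
        exact measure_mono (Icc_subset_Icc le_rfl hct)
      exact hgt.trans htL
    -- the union of truncations is Ico 0 T, whose ν-measure is infinite
    have hunion : (⋃ n, Icc (0:ℝ) (c n)) = Ico 0 T := by
      apply Subset.antisymm
      · exact iUnion_subset fun n => Icc_subset_Ico_right (hcT n)
      · intro x hx
        have hxT : 0 < T - x := by linarith [hx.2]
        obtain ⟨n, hn⟩ := exists_nat_one_div_lt (div_pos hxT hTpos)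
        refine mem_iUnion.2 ⟨n, hx.1, ?_⟩
        have hTn : T/(n+1:ℝ) < T - x := by
          rw [div_lt_iff₀ (by positivity : (0:ℝ) < (n:ℝ)+1)]
          rw [div_lt_div_iff₀ (by positivity) hTpos] at hn
          linarith
        simp only [hc]; linarith
    have hIco : ν (Ico 0 T) = ∞ := by
      have h1 : ν (Icc 0 T) = ∞ := by rw [hνapp _ measurableSet_Icc]; exact hinf
      have h2 : ν (Icc 0 T) ≤ ν (Ico 0 T) + ν {T} := by
        rw [← Ico_union_right hT0]
        exact measure_union_le _ _
      rw [hνac (measure_singleton T), add_zero] at h2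
      exact top_le_iff.1 (h1 ▸ h2)
    have hsup : (⨆ n, ν (Icc (0:ℝ) (c n))) = ∞ := by
      rw [← Monotone.measure_iUnion (fun m n hmn => Icc_subset_Icc le_rfl (hmono hmn)),
        hunion, hIco]
    have : (∞ : ℝ≥0∞) ≤ L := hsup ▸ iSup_le hkey
    exact top_le_iff.1 this
end
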